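/- arXiv:2407.16304 — 5 statements merged into one kernel-verified Lean document; each statement's English description precedes it below -/
import Mathlib

section
/- Let H be a real Hilbert space, R > 0, and let S be a nonempty closed set in H. Then S is R-prox-regular if and only if for any x₁, x₂ ∈ S and any proximal normals ς₁ ∈ N_S(x₁), ς₂ ∈ N_S(x₂), one has ⟨ς₂ - ς₁, x₂ - x₁⟩ ≥ -(1/2)·((‖ς₂‖ + ‖ς₁‖)/R)·‖x₂ - x₁‖². -/
open Metric

variable {H : Type*} [NormedAddCommGroup H] [InnerProductSpace ℝ H]

/-- The set of nearest points of `S` to `y`. -/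
def projSet (S : Set H) (y : H) : Set H := {x ∈ S | ∀ s ∈ S, dist y x ≤ dist y s}

/-- The proximal normal cone to `S` at `x`. -/
def proxNormalCone (S : Set H) (x : H) : Set H :=
  {ς | ∃ η : ℝ, 0 < η ∧ x ∈ projSet S (x + η • ς)}

/-- `S` is `R`-prox-regular. -/
def IsProxRegular (R : ℝ) (S : Set H) : Prop :=
  ∀ x ∈ S, ∀ ς ∈ proxNormalCone S x, ‖ς‖ ≤ 1 →
    ∀ t : ℝ, 0 < t → t < R → x ∈ projSet S (x + t • ς)

lemma key_ineq {R : ℝ} (hR : 0 < R) {S : Set H} (hpr : IsProxRegular R S)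
    {x : H} (hx : x ∈ S) {ς : H} (hς : ς ∈ proxNormalCone S x) {s : H} (hs : s ∈ S) :
    (inner ℝ ς (s - x) : ℝ) ≤ ‖ς‖ / (2 * R) * ‖s - x‖ ^ 2 := by
  rcases eq_or_ne ς 0 with rfl | hne
  · simp
  have hn : (0:ℝ) < ‖ς‖ := norm_pos_iff.mpr hne
  set u : H := ‖ς‖⁻¹ • ς with hu_def
  have hu1 : ‖u‖ = 1 := by
    rw [hu_def, norm_smul, norm_inv, norm_norm, inv_mul_cancel₀ hn.ne']
  have hu : u ∈ proxNormalCone S x := by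
    obtain ⟨η, hη, hproj⟩ := hς
    refine ⟨η * ‖ς‖, mul_pos hη hn, ?_⟩
    have : (η * ‖ς‖) • u = η • ς := by
      rw [hu_def, smul_smul, mul_assoc, mul_inv_cancel₀ hn.ne', mul_one]
    rwa [this]
  set D := ‖s - x‖ ^ 2 with hD
  have hD0 : 0 ≤ D := sq_nonneg _
  have claim : ∀ t : ℝ, 0 < t → t < R → 2 * t * (inner ℝ u (s - x) : ℝ) ≤ D := by
    intro t ht htR
    have hmem := hpr x hx u hu hu1.le t ht htR
    have hle := hmem.2 s hs
    have h1 : dist (x + t • u) x = t := by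
      rw [dist_eq_norm, add_sub_cancel_left, norm_smul, hu1, mul_one,
        Real.norm_eq_abs, abs_of_pos ht]
    have h2 : dist (x + t • u) s = ‖(x - s) + t • u‖ := by
      rw [dist_eq_norm, add_sub_right_comm]
    rw [h1, h2] at hle
    have hsq : t ^ 2 ≤ ‖(x - s) + t • u‖ ^ 2 := by nlinarith [norm_nonneg ((x - s) + t • u)]
    have hexp : ‖(x - s) + t • u‖ ^ 2
        = ‖x - s‖ ^ 2 + 2 * (t * (inner ℝ (x - s) u : ℝ)) + t ^ 2 := by
      rw [norm_add_sq_real, real_inner_smul_right, norm_smul, hu1, mul_one,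
        Real.norm_eq_abs, abs_of_pos ht]
    have hinner : (inner ℝ (x - s) u : ℝ) = -(inner ℝ u (s - x) : ℝ) := by
      rw [real_inner_comm, ← inner_neg_right, neg_sub]
    have hns : ‖x - s‖ = ‖s - x‖ := norm_sub_rev _ _
    rw [hexp, hinner, hns] at hsq
    nlinarith
  have hc : 2 * R * (inner ℝ u (s - x) : ℝ) ≤ D := by
    set c := (inner ℝ u (s - x) : ℝ) with hcdef
    rcases le_or_gt c 0 with hcle | hcpos
    · nlinarith
    · by_contra hcon
      push_neg at hcon
      have htpos : 0 < (D / (2 * c) + R) / 2 := by positivity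
      have htlt : (D / (2 * c) + R) / 2 < R := by
        have : D / (2 * c) < R := by
          rw [div_lt_iff₀ (by positivity)]; nlinarith
        linarith
      have := claim _ htpos htlt
      have hgt : D / (2 * c) < (D / (2 * c) + R) / 2 := by
        have : D / (2 * c) < R := by
          rw [div_lt_iff₀ (by positivity)]; nlinarith
        linarith
      rw [div_lt_iff₀ (by positivity)] at hgt
      nlinarith
  have hrw : (inner ℝ ς (s - x) : ℝ) = ‖ς‖ * (inner ℝ u (s - x) : ℝ) := by
    rw [hu_def, real_inner_smul_left]
    field_simp
  rw [hrw]
  rw [div_mul_eq_mul_div, le_div_iff₀ (by positivity)]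
  nlinarith [mul_le_mul_of_nonneg_left hc hn.le]

theorem stmt3 [CompleteSpace H] (R : ℝ) (hR : 0 < R) (S : Set H)
    (hne : S.Nonempty) (hcl : IsClosed S) :
    IsProxRegular R S ↔
      ∀ x₁ ∈ S, ∀ x₂ ∈ S, ∀ ς₁ ∈ proxNormalCone S x₁, ∀ ς₂ ∈ proxNormalCone S x₂,
        (inner ℝ (ς₂ - ς₁) (x₂ - x₁) : ℝ) ≥
          -(1/2) * ((‖ς₂‖ + ‖ς₁‖) / R) * ‖x₂ - x₁‖ ^ 2 := by
  constructor
  · intro hpr x₁ h1 x₂ h2 ς₁ hς1 ς₂ hς2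
    have A := key_ineq hR hpr h1 hς1 h2
    have B := key_ineq hR hpr h2 hς2 h1
    have hns : ‖x₁ - x₂‖ = ‖x₂ - x₁‖ := norm_sub_rev _ _
    rw [hns] at B
    have hB : (inner ℝ ς₂ (x₁ - x₂) : ℝ) = -(inner ℝ ς₂ (x₂ - x₁) : ℝ) := by
      rw [← inner_neg_right, neg_sub]
    rw [hB] at B
    have hsub : (inner ℝ (ς₂ - ς₁) (x₂ - x₁) : ℝ)
        = (inner ℝ ς₂ (x₂ - x₁) : ℝ) - (inner ℝ ς₁ (x₂ - x₁) : ℝ) := inner_sub_left _ _ _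
    have heq : -(1/2) * ((‖ς₂‖ + ‖ς₁‖) / R) * ‖x₂ - x₁‖ ^ 2
        = -(‖ς₂‖ / (2 * R) * ‖x₂ - x₁‖ ^ 2) - ‖ς₁‖ / (2 * R) * ‖x₂ - x₁‖ ^ 2 := by
      field_simp; ring
    rw [hsub, heq]
    linarith
  · intro h x hx ς hς hςn t ht htR
    refine ⟨hx, fun s hs => ?_⟩
    have h0 : (0:H) ∈ proxNormalCone S s :=
      ⟨1, one_pos, by simpa [projSet, hs] using fun s' _ => dist_nonneg⟩
    have := h x hx s hs ς hς 0 h0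
    rw [zero_sub, inner_neg_left] at this
    rw [norm_zero, zero_add] at this
    have hkey : 2 * R * (inner ℝ ς (s - x) : ℝ) ≤ ‖ς‖ * ‖s - x‖ ^ 2 := by
      have h2 : (inner ℝ ς (s - x) : ℝ) ≤ 1/2 * (‖ς‖ / R) * ‖s - x‖ ^ 2 := by linarith
      have h3 := mul_le_mul_of_nonneg_left h2 (by positivity : (0:ℝ) ≤ 2*R)
      calc 2 * R * (inner ℝ ς (s - x) : ℝ) ≤ 2 * R * (1/2 * (‖ς‖ / R) * ‖s - x‖ ^ 2) := h3
        _ = ‖ς‖ * ‖s - x‖ ^ 2 := by field_simp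
    have hd1 : dist (x + t • ς) x = t * ‖ς‖ := by
      rw [dist_eq_norm, add_sub_cancel_left, norm_smul, Real.norm_eq_abs, abs_of_pos ht]
    have hd2 : dist (x + t • ς) s = ‖(x - s) + t • ς‖ := by
      rw [dist_eq_norm, add_sub_right_comm]
    rw [hd1, hd2]
    have hexp : ‖(x - s) + t • ς‖ ^ 2
        = ‖x - s‖ ^ 2 + 2 * (t * (inner ℝ (x - s) ς : ℝ)) + t ^ 2 * ‖ς‖ ^ 2 := by
      rw [norm_add_sq_real, real_inner_smul_right, norm_smul, Real.norm_eq_abs,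
        abs_of_pos ht, mul_pow]
    have hinner : (inner ℝ (x - s) ς : ℝ) = -(inner ℝ ς (s - x) : ℝ) := by
      rw [real_inner_comm, ← inner_neg_right, neg_sub]
    have hns : ‖x - s‖ = ‖s - x‖ := norm_sub_rev _ _
    have hsq : (t * ‖ς‖) ^ 2 ≤ ‖(x - s) + t • ς‖ ^ 2 := by
      rw [hexp, hinner, hns]
      have hts : 2 * t * (inner ℝ ς (s - x) : ℝ) ≤ ‖s - x‖ ^ 2 := by
        set c := (inner ℝ ς (s - x) : ℝ)
        rcases le_or_gt c 0 with hc | hc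
        · nlinarith [sq_nonneg ‖s - x‖]
        · have h1 : 2 * t * c ≤ 2 * R * c := by nlinarith
          have h2 : ‖ς‖ * ‖s - x‖ ^ 2 ≤ ‖s - x‖ ^ 2 := by
            nlinarith [sq_nonneg ‖s - x‖]
          linarith
      nlinarith
    nlinarith [norm_nonneg ((x - s) + t • ς), mul_nonneg ht.le (norm_nonneg ς)]
end

section
/- Let S be a prox-regular closed subset of a Hilbert space H and let x ∈ S. Then the proximal normal cone N_S(x) equals the polar of the Bouligand tangent cone: N_S(x) = (T_S x)° = {u ∈ H : d'_S(x; u) = 0}°, where d'_S(x; u) := lim_{τ↓0} τ⁻¹ d_S(x + τu) (which exists for every u ∈ H). -/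
open Metric Filter Topology

variable {H : Type*} [NormedAddCommGroup H] [InnerProductSpace ℝ H]

/-- The polar of a set (cone) `P`. -/
def polarCone (P : Set H) : Set H := {ς | ∀ u ∈ P, (inner ℝ ς u : ℝ) ≤ 0}

set_option linter.unusedSectionVars false
set_option linter.unusedVariables false

namespace ProxReg


/-- L0: algebraic characterization of one nearest-point inequality. -/
lemma dist_le_iff_inner (x s ς : H) (η : ℝ) (hη : 0 ≤ η) :
    dist (x + η • ς) x ≤ dist (x + η • ς) s ↔
      2 * η * (inner ℝ ς (s - x) : ℝ) ≤ ‖s - x‖ ^ 2 := by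
  have h1 : dist (x + η • ς) x = ‖η • ς‖ := by
    rw [dist_eq_norm, add_sub_cancel_left]
  have h2 : dist (x + η • ς) s = ‖η • ς - (s - x)‖ := by
    rw [dist_eq_norm, show x + η • ς - s = η • ς - (s - x) by abel]
  rw [h1, h2]
  have hsq : ‖η • ς - (s - x)‖ ^ 2
      = ‖η • ς‖ ^ 2 - 2 * η * (inner ℝ ς (s - x) : ℝ) + ‖s - x‖ ^ 2 := by
    rw [norm_sub_sq_real, inner_smul_left]
    simp [RCLike.conj_to_real]
    ring
  constructor
  · intro h
    have := pow_le_pow_left₀ (norm_nonneg _) h 2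
    nlinarith [this]
  · intro h
    have h3 : ‖η • ς‖ ^ 2 ≤ ‖η • ς - (s - x)‖ ^ 2 := by rw [hsq]; nlinarith
    have := norm_nonneg (η • ς - (s - x))
    nlinarith [norm_nonneg (η • ς)]

lemma mem_projSet_iff {S : Set H} (x ς : H) (η : ℝ) (hη : 0 ≤ η) (hx : x ∈ S) :
    x ∈ projSet S (x + η • ς) ↔ ∀ s ∈ S, 2 * η * (inner ℝ ς (s - x) : ℝ) ≤ ‖s - x‖ ^ 2 := by
  constructor
  · intro ⟨_, h⟩ s hs
    exact (dist_le_iff_inner x s ς η hη).1 (h s hs)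
  · intro h
    exact ⟨hx, fun s hs => (dist_le_iff_inner x s ς η hη).2 (h s hs)⟩

/-- characterization of the proximal normal cone. -/
lemma mem_proxNormalCone_iff {S : Set H} (x ς : H) (hx : x ∈ S) :
    ς ∈ proxNormalCone S x ↔ ∃ η : ℝ, 0 < η ∧
      ∀ s ∈ S, 2 * η * (inner ℝ ς (s - x) : ℝ) ≤ ‖s - x‖ ^ 2 := by
  constructor
  · intro ⟨η, hη, h⟩
    exact ⟨η, hη, (mem_projSet_iff x ς η hη.le hx).1 h⟩
  · intro ⟨η, hη, h⟩
    exact ⟨η, hη, (mem_projSet_iff x ς η hη.le hx).2 h⟩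

/-- L1: hypomonotonicity at scale `R` for prox-regular sets. -/
lemma hypo {S : Set H} {R : ℝ} (hR : 0 < R) (hprox : IsProxRegular R S)
    {y : H} (hy : y ∈ S) {ς : H} (hς : ς ∈ proxNormalCone S y) :
    ∀ s ∈ S, 2 * R * (inner ℝ ς (s - y) : ℝ) ≤ ‖ς‖ * ‖s - y‖ ^ 2 := by
  intro s hs
  rcases eq_or_ne ς 0 with rfl | hne
  · simp
  have hνn : ‖ς‖ > 0 := norm_pos_iff.2 hne
  set ν : H := ‖ς‖⁻¹ • ς with hν
  obtain ⟨η, hη, h⟩ := (mem_proxNormalCone_iff y ς hy).1 hς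
  have hνmem : ν ∈ proxNormalCone S y := by
    rw [mem_proxNormalCone_iff y ν hy]
    refine ⟨η * ‖ς‖, by positivity, fun s' hs' => ?_⟩
    have := h s' hs'
    rw [hν, inner_smul_left]
    simp only [RCLike.conj_to_real]
    rw [show 2 * (η * ‖ς‖) * (‖ς‖⁻¹ * (inner ℝ ς (s' - y) : ℝ))
      = 2 * η * (inner ℝ ς (s' - y) : ℝ) by field_simp]
    exact this
  have hνnorm : ‖ν‖ ≤ 1 := by
    rw [hν, norm_smul]; simp [abs_of_nonneg (inv_nonneg.2 (norm_nonneg ς))]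
    rw [inv_mul_cancel₀ (ne_of_gt hνn)]
  have key : ∀ t : ℝ, 0 < t → t < R → 2 * t * (inner ℝ ς (s - y) : ℝ) ≤ ‖ς‖ * ‖s - y‖ ^ 2 := by
    intro t ht htR
    have := hprox y hy ν hνmem hνnorm t ht htR
    have h2 := (mem_projSet_iff y ν t ht.le hy).1 this s hs
    rw [hν, inner_smul_left] at h2
    simp only [RCLike.conj_to_real] at h2
    calc 2 * t * (inner ℝ ς (s - y) : ℝ) = ‖ς‖ * (2 * t * (‖ς‖⁻¹ * (inner ℝ ς (s - y) : ℝ))) := by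
          field_simp
    _ ≤ ‖ς‖ * ‖s - y‖ ^ 2 := mul_le_mul_of_nonneg_left h2 (norm_nonneg ς)
  -- pass to limit t → R
  set p : ℝ := (inner ℝ ς (s - y) : ℝ)
  set c : ℝ := ‖ς‖ * ‖s - y‖ ^ 2
  have hc : 0 ≤ c := by positivity
  rcases le_or_gt p 0 with hp | hp
  · nlinarith
  by_contra hcon
  push_neg at hcon
  set t : ℝ := (c / (2 * p) + R) / 2 with htdef
  have h1 : c / (2 * p) < R := by
    rw [div_lt_iff₀ (by positivity)]; nlinarith
  have ht0 : 0 < t := by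
    have : 0 ≤ c / (2 * p) := by positivity
    rw [htdef]; linarith
  have htR : t < R := by rw [htdef]; linarith
  have := key t ht0 htR
  have h2 : 2 * t * p = c / 2 + R * p := by
    rw [htdef]; field_simp
  nlinarith


lemma exists_near {S : Set H} (hne : S.Nonempty) (z : H) {e : ℝ} (he : 0 < e) :
    ∃ q ∈ S, ‖q - z‖ ^ 2 ≤ infDist z S ^ 2 + e ∧ ‖q - z‖ ≤ infDist z S + e := by
  set d := infDist z S with hd
  have hd0 : 0 ≤ d := infDist_nonneg
  set e' : ℝ := min 1 (e / (2 * d + 1)) with he'def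
  have he'0 : 0 < e' := lt_min one_pos (by positivity)
  have he'1 : e' ≤ 1 := min_le_left _ _
  have he'2 : e' * (2 * d + 1) ≤ e := by
    have : e' ≤ e / (2 * d + 1) := min_le_right _ _
    rw [← le_div_iff₀ (by positivity)]
    exact this
  obtain ⟨q, hq, hdq⟩ := (infDist_lt_iff hne).1 (show infDist z S < d + e' by
    rw [← hd]; linarith)
  have hnq : ‖q - z‖ < d + e' := by
    rw [show ‖q - z‖ = dist z q by rw [dist_eq_norm, norm_sub_rev]]
    exact hdq
  have h0 : 0 ≤ ‖q - z‖ := norm_nonneg _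
  refine ⟨q, hq, ?_, ?_⟩
  · nlinarith
  · nlinarith

/-- quadratic bookkeeping identity -/
lemma quad_id {a m b : ℝ} {z w p : H} (hb : b = a + m) (hw : b • w = a • z + m • p)
    (q q' : H) :
    b * (‖q - w‖ ^ 2 - ‖q' - w‖ ^ 2)
      = a * (‖q - z‖ ^ 2 - ‖q' - z‖ ^ 2) + m * (‖q - p‖ ^ 2 - ‖q' - p‖ ^ 2) := by
  have key : b * (inner ℝ (q - q') w : ℝ)
      = a * (inner ℝ (q - q') z : ℝ) + m * (inner ℝ (q - q') p : ℝ) := by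
    rw [← real_inner_smul_right, ← real_inner_smul_right, ← real_inner_smul_right, hw,
      inner_add_right]
  simp only [inner_sub_left] at key
  simp only [norm_sub_sq_real]
  linear_combination (-2 : ℝ) * key + (‖q‖ ^ 2 - ‖q'‖ ^ 2) * hb


set_option maxHeartbeats 1600000 in
lemma dense_proj [CompleteSpace H] {S : Set H} (hne : S.Nonempty) (hcl : IsClosed S)
    (y : H) {ε : ℝ} (hε : 0 < ε) (hε1 : ε ≤ 1) :
    ∃ z p : H, ‖z - y‖ ≤ ε ∧ p ∈ projSet S z := by
  classical
  set D : ℝ := infDist y S with hD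
  have hD0 : 0 ≤ D := infDist_nonneg
  set c : ℝ := ε / (2 * (D + 2)) with hc
  have hc0 : 0 < c := by positivity
  have hc1 : c ≤ 1 := by
    rw [hc, div_le_one (by positivity)]; nlinarith
  set μ : ℕ → ℝ := fun n => c * (1/2) ^ n with hμ
  set al : ℕ → ℝ := fun n => 1 + c * (1 - (1/2) ^ n) with hal
  set es : ℕ → ℝ := fun n => c * (1/8) ^ n with hes
  have hμ0 : ∀ n, 0 < μ n := fun n => by positivity
  have hes0 : ∀ n, 0 < es n := fun n => by positivity
  have hal1 : ∀ n, 1 ≤ al n := fun n => by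
    have h1 : (1/2:ℝ) ^ n ≤ 1 := pow_le_one₀ (by norm_num) (by norm_num)
    have : (0:ℝ) ≤ c * (1 - (1/2)^n) := by nlinarith
    simp only [hal]; linarith
  have hal2 : ∀ n, al n ≤ 2 := fun n => by
    have h1 : (0:ℝ) ≤ (1/2) ^ n := by positivity
    have : c * (1 - (1/2)^n) ≤ c := by nlinarith
    simp only [hal]; linarith
  have halrec : ∀ n, al (n + 1) = al n + μ (n + 1) := fun n => by
    simp only [hal, hμ, pow_succ]; ring
  -- choice function
  have hpick : ∀ z : H, ∃ q, q ∈ S ∧ ∀ e : ℝ, 0 < e → e = es 1 * (1/8) ^ 0 → True := fun z => ⟨hne.some, hne.some_mem, fun _ _ _ => trivial⟩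
  clear hpick
  have hex : ∀ p : H × ℕ, ∃ q, q ∈ S ∧
      ‖q - p.1‖ ^ 2 ≤ infDist p.1 S ^ 2 + es (p.2 + 1) ∧
      ‖q - p.1‖ ≤ infDist p.1 S + es (p.2 + 1) := fun p =>
    exists_near hne p.1 (hes0 (p.2 + 1))
  choose pick hpickS hpick1 hpick2 using hex
  -- the recursion
  obtain ⟨Z, hZ0, hZrec'⟩ : ∃ Z : ℕ → H, Z 0 = y ∧
      ∀ n, Z (n+1) = Z n + (μ (n+1) / al (n+1)) • (pick (Z n, n) - Z n) :=
    ⟨fun n => Nat.rec y (fun n z => z + (μ (n+1) / al (n+1)) • (pick (z, n) - z)) n,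
      rfl, fun n => rfl⟩
  set Q : ℕ → H := fun n => pick (Z n, n) with hQdef
  have hZrec : ∀ n, Z (n+1) = Z n + (μ (n+1) / al (n+1)) • (Q n - Z n) := hZrec'
  have hQS : ∀ n, Q n ∈ S := fun n => hpickS (Z n, n)
  have hQ1 : ∀ n, ‖Q n - Z n‖ ^ 2 ≤ infDist (Z n) S ^ 2 + es (n+1) := fun n => hpick1 (Z n, n)
  have hQ2 : ∀ n, ‖Q n - Z n‖ ≤ infDist (Z n) S + es (n+1) := fun n => hpick2 (Z n, n)
  -- Z stays near y
  have hZy : ∀ n, ‖Z n - y‖ ≤ ε / 2 * (1 - (1/2) ^ n) := by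
    intro n
    induction n with
    | zero => simp [hZ0]
    | succ n ih =>
      have hQZ : ‖Q n - Z n‖ ≤ D + 2 := by
        have h1 : infDist (Z n) S ≤ D + dist (Z n) y := infDist_le_infDist_add_dist
        have h2 : dist (Z n) y = ‖Z n - y‖ := dist_eq_norm _ _
        have h3 : es (n+1) ≤ 1 := by
          have : (1/8:ℝ) ^ (n+1) ≤ 1 := pow_le_one₀ (by norm_num) (by norm_num)
          simp only [hes]; nlinarith
        have h4 : ‖Z n - y‖ ≤ ε / 2 := by
          have : (0:ℝ) ≤ (1/2)^n := by positivity
          nlinarith [ih]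
        have := hQ2 n
        rw [h2] at h1
        have hε2 : ε / 2 ≤ 1 := by linarith
        linarith
      have hstep : ‖Z (n+1) - Z n‖ ≤ ε / 2 * (1/2) ^ (n+1) := by
        rw [hZrec n]
        rw [show Z n + (μ (n+1) / al (n+1)) • (Q n - Z n) - Z n
            = (μ (n+1) / al (n+1)) • (Q n - Z n) by abel]
        rw [norm_smul, Real.norm_eq_abs, abs_of_nonneg
          (div_nonneg (hμ0 (n+1)).le (by linarith [hal1 (n+1)]))]
        have h5 : μ (n+1) / al (n+1) ≤ μ (n+1) := by
          have := hal1 (n+1)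
          rw [div_le_iff₀ (by linarith)]
          nlinarith [hμ0 (n+1)]
        have h6 : μ (n+1) * (D + 2) = ε / 2 * (1/2) ^ (n+1) := by
          simp only [hμ, hc]; field_simp
        calc μ (n+1) / al (n+1) * ‖Q n - Z n‖ ≤ μ (n+1) * (D + 2) := by
              apply mul_le_mul h5 hQZ (norm_nonneg _) (le_of_lt (hμ0 (n+1)))
        _ = ε / 2 * (1/2) ^ (n+1) := h6
      calc ‖Z (n+1) - y‖ ≤ ‖Z n - y‖ + ‖Z (n+1) - Z n‖ := by
            rw [show Z (n+1) - y = (Z n - y) + (Z (n+1) - Z n) by abel]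
            exact norm_add_le _ _
      _ ≤ ε / 2 * (1 - (1/2)^n) + ε / 2 * (1/2)^(n+1) := by linarith
      _ = ε / 2 * (1 - (1/2)^(n+1)) := by rw [pow_succ]; ring
  have hZdist : ∀ n, dist (Z n) (Z (n+1)) ≤ ε / 2 / 2 / 2 ^ n := by
    intro n
    -- same computation as hstep above
    have hQZ : ‖Q n - Z n‖ ≤ D + 2 := by
      have h1 : infDist (Z n) S ≤ D + dist (Z n) y := infDist_le_infDist_add_dist
      have h2 : dist (Z n) y = ‖Z n - y‖ := dist_eq_norm _ _
      have h3 : es (n+1) ≤ 1 := by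
        have : (1/8:ℝ) ^ (n+1) ≤ 1 := pow_le_one₀ (by norm_num) (by norm_num)
        simp only [hes]; nlinarith
      have h4 : ‖Z n - y‖ ≤ ε / 2 := by
        have : (0:ℝ) ≤ (1/2)^n := by positivity
        nlinarith [hZy n]
      have := hQ2 n
      rw [h2] at h1
      have hε2 : ε / 2 ≤ 1 := by linarith
      linarith
    rw [dist_eq_norm, show Z n - Z (n+1) = -(Z (n+1) - Z n) by abel, norm_neg, hZrec n]
    rw [show Z n + (μ (n+1) / al (n+1)) • (Q n - Z n) - Z n
        = (μ (n+1) / al (n+1)) • (Q n - Z n) by abel]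
    rw [norm_smul, Real.norm_eq_abs, abs_of_nonneg
      (div_nonneg (hμ0 (n+1)).le (by linarith [hal1 (n+1)]))]
    have h5 : μ (n+1) / al (n+1) ≤ μ (n+1) := by
      have := hal1 (n+1)
      rw [div_le_iff₀ (by linarith)]
      nlinarith [hμ0 (n+1)]
    have h6 : μ (n+1) * (D + 2) = ε / 2 / 2 / 2 ^ n := by
      simp only [hμ, hc]; rw [one_div_pow]; field_simp; ring
    calc μ (n+1) / al (n+1) * ‖Q n - Z n‖ ≤ μ (n+1) * (D + 2) :=
          mul_le_mul h5 hQZ (norm_nonneg _) (le_of_lt (hμ0 (n+1)))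
    _ = ε / 2 / 2 / 2 ^ n := h6
  -- Z converges
  have hZcauchy : CauchySeq Z := cauchySeq_of_le_geometric_two hZdist
  obtain ⟨zs, hzs⟩ := cauchySeq_tendsto_of_complete hZcauchy
  have hzsy : ‖zs - y‖ ≤ ε := by
    have := dist_le_of_le_geometric_two_of_tendsto₀ hZdist hzs
    rw [hZ0] at this
    rw [show ‖zs - y‖ = dist y zs by rw [dist_eq_norm, norm_sub_rev]]
    linarith
  -- Q is Cauchy
  have hQdist : ∀ n, dist (Q n) (Q (n+1)) ≤ 2 / 2 / 2 ^ n := by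
    intro n
    have hid := quad_id (halrec n)
      (show al (n+1) • Z (n+1) = al n • Z n + μ (n+1) • Q n by
        rw [hZrec n, smul_add, smul_smul, mul_div_cancel₀ _
          (show al (n+1) ≠ 0 by have := hal1 (n+1); positivity),
          smul_sub, halrec n]
        module)
      (Q (n+1)) (Q n)
    have e1 : ‖Q (n+1) - Z (n+1)‖ ^ 2 ≤ ‖Q n - Z (n+1)‖ ^ 2 + es (n+2) := by
      have h1 := hQ1 (n+1)
      have h2 : infDist (Z (n+1)) S ≤ ‖Q n - Z (n+1)‖ := by
        rw [show ‖Q n - Z (n+1)‖ = dist (Z (n+1)) (Q n) by rw [dist_eq_norm, norm_sub_rev]]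
        exact infDist_le_dist_of_mem (hQS n)
      nlinarith [infDist_nonneg (x := Z (n+1)) (s := S)]
    have e2 : ‖Q n - Z n‖ ^ 2 - es (n+1) ≤ ‖Q (n+1) - Z n‖ ^ 2 := by
      have h1 := hQ1 n
      have h2 : infDist (Z n) S ≤ ‖Q (n+1) - Z n‖ := by
        rw [show ‖Q (n+1) - Z n‖ = dist (Z n) (Q (n+1)) by rw [dist_eq_norm, norm_sub_rev]]
        exact infDist_le_dist_of_mem (hQS (n+1))
      nlinarith [infDist_nonneg (x := Z n) (s := S)]
    have key : μ (n+1) * ‖Q (n+1) - Q n‖ ^ 2 ≤ 2 * es (n+2) + 2 * es (n+1) := by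
      have hz : ‖Q n - Q n‖ ^ 2 = 0 := by simp
      rw [hz] at hid
      nlinarith [hal1 n, hal2 n, hal1 (n+1), hal2 (n+1), hes0 (n+1), hes0 (n+2),
        sq_nonneg ‖Q (n+1) - Q n‖]
    set t : ℝ := (1/2) ^ n with htdef
    have ht0 : 0 < t := by positivity
    have hμt : μ (n+1) = c / 2 * t := by simp only [hμ, htdef, pow_succ]; ring
    have hest1 : es (n+1) = c / 8 * t ^ 3 := by
      simp only [hes, htdef, pow_succ, ← pow_mul]
      rw [show (1/8:ℝ) = (1/2)^3 by norm_num, ← pow_mul]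
      ring_nf
    have hest2 : es (n+2) = c / 64 * t ^ 3 := by
      simp only [hes, htdef, pow_succ, ← pow_mul]
      rw [show (1/8:ℝ) = (1/2)^3 by norm_num, ← pow_mul]
      ring_nf
    have hX : ‖Q (n+1) - Q n‖ ≤ t := by
      have h1 : ‖Q (n+1) - Q n‖ ^ 2 ≤ t ^ 2 := by
        rw [hμt] at key; rw [hest1, hest2] at key
        have h2 : c / 2 * t > 0 := by positivity
        nlinarith [sq_nonneg ‖Q (n+1) - Q n‖, sq_nonneg t]
      nlinarith [norm_nonneg (Q (n+1) - Q n)]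
    rw [dist_eq_norm, show Q n - Q (n+1) = -(Q (n+1) - Q n) by abel, norm_neg]
    calc ‖Q (n+1) - Q n‖ ≤ t := hX
    _ = 2 / 2 / 2 ^ n := by rw [htdef, one_div_pow]; field_simp
  have hQcauchy : CauchySeq Q := cauchySeq_of_le_geometric_two hQdist
  obtain ⟨p, hp⟩ := cauchySeq_tendsto_of_complete hQcauchy
  have hpS : p ∈ S := hcl.mem_of_tendsto hp (Eventually.of_forall hQS)
  refine ⟨zs, p, hzsy, hpS, ?_⟩
  intro s hs
  have heslim : Tendsto (fun n : ℕ => es (n+1)) atTop (𝓝 0) := by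
    have h : (fun n : ℕ => es (n+1)) = fun n : ℕ => (c/8) * (1/8 : ℝ)^n := by
      funext n; simp only [hes, pow_succ]; ring
    rw [h]
    simpa using (tendsto_pow_atTop_nhds_zero_of_lt_one (r := (1/8:ℝ)) (by norm_num)
      (by norm_num)).const_mul (c/8)
  have hlim1 : Tendsto (fun n => ‖Q n - Z n‖ ^ 2) atTop (𝓝 (‖p - zs‖ ^ 2)) :=
    ((hp.sub hzs).norm.pow 2)
  have hlim2 : Tendsto (fun n => ‖s - Z n‖ ^ 2 + es (n+1)) atTop (𝓝 (‖s - zs‖ ^ 2 + 0)) :=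
    ((tendsto_const_nhds.sub hzs).norm.pow 2).add heslim
  have hle : ∀ n, ‖Q n - Z n‖ ^ 2 ≤ ‖s - Z n‖ ^ 2 + es (n+1) := by
    intro n
    have h1 := hQ1 n
    have h2 : infDist (Z n) S ≤ ‖s - Z n‖ := by
      rw [show ‖s - Z n‖ = dist (Z n) s by rw [dist_eq_norm, norm_sub_rev]]
      exact infDist_le_dist_of_mem hs
    nlinarith [infDist_nonneg (x := Z n) (s := S)]
  have hfin : ‖p - zs‖ ^ 2 ≤ ‖s - zs‖ ^ 2 + 0 := le_of_tendsto_of_tendsto' hlim1 hlim2 hle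
  rw [dist_eq_norm, dist_eq_norm, show zs - p = -(p - zs) by abel, norm_neg,
    show zs - s = -(s - zs) by abel, norm_neg]
  nlinarith [norm_nonneg (p - zs), norm_nonneg (s - zs)]


set_option maxHeartbeats 1000000 in
/-- L3 : quadratic bound on the distance from chords to the set. -/
lemma chord_dist [CompleteSpace H] {S : Set H} (hne : S.Nonempty) (hcl : IsClosed S)
    {R : ℝ} (hR : 0 < R) (hprox : IsProxRegular R S) {x s : H} (hx : x ∈ S) (hs : s ∈ S)
    (hsx : ‖s - x‖ ≤ R / 2) {τ : ℝ} (hτ0 : 0 < τ) (hτ : τ ≤ 1 / 2) :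
    infDist (x + τ • (s - x)) S ≤ τ * ‖s - x‖ ^ 2 / R := by
  classical
  set r : ℝ := ‖s - x‖ with hrdef
  rcases eq_or_lt_of_le (norm_nonneg (s - x)) with hr0 | hr0
  · -- r = 0 : s = x
    have : s - x = 0 := by rwa [eq_comm, norm_eq_zero] at hr0
    rw [show x + τ • (s - x) = x by rw [this, smul_zero, add_zero]]
    have : infDist x S = 0 := infDist_zero_of_mem hx
    rw [this]
    positivity
  set m : H := x + τ • (s - x) with hmdef
  rcases (eq_or_lt_of_le (infDist_nonneg (x := m) (s := S))).imp Eq.symm id with hδ0 | hδ0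
  · rw [hδ0]; positivity
  set δ : ℝ := infDist m S with hδdef
  set w : H := r⁻¹ • (s - x) with hwdef
  have hrne : r ≠ 0 := ne_of_gt hr0
  have hw1 : ‖w‖ = 1 := by
    rw [hwdef, norm_smul, Real.norm_eq_abs, abs_of_nonneg (by positivity), ← hrdef]
    field_simp
  have hsxw : s - x = r • w := by
    rw [hwdef, smul_smul, mul_inv_cancel₀ hrne, one_smul]
  have hseq : s = x + r • w := by rw [← hsxw]; abel
  have hm2 : m = x + (τ * r) • w := by rw [hmdef, hsxw, smul_smul]
  -- the inflation set
  set E : Set ℝ := {l : ℝ | 0 ≤ l ∧ δ + l ≤ infDist (m + l • w) S} with hEdef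
  have hE0 : (0:ℝ) ∈ E := by
    refine ⟨le_refl 0, ?_⟩
    simp [← hδdef]
  have hτ1 : τ < 1 := lt_of_le_of_lt hτ (by norm_num)
  have hr0' : (0:ℝ) < r := by rw [hrdef]; exact hr0
  have hElt : ∀ l ∈ E, l ≤ ((1 - τ) * r - δ) / 2 := by
    rintro l ⟨hl0, hl⟩
    have hms : m + l • w - s = (l - (1 - τ) * r) • w := by
      rw [hm2, hseq]; module
    have hnorm : infDist (m + l • w) S ≤ |l - (1 - τ) * r| := by
      calc infDist (m + l • w) S ≤ dist (m + l • w) s := infDist_le_dist_of_mem hs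
      _ = ‖m + l • w - s‖ := dist_eq_norm _ _
      _ = |l - (1 - τ) * r| := by rw [hms, norm_smul, hw1, Real.norm_eq_abs, mul_one]
    have h2 : δ + l ≤ |l - (1 - τ) * r| := le_trans hl hnorm
    rcases le_or_gt l ((1 - τ) * r) with hc | hc
    · rw [abs_of_nonpos (by linarith)] at h2; linarith
    · rw [abs_of_pos (by linarith)] at h2
      linarith [mul_pos (show (0:ℝ) < 1 - τ by linarith) hr0']
  have hbdd : BddAbove E := ⟨((1 - τ) * r - δ) / 2, fun l hl => hElt l hl⟩
  have hEclosed : IsClosed E := by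
    rw [hEdef, Set.setOf_and]
    exact IsClosed.inter isClosed_Ici
      (isClosed_le (continuous_const.add continuous_id)
        ((continuous_infDist_pt S).comp (continuous_const.add (continuous_id.smul continuous_const))))
  have hlamE : sSup E ∈ E := hEclosed.csSup_mem ⟨0, hE0⟩ hbdd
  set lam : ℝ := sSup E with hlamdef
  obtain ⟨hlam0, hlamle⟩ := hlamE
  set ρ : ℝ := δ + lam with hρdef
  set cs : H := m + lam • w with hcsdef
  have hρpos : 0 < ρ := by rw [hρdef]; linarith
  have hdcs_ge : ρ ≤ infDist cs S := hlamle
  have hdcs_le : infDist cs S ≤ ρ := by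
    apply le_of_forall_pos_le_add
    intro e' he'
    have hnotE : lam + e' / 2 ∉ E := fun hmem => absurd (le_csSup hbdd hmem) (by linarith)
    have h1 : infDist (m + (lam + e' / 2) • w) S < δ + (lam + e' / 2) := by
      by_contra hcon
      push_neg at hcon
      exact hnotE ⟨by linarith, hcon⟩
    have h2 : infDist cs S ≤ infDist (m + (lam + e' / 2) • w) S + e' / 2 := by
      have h3 := infDist_le_infDist_add_dist (x := cs) (y := m + (lam + e' / 2) • w) (s := S)
      have hd : dist cs (m + (lam + e' / 2) • w) = e' / 2 := by
        rw [dist_eq_norm, show cs - (m + (lam + e' / 2) • w) = (-(e' / 2)) • w by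
          rw [hcsdef]; module]
        rw [norm_smul, hw1, Real.norm_eq_abs, mul_one, abs_of_nonpos (by linarith), neg_neg]
      rw [hd] at h3
      exact h3
    linarith
  set a : ℝ := τ * r + lam with hadef
  set b : ℝ := (1 - τ) * r - lam with hbdef
  have hδb : δ + lam ≤ b := by
    have := hElt lam ⟨hlam0, hlamle⟩
    rw [hbdef]; linarith
  have ha0 : 0 < a := by
    have := mul_pos hτ0 hr0'
    rw [hadef]; linarith
  have hb0 : 0 < b := by linarith
  have hab : a + b = r := by rw [hadef, hbdef]; ring
  have hxcs : x - cs = (-a) • w := by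
    rw [hcsdef, hm2, hadef]; module
  have hscs : s - cs = b • w := by
    rw [hseq, hcsdef, hm2, hbdef]; module
  clear_value r m δ w E lam ρ cs a b
  -- the key inequality, for every small ε
  have key : ∀ e : ℝ, 0 < e → e ≤ min (δ / 2) 1 →
      2 * R * ((a + b) * ρ - 2 * (a + b) * e)
        ≤ b * (a + ρ + 2 * e) ^ 2 + a * (b + ρ + 2 * e) ^ 2 := by
    intro e he hele
    have he1 : e ≤ 1 := le_trans hele (min_le_right _ _)
    have heδ : e ≤ δ / 2 := le_trans hele (min_le_left _ _)
    obtain ⟨z, p, hz, hpS, hpmin⟩ := dense_proj hne hcl cs he he1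
    set ς : H := z - p with hςdef
    set N : ℝ := ‖ς‖ with hNdef
    have hNd : N = infDist z S := by
      apply le_antisymm
      · by_contra hcon
        push_neg at hcon
        obtain ⟨q, hq, hdq⟩ := (infDist_lt_iff ⟨p, hpS⟩).1 hcon
        have h5 := hpmin q hq
        rw [hNdef, hςdef, ← dist_eq_norm] at hdq
        linarith [h5, hdq]
      · rw [hNdef, hςdef, ← dist_eq_norm]
        exact infDist_le_dist_of_mem hpS
    have hzcs : dist z cs ≤ e := by rw [dist_eq_norm]; exact hz
    have hNub : N ≤ ρ + e := by
      rw [hNd]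
      calc infDist z S ≤ infDist cs S + dist z cs := infDist_le_infDist_add_dist
      _ ≤ ρ + e := add_le_add hdcs_le hzcs
    have hNlb : ρ - e ≤ N := by
      rw [hNd]
      have h3 : infDist cs S ≤ infDist z S + dist cs z := infDist_le_infDist_add_dist
      rw [dist_comm] at h3
      linarith
    have hN0 : 0 < N := by linarith
    have hςN : ς ∈ proxNormalCone S p :=
      ⟨1, one_pos, by rw [one_smul, hςdef, show p + (z - p) = z by abel]; exact ⟨hpS, hpmin⟩⟩
    have h1 := hypo hR hprox hpS hςN x hx
    have h2 := hypo hR hprox hpS hςN s hs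
    set ev : H := cs - z with hevdef
    have hev : ‖ev‖ ≤ e := by rw [hevdef, norm_sub_rev]; exact hz
    have hxp : x - p = (-a) • w + ev + ς := by
      rw [← hxcs, hevdef, hςdef]; abel
    have hsp : s - p = b • w + ev + ς := by
      rw [← hscs, hevdef, hςdef]; abel
    set P : ℝ := inner ℝ ς w with hPdef
    have hinx : (inner ℝ ς (x - p) : ℝ) = (-a) * P + (inner ℝ ς ev : ℝ) + N ^ 2 := by
      rw [hxp, inner_add_right, inner_add_right, real_inner_smul_right,
        real_inner_self_eq_norm_sq, ← hNdef, ← hPdef]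
    have hins : (inner ℝ ς (s - p) : ℝ) = b * P + (inner ℝ ς ev : ℝ) + N ^ 2 := by
      rw [hsp, inner_add_right, inner_add_right, real_inner_smul_right,
        real_inner_self_eq_norm_sq, ← hNdef, ← hPdef]
    have hinev : |(inner ℝ ς ev : ℝ)| ≤ N * e := by
      calc |(inner ℝ ς ev : ℝ)| ≤ ‖ς‖ * ‖ev‖ := abs_real_inner_le_norm _ _
      _ ≤ N * e := by rw [← hNdef]; exact mul_le_mul_of_nonneg_left hev (norm_nonneg _)
    have hnx : ‖x - p‖ ≤ a + e + N := by
      calc ‖x - p‖ ≤ ‖(-a) • w‖ + ‖ev‖ + ‖ς‖ := by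
            rw [hxp]; exact le_trans (norm_add_le _ _) (by linarith [norm_add_le ((-a) • w) ev])
      _ ≤ a + e + N := by
            rw [norm_smul, hw1, Real.norm_eq_abs, mul_one, abs_of_neg (by linarith), neg_neg]
            rw [← hNdef]; linarith
    have hns : ‖s - p‖ ≤ b + e + N := by
      calc ‖s - p‖ ≤ ‖b • w‖ + ‖ev‖ + ‖ς‖ := by
            rw [hsp]; exact le_trans (norm_add_le _ _) (by linarith [norm_add_le (b • w) ev])
      _ ≤ b + e + N := by
            rw [norm_smul, hw1, Real.norm_eq_abs, mul_one, abs_of_pos hb0]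
            rw [← hNdef]; linarith
    have habs := abs_le.1 hinev
    have hI1 : 2 * R * (N ^ 2 - a * P - e * N) ≤ N * (a + e + N) ^ 2 := by
      have hsq : ‖x - p‖ ^ 2 ≤ (a + e + N) ^ 2 :=
        pow_le_pow_left₀ (norm_nonneg _) hnx 2
      have hrhs : ‖ς‖ * ‖x - p‖ ^ 2 ≤ N * (a + e + N) ^ 2 := by
        rw [← hNdef]; exact mul_le_mul_of_nonneg_left hsq hN0.le
      have h1' : 2 * R * ((-a) * P + (inner ℝ ς ev : ℝ) + N ^ 2) ≤ ‖ς‖ * ‖x - p‖ ^ 2 := by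
        rw [← hinx]; exact h1
      have hmul : 2 * R * (-(N * e)) ≤ 2 * R * (inner ℝ ς ev : ℝ) :=
        mul_le_mul_of_nonneg_left habs.1 (by positivity)
      linarith [h1', hrhs, hmul]
    have hI2 : 2 * R * (N ^ 2 + b * P - e * N) ≤ N * (b + e + N) ^ 2 := by
      have hsq : ‖s - p‖ ^ 2 ≤ (b + e + N) ^ 2 :=
        pow_le_pow_left₀ (norm_nonneg _) hns 2
      have hrhs : ‖ς‖ * ‖s - p‖ ^ 2 ≤ N * (b + e + N) ^ 2 := by
        rw [← hNdef]; exact mul_le_mul_of_nonneg_left hsq hN0.le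
      have h2' : 2 * R * (b * P + (inner ℝ ς ev : ℝ) + N ^ 2) ≤ ‖ς‖ * ‖s - p‖ ^ 2 := by
        rw [← hins]; exact h2
      have hmul : 2 * R * (-(N * e)) ≤ 2 * R * (inner ℝ ς ev : ℝ) :=
        mul_le_mul_of_nonneg_left habs.1 (by positivity)
      linarith [h2', hrhs, hmul]
    have hcomb : N * (2 * R * ((a + b) * N - (a + b) * e))
        ≤ N * (b * (a + e + N) ^ 2 + a * (b + e + N) ^ 2) := by
      linarith [mul_le_mul_of_nonneg_left hI1 hb0.le, mul_le_mul_of_nonneg_left hI2 ha0.le]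
    have hdiv : 2 * R * ((a + b) * N - (a + b) * e)
        ≤ b * (a + e + N) ^ 2 + a * (b + e + N) ^ 2 :=
      le_of_mul_le_mul_left (by linarith) hN0
    have hq1 : (a + e + N) ^ 2 ≤ (a + ρ + 2 * e) ^ 2 :=
      pow_le_pow_left₀ (by linarith) (by linarith) 2
    have hq2 : (b + e + N) ^ 2 ≤ (b + ρ + 2 * e) ^ 2 :=
      pow_le_pow_left₀ (by linarith) (by linarith) 2
    have hm1 := mul_le_mul_of_nonneg_left hq1 hb0.le
    have hm2 := mul_le_mul_of_nonneg_left hq2 ha0.le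
    linarith [hdiv, hm1, hm2,
      mul_le_mul_of_nonneg_left hNlb (show (0:ℝ) ≤ 2 * R * (a + b) by positivity)]
  -- pass to the limit ε → 0⁺
  have hstar : 2 * R * ((a + b) * ρ) ≤ b * (a + ρ) ^ 2 + a * (b + ρ) ^ 2 := by
    have hcF : Continuous (fun e : ℝ => 2 * R * ((a + b) * ρ - 2 * (a + b) * e)) :=
      continuous_const.mul (continuous_const.sub (continuous_const.mul continuous_id))
    have hcG : Continuous (fun e : ℝ => b * (a + ρ + 2 * e) ^ 2 + a * (b + ρ + 2 * e) ^ 2) :=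
      ((continuous_const.mul ((continuous_const.add (continuous_const.mul continuous_id)).pow 2)).add
        (continuous_const.mul ((continuous_const.add (continuous_const.mul continuous_id)).pow 2)))
    have hF : Tendsto (fun e : ℝ => 2 * R * ((a + b) * ρ - 2 * (a + b) * e)) (𝓝[>] 0)
        (𝓝 (2 * R * ((a + b) * ρ))) := by
      have := (hcF.tendsto 0).mono_left (nhdsWithin_le_nhds (s := Set.Ioi (0:ℝ)))
      simpa using this
    have hG : Tendsto (fun e : ℝ => b * (a + ρ + 2 * e) ^ 2 + a * (b + ρ + 2 * e) ^ 2) (𝓝[>] 0)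
        (𝓝 (b * (a + ρ) ^ 2 + a * (b + ρ) ^ 2)) := by
      have := (hcG.tendsto 0).mono_left (nhdsWithin_le_nhds (s := Set.Ioi (0:ℝ)))
      simpa using this
    have hev' : ∀ᶠ e in 𝓝[>] (0:ℝ), 2 * R * ((a + b) * ρ - 2 * (a + b) * e)
        ≤ b * (a + ρ + 2 * e) ^ 2 + a * (b + ρ + 2 * e) ^ 2 := by
      filter_upwards [Ioc_mem_nhdsGT (show (0:ℝ) < min (δ / 2) 1 by
        refine lt_min (by linarith) one_pos)] with e hee
      exact key e hee.1 hee.2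
    exact le_of_tendsto_of_tendsto hF hG hev'
  -- final algebra
  have hρr : ρ ≤ r := by
    have hbr : b ≤ r := by linarith
    linarith
  have hab4 : a * b ≤ r ^ 2 / 4 := by
    have h2 : 4 * (a * b) = r ^ 2 - (a - b) ^ 2 := by rw [← hab]; ring
    linarith [sq_nonneg (a - b), h2]
  have hRρab : R * ρ ≤ a * b := by
    have hstar2 : 2 * R * (r * ρ) ≤ a * b * r + 4 * (a * b) * ρ + r * ρ ^ 2 := by
      have h := hstar
      rw [show b * (a + ρ) ^ 2 + a * (b + ρ) ^ 2
          = a * b * (a + b) + 4 * (a * b) * ρ + (a + b) * ρ ^ 2 from by ring, hab] at h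
      linarith
    have t1 : 4 * (a * b) * ρ ≤ r ^ 2 * ρ := by
      have := mul_le_mul_of_nonneg_right hab4 hρpos.le
      nlinarith [this]
    have t2 : r * ρ ^ 2 ≤ r ^ 2 * ρ := by
      have := mul_le_mul_of_nonneg_left hρr (mul_nonneg hr0'.le hρpos.le)
      linarith [this]
    have t3 : 2 * (r ^ 2 * ρ) ≤ R * (r * ρ) := by
      have h2r : 2 * r ≤ R := by linarith
      have := mul_le_mul_of_nonneg_right h2r (mul_nonneg hr0'.le hρpos.le)
      linarith [this]
    have hfin2 : r * (R * ρ) ≤ r * (a * b) := by linarith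
    exact le_of_mul_le_mul_left hfin2 hr0'
  have hfin : R * δ ≤ τ * r ^ 2 := by
    have hbr2 : b ≤ r := by linarith
    have habar : a * b ≤ a * r := mul_le_mul_of_nonneg_left hbr2 ha0.le
    have haexp : a * r = τ * r ^ 2 + lam * r := by rw [hadef]; ring
    have hlast : lam * (R - r) ≥ 0 := mul_nonneg hlam0 (by linarith)
    have hexp2 : R * ρ = R * δ + R * lam := by rw [hρdef]; ring
    linarith [hRρab, habar, haexp, hexp2, hlast]
  rw [le_div_iff₀ hR]
  linarith [hfin]


/-- `g` is nonnegative. -/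
lemma g_nonneg {S : Set H} (x u : H) {τ : ℝ} (hτ : 0 < τ) :
    0 ≤ τ⁻¹ * infDist (x + τ • u) S :=
  mul_nonneg (by positivity) infDist_nonneg

/-- `g` is bounded by `‖u‖`. -/
lemma g_le_norm {S : Set H} {x : H} (hx : x ∈ S) (u : H) {τ : ℝ} (hτ : 0 < τ) :
    τ⁻¹ * infDist (x + τ • u) S ≤ ‖u‖ := by
  have h1 : infDist (x + τ • u) S ≤ τ * ‖u‖ := by
    calc infDist (x + τ • u) S ≤ dist (x + τ • u) x := infDist_le_dist_of_mem hx
    _ = ‖τ • u‖ := by rw [dist_eq_norm, add_sub_cancel_left]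
    _ = τ * ‖u‖ := by rw [norm_smul, Real.norm_eq_abs, abs_of_pos hτ]
  calc τ⁻¹ * infDist (x + τ • u) S ≤ τ⁻¹ * (τ * ‖u‖) :=
        mul_le_mul_of_nonneg_left h1 (by positivity)
  _ = ‖u‖ := by field_simp

/-- `g` is `1`-Lipschitz in the direction. -/
lemma g_lip {S : Set H} (x u v : H) {τ : ℝ} (hτ : 0 < τ) :
    τ⁻¹ * infDist (x + τ • u) S ≤ τ⁻¹ * infDist (x + τ • v) S + ‖u - v‖ := by
  have h1 : infDist (x + τ • u) S ≤ infDist (x + τ • v) S + τ * ‖u - v‖ := by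
    have := infDist_le_infDist_add_dist (x := x + τ • u) (y := x + τ • v) (s := S)
    have hd : dist (x + τ • u) (x + τ • v) = τ * ‖u - v‖ := by
      rw [dist_eq_norm, show x + τ • u - (x + τ • v) = τ • (u - v) by
        rw [smul_sub]; abel, norm_smul, Real.norm_eq_abs, abs_of_pos hτ]
    rw [hd] at this
    exact this
  calc τ⁻¹ * infDist (x + τ • u) S ≤ τ⁻¹ * (infDist (x + τ • v) S + τ * ‖u - v‖) :=
        mul_le_mul_of_nonneg_left h1 (by positivity)
  _ = τ⁻¹ * infDist (x + τ • v) S + ‖u - v‖ := by field_simp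

/-- one-step approximation of a direction by an almost tangent one. -/
lemma step_lemma [CompleteSpace H] {S : Set H} (hne : S.Nonempty) (hcl : IsClosed S)
    {R : ℝ} (hR : 0 < R) (hprox : IsProxRegular R S) {x : H} (hx : x ∈ S) (u : H)
    {τ ε : ℝ} (hτ0 : 0 < τ) (hε0 : 0 < ε) (hb : τ * (2 * ‖u‖ + ε) ≤ R / 2) :
    ∃ u' : H, ‖u - u'‖ ≤ τ⁻¹ * infDist (x + τ • u) S + ε ∧ ‖u'‖ ≤ 2 * ‖u‖ + ε ∧
      ∀ σ : ℝ, 0 < σ → σ ≤ τ / 2 → σ⁻¹ * infDist (x + σ • u') S ≤ τ * ‖u'‖ ^ 2 / R := by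
  set d : ℝ := infDist (x + τ • u) S with hd
  have hd0 : 0 ≤ d := infDist_nonneg
  obtain ⟨s₀, hs₀S, hs₀⟩ := (infDist_lt_iff hne).1 (show infDist (x + τ • u) S < d + ε * τ by
    rw [← hd]; nlinarith)
  set u' : H := τ⁻¹ • (s₀ - x) with hu'
  have hs0x : s₀ - x = τ • u' := by
    rw [hu', smul_smul, mul_inv_cancel₀ (ne_of_gt hτ0), one_smul]
  have hdiff : τ • (u - u') = x + τ • u - s₀ := by
    rw [smul_sub, ← hs0x]; abel
  have hdist : ‖x + τ • u - s₀‖ < d + ε * τ := by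
    rw [← dist_eq_norm]; exact hs₀
  have h1 : ‖u - u'‖ ≤ τ⁻¹ * d + ε := by
    have h2 : τ * ‖u - u'‖ < d + ε * τ := by
      rw [show τ * ‖u - u'‖ = ‖τ • (u - u')‖ by
        rw [norm_smul, Real.norm_eq_abs, abs_of_pos hτ0], hdiff]
      exact hdist
    rw [show τ⁻¹ * d + ε = τ⁻¹ * (d + ε * τ) by field_simp]
    rw [show ‖u - u'‖ = τ⁻¹ * (τ * ‖u - u'‖) by field_simp]
    exact mul_le_mul_of_nonneg_left h2.le (by positivity)
  have hu'n : ‖u'‖ ≤ 2 * ‖u‖ + ε := by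
    have h3 : ‖u'‖ ≤ ‖u‖ + ‖u - u'‖ := by
      calc ‖u'‖ = ‖u - (u - u')‖ := by congr 1; abel
      _ ≤ ‖u‖ + ‖u - u'‖ := norm_sub_le _ _
    have h4 : τ⁻¹ * d ≤ ‖u‖ := g_le_norm hx u hτ0
    linarith
  have hchord : ‖s₀ - x‖ ≤ R / 2 := by
    rw [hs0x, norm_smul, Real.norm_eq_abs, abs_of_pos hτ0]
    calc τ * ‖u'‖ ≤ τ * (2 * ‖u‖ + ε) := mul_le_mul_of_nonneg_left hu'n hτ0.le
    _ ≤ R / 2 := hb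
  refine ⟨u', h1, hu'n, fun σ hσ0 hστ => ?_⟩
  have hfrac0 : 0 < σ / τ := by positivity
  have hfrac1 : σ / τ ≤ 1 / 2 := by
    rw [div_le_div_iff₀ hτ0 (by norm_num)]
    linarith
  have hcd := chord_dist hne hcl hR hprox hx hs₀S hchord hfrac0 hfrac1
  have heq : x + (σ / τ) • (s₀ - x) = x + σ • u' := by
    rw [hs0x, smul_smul, div_mul_cancel₀ _ (ne_of_gt hτ0)]
  rw [heq] at hcd
  have hnorm2 : ‖s₀ - x‖ ^ 2 = τ ^ 2 * ‖u'‖ ^ 2 := by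
    rw [hs0x, norm_smul, Real.norm_eq_abs, abs_of_pos hτ0]; ring
  rw [hnorm2] at hcd
  calc σ⁻¹ * infDist (x + σ • u') S ≤ σ⁻¹ * (σ / τ * (τ ^ 2 * ‖u'‖ ^ 2) / R) :=
        mul_le_mul_of_nonneg_left hcd (by positivity)
  _ = τ * ‖u'‖ ^ 2 / R := by field_simp


set_option maxHeartbeats 1000000 in
/-- iteration: every direction is within `liminf g + ε` of an exactly tangent direction. -/
lemma approx [CompleteSpace H] {S : Set H} (hne : S.Nonempty) (hcl : IsClosed S)
    {R : ℝ} (hR : 0 < R) (hprox : IsProxRegular R S) {x : H} (hx : x ∈ S) (u : H)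
    {ε : ℝ} (hε0 : 0 < ε) (hε1 : ε ≤ 1) :
    ∃ w : H, Tendsto (fun τ : ℝ => τ⁻¹ * infDist (x + τ • w) S) (𝓝[>] (0:ℝ)) (𝓝 0) ∧
      ‖u - w‖ ≤ liminf (fun τ : ℝ => τ⁻¹ * infDist (x + τ • u) S) (𝓝[>] (0:ℝ)) + ε := by
  classical
  set F : Filter ℝ := 𝓝[>] (0:ℝ) with hF
  set lam : ℝ := liminf (fun τ : ℝ => τ⁻¹ * infDist (x + τ • u) S) F with hlam
  have hub : ∀ᶠ τ in F, (fun τ : ℝ => τ⁻¹ * infDist (x + τ • u) S) τ ≤ ‖u‖ := by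
    filter_upwards [self_mem_nhdsWithin] with τ hτ
    exact g_le_norm hx u hτ
  have hlb : ∀ᶠ τ in F, (0:ℝ) ≤ (fun τ : ℝ => τ⁻¹ * infDist (x + τ • u) S) τ := by
    filter_upwards [self_mem_nhdsWithin] with τ hτ
    exact g_nonneg x u hτ
  have hlam0 : 0 ≤ lam := le_liminf_of_le (IsBoundedUnder.isCoboundedUnder_ge ⟨‖u‖, by
    rwa [eventually_map] ⟩) hlb
  have hlamu : lam ≤ ‖u‖ := liminf_le_of_frequently_le (hub.frequently) ⟨0, by
    rw [eventually_map]; exact hlb.mono fun τ h => h⟩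
  set M : ℝ := 2 * ‖u‖ + 2 with hM
  have hM2 : 2 ≤ M := by rw [hM]; linarith [norm_nonneg u]
  have hM0 : 0 < M := by linarith
  set cb : ℕ → ℝ := fun n => min (R / (2 * (2 * M + 1))) (ε * R * (1/2) ^ n / (16 * M ^ 2))
    with hcb
  have hcb0 : ∀ n, 0 < cb n := fun n => lt_min (by positivity) (by positivity)
  have hcbR : ∀ n, cb n ≤ R / (2 * (2 * M + 1)) := fun n => min_le_left _ _
  have hcbε : ∀ n, cb n ≤ ε * R * (1/2) ^ n / (16 * M ^ 2) := fun n => min_le_right _ _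
  set Inv : ℕ → H × ℝ → Prop := fun n p => 0 < p.2 ∧ ‖p.1‖ ≤ 2 * ‖u‖ + 2 - (1/2) ^ n ∧
    ∀ σ : ℝ, 0 < σ → σ ≤ p.2 → σ⁻¹ * infDist (x + σ • p.1) S ≤ ε / 8 * (1/2) ^ n with hInv
  -- the inductive step
  have key : ∀ n : ℕ, ∀ p : H × ℝ, Inv n p →
      ∃ q : H × ℝ, Inv (n+1) q ∧ ‖q.1 - p.1‖ ≤ ε / 4 * (1/2) ^ n := by
    intro n p hp
    obtain ⟨ht, hnorm, hg⟩ := hp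
    have hpM : ‖p.1‖ ≤ M := by
      have : (0:ℝ) ≤ (1/2) ^ n := by positivity
      rw [hM]; linarith
    set τ : ℝ := min p.2 (cb n) with hτdef
    have hτ0 : 0 < τ := lt_min ht (hcb0 n)
    set es : ℝ := ε / 8 * (1/2) ^ n with hes
    have hes0 : 0 < es := by positivity
    have hes1 : es ≤ 1 := by
      have h1 : (1/2:ℝ) ^ n ≤ 1 := pow_le_one₀ (by norm_num) (by norm_num)
      rw [hes]; nlinarith
    have hb : τ * (2 * ‖p.1‖ + es) ≤ R / 2 := by
      have h1 : 2 * ‖p.1‖ + es ≤ 2 * M + 1 := by linarith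
      have h2 : τ ≤ R / (2 * (2 * M + 1)) := le_trans (min_le_right _ _) (hcbR n)
      calc τ * (2 * ‖p.1‖ + es) ≤ (R / (2 * (2 * M + 1))) * (2 * M + 1) := by
            apply mul_le_mul h2 h1 (by positivity) (by positivity)
      _ = R / 2 := by field_simp
    obtain ⟨u', h1, hu'n, hind⟩ := step_lemma hne hcl hR hprox hx p.1 hτ0 hes0 hb
    have hgp : τ⁻¹ * infDist (x + τ • p.1) S ≤ ε / 8 * (1/2) ^ n :=
      hg τ hτ0 (min_le_left _ _)
    have hstep : ‖u' - p.1‖ ≤ ε / 4 * (1/2) ^ n := by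
      rw [norm_sub_rev]
      calc ‖p.1 - u'‖ ≤ τ⁻¹ * infDist (x + τ • p.1) S + es := h1
      _ ≤ ε / 4 * (1/2) ^ n := by rw [hes] at *; linarith
    have hu'M : ‖u'‖ ≤ 2 * ‖u‖ + 2 - (1/2) ^ (n+1) := by
      have h3 : ‖u'‖ ≤ ‖p.1‖ + ‖u' - p.1‖ := by
        calc ‖u'‖ = ‖p.1 + (u' - p.1)‖ := by congr 1; abel
        _ ≤ ‖p.1‖ + ‖u' - p.1‖ := norm_add_le _ _
      have h4 : ε / 4 * (1/2) ^ n ≤ (1/2) ^ n - (1/2) ^ (n+1) := by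
        have : (1/2:ℝ) ^ (n+1) = (1/2) ^ n / 2 := by rw [pow_succ]; ring
        rw [this]
        have h5 : (0:ℝ) < (1/2) ^ n := by positivity
        nlinarith
      linarith
    refine ⟨(u', τ / 2), ⟨by positivity, hu'M, fun σ hσ0 hστ => ?_⟩, hstep⟩
    have h6 := hind σ hσ0 hστ
    have hu'M2 : ‖u'‖ ≤ M := by
      have : (0:ℝ) ≤ (1/2) ^ (n+1) := by positivity
      rw [hM]; linarith
    calc σ⁻¹ * infDist (x + σ • u') S ≤ τ * ‖u'‖ ^ 2 / R := h6
    _ ≤ cb n * M ^ 2 / R := by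
          have hmm : τ * ‖u'‖ ^ 2 ≤ cb n * M ^ 2 :=
            mul_le_mul (min_le_right _ _) (pow_le_pow_left₀ (norm_nonneg _) hu'M2 2)
              (by positivity) (hcb0 n).le
          exact (div_le_div_iff_of_pos_right hR).2 hmm
    _ ≤ ε / 8 * (1/2) ^ (n+1) := by
          have h8 : cb n * M ^ 2 ≤ ε * R * (1/2) ^ n / 16 := by
            have h9 := mul_le_mul_of_nonneg_right (hcbε n) (sq_nonneg M)
            have heq : (ε * R * (1/2) ^ n / (16 * M ^ 2)) * M ^ 2 = ε * R * (1/2) ^ n / 16 := by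
              field_simp
            linarith
          rw [div_le_iff₀ hR]
          have heq2 : ε * R * (1/2) ^ n / 16 = ε / 8 * (1/2) ^ (n+1) * R := by
            rw [pow_succ]; ring
          linarith
  -- base step
  have hcob : (F.map (fun τ : ℝ => τ⁻¹ * infDist (x + τ • u) S)).IsCobounded (· ≥ ·) :=
    IsBoundedUnder.isCoboundedUnder_ge ⟨‖u‖, by rwa [eventually_map]⟩
  have hfreq : ∃ᶠ τ in F, (fun τ : ℝ => τ⁻¹ * infDist (x + τ • u) S) τ < lam + ε / 16 :=
    frequently_lt_of_liminf_lt hcob (by rw [← hlam]; linarith)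
  have hev : ∀ᶠ τ in F, τ ∈ Set.Ioc 0 (cb 0) := Ioc_mem_nhdsGT (hcb0 0)
  obtain ⟨τ', hτ'g, hτ'mem⟩ := (hfreq.and_eventually hev).exists
  have hτ'0 : 0 < τ' := hτ'mem.1
  have hτ'cb : τ' ≤ cb 0 := hτ'mem.2
  have hbase_b : τ' * (2 * ‖u‖ + ε / 16) ≤ R / 2 := by
    have h1 : 2 * ‖u‖ + ε / 16 ≤ 2 * M + 1 := by rw [hM]; linarith
    calc τ' * (2 * ‖u‖ + ε / 16) ≤ (R / (2 * (2 * M + 1))) * (2 * M + 1) := by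
          apply mul_le_mul (le_trans hτ'cb (hcbR 0)) h1 (by positivity) (by positivity)
    _ = R / 2 := by field_simp
  obtain ⟨u₀, hb1, hb2, hb3⟩ := step_lemma hne hcl hR hprox hx u hτ'0 (by positivity :
    (0:ℝ) < ε / 16) hbase_b
  have hu₀dist : ‖u - u₀‖ ≤ lam + ε / 8 := by
    calc ‖u - u₀‖ ≤ τ'⁻¹ * infDist (x + τ' • u) S + ε / 16 := hb1
    _ ≤ lam + ε / 8 := by linarith [hτ'g.le]
  have hu₀inv : Inv 0 (u₀, τ' / 2) := by
    refine ⟨by positivity, ?_, fun σ hσ0 hστ => ?_⟩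
    · have h3 : ‖u₀‖ ≤ ‖u‖ + ‖u - u₀‖ := by
        calc ‖u₀‖ = ‖u - (u - u₀)‖ := by congr 1; abel
        _ ≤ ‖u‖ + ‖u - u₀‖ := norm_sub_le _ _
      simp only [pow_zero]
      linarith
    · have h6 := hb3 σ hσ0 hστ
      have hu₀M : ‖u₀‖ ≤ M := by
        have h3 : ‖u₀‖ ≤ ‖u‖ + ‖u - u₀‖ := by
          calc ‖u₀‖ = ‖u - (u - u₀)‖ := by congr 1; abel
          _ ≤ ‖u‖ + ‖u - u₀‖ := norm_sub_le _ _
        rw [hM]; linarith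
      calc σ⁻¹ * infDist (x + σ • u₀) S ≤ τ' * ‖u₀‖ ^ 2 / R := h6
      _ ≤ cb 0 * M ^ 2 / R := by
            have hmm : τ' * ‖u₀‖ ^ 2 ≤ cb 0 * M ^ 2 :=
              mul_le_mul hτ'cb (pow_le_pow_left₀ (norm_nonneg _) hu₀M 2)
                (by positivity) (hcb0 0).le
            exact (div_le_div_iff_of_pos_right hR).2 hmm
      _ ≤ ε / 8 * (1/2) ^ 0 := by
            have h8 : cb 0 * M ^ 2 ≤ ε * R * (1/2) ^ 0 / 16 := by
              have h9 := mul_le_mul_of_nonneg_right (hcbε 0) (sq_nonneg M)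
              have heq : (ε * R * (1/2) ^ 0 / (16 * M ^ 2)) * M ^ 2
                  = ε * R * (1/2) ^ 0 / 16 := by field_simp
              linarith
            rw [div_le_iff₀ hR]
            simp only [pow_zero] at *
            have hεR : (0:ℝ) ≤ ε * R := by positivity
            linarith
  -- build the sequence
  choose! nxt hnxt1 hnxt2 using key
  set Fseq : ∀ n : ℕ, {p : H × ℝ // Inv n p} := fun n =>
    Nat.rec ⟨(u₀, τ' / 2), hu₀inv⟩ (fun n q => ⟨nxt n q.1, hnxt1 n q.1 q.2⟩) n with hFseq
  set U : ℕ → H := fun n => (Fseq n).1.1 with hU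
  have hUstep : ∀ n, ‖U (n+1) - U n‖ ≤ ε / 4 * (1/2) ^ n := fun n =>
    hnxt2 n (Fseq n).1 (Fseq n).2
  have hUdist : ∀ n, dist (U n) (U (n+1)) ≤ ε / 2 / 2 / 2 ^ n := by
    intro n
    rw [dist_eq_norm, norm_sub_rev]
    calc ‖U (n+1) - U n‖ ≤ ε / 4 * (1/2) ^ n := hUstep n
    _ = ε / 2 / 2 / 2 ^ n := by rw [div_pow, one_pow]; ring
  have hUcauchy : CauchySeq U := cauchySeq_of_le_geometric_two hUdist
  obtain ⟨w, hw⟩ := cauchySeq_tendsto_of_complete hUcauchy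
  have hUw : ∀ n, dist (U n) w ≤ ε / 2 / 2 ^ n :=
    fun n => dist_le_of_le_geometric_two_of_tendsto hUdist hw n
  refine ⟨w, ?_, ?_⟩
  · -- tendsto 0
    rw [Metric.tendsto_nhds]
    intro ϑ hϑ
    obtain ⟨n, hn⟩ := exists_pow_lt_of_lt_one (show (0:ℝ) < ϑ / (ε + 1) by positivity)
      (show (1/2:ℝ) < 1 by norm_num)
    have hTn : 0 < (Fseq n).1.2 := (Fseq n).2.1
    filter_upwards [Ioc_mem_nhdsGT hTn] with σ hσ
    have hgn : σ⁻¹ * infDist (x + σ • U n) S ≤ ε / 8 * (1/2) ^ n :=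
      (Fseq n).2.2.2 σ hσ.1 hσ.2
    have hlip := g_lip (S := S) x w (U n) hσ.1
    have hwn : ‖w - U n‖ ≤ ε / 2 * (1/2) ^ n := by
      have := hUw n
      rw [dist_comm, dist_eq_norm] at this
      calc ‖w - U n‖ ≤ ε / 2 / 2 ^ n := this
      _ = ε / 2 * (1/2) ^ n := by rw [div_pow, one_pow]; ring
    have hgw : σ⁻¹ * infDist (x + σ • w) S ≤ ε * (1/2) ^ n := by
      have h7 : (0:ℝ) < (1/2) ^ n := by positivity
      calc σ⁻¹ * infDist (x + σ • w) S
          ≤ σ⁻¹ * infDist (x + σ • U n) S + ‖w - U n‖ := hlip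
      _ ≤ ε / 8 * (1/2) ^ n + ε / 2 * (1/2) ^ n := by linarith
      _ ≤ ε * (1/2) ^ n := by nlinarith
    rw [Real.dist_eq, sub_zero, abs_of_nonneg (g_nonneg x w hσ.1)]
    have h10 : ε * (1/2) ^ n < ϑ := by
      have h11 : (ε + 1) * ((1/2) ^ n) < (ε + 1) * (ϑ / (ε + 1)) :=
        mul_lt_mul_of_pos_left hn (by positivity)
      have h12 : (ε + 1) * (ϑ / (ε + 1)) = ϑ := by field_simp
      nlinarith [pow_nonneg (show (0:ℝ) ≤ 1/2 by norm_num) n]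
    linarith
  · -- distance bound
    have h13 : dist (U 0) w ≤ ε / 2 := by
      have := hUw 0
      simpa using this
    have hU0 : U 0 = u₀ := rfl
    calc ‖u - w‖ = ‖(u - u₀) + (u₀ - w)‖ := by congr 1; abel
    _ ≤ ‖u - u₀‖ + ‖u₀ - w‖ := norm_add_le _ _
    _ ≤ (lam + ε / 8) + ε / 2 := by
          refine add_le_add hu₀dist ?_
          rw [← hU0, ← dist_eq_norm]
          exact h13
    _ ≤ lam + ε := by linarith


section Final
variable [CompleteSpace H] {S : Set H} {R : ℝ} {x : H}

/-- Part 1: the directional derivative exists. -/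
lemma part1 (hne : S.Nonempty) (hcl : IsClosed S) (hR : 0 < R) (hprox : IsProxRegular R S)
    (hx : x ∈ S) (u : H) :
    Tendsto (fun τ : ℝ => τ⁻¹ * infDist (x + τ • u) S) (𝓝[>] (0:ℝ))
      (𝓝 (liminf (fun τ : ℝ => τ⁻¹ * infDist (x + τ • u) S) (𝓝[>] (0:ℝ)))) := by
  have hub : ∀ᶠ τ in 𝓝[>] (0:ℝ), (fun τ : ℝ => τ⁻¹ * infDist (x + τ • u) S) τ ≤ ‖u‖ := by
    filter_upwards [self_mem_nhdsWithin] with τ hτ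
    exact g_le_norm hx u hτ
  have hlb : ∀ᶠ τ in 𝓝[>] (0:ℝ), (0:ℝ) ≤ (fun τ : ℝ => τ⁻¹ * infDist (x + τ • u) S) τ := by
    filter_upwards [self_mem_nhdsWithin] with τ hτ
    exact g_nonneg x u hτ
  have hbdd1 : IsBoundedUnder (· ≤ ·) (𝓝[>] (0:ℝ)) (fun τ : ℝ => τ⁻¹ * infDist (x + τ • u) S) :=
    ⟨‖u‖, by rwa [eventually_map]⟩
  have hbdd2 : IsBoundedUnder (· ≥ ·) (𝓝[>] (0:ℝ)) (fun τ : ℝ => τ⁻¹ * infDist (x + τ • u) S) :=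
    ⟨0, by rwa [eventually_map]⟩
  refine tendsto_of_le_liminf_of_limsup_le le_rfl ?_ hbdd1 hbdd2
  apply le_of_forall_pos_le_add
  intro ϑ hϑ
  set ε : ℝ := min 1 (ϑ / 2) with hεdef
  have hε0 : 0 < ε := lt_min one_pos (by positivity)
  have hε1 : ε ≤ 1 := min_le_left _ _
  have hεϑ : 2 * ε ≤ ϑ := by
    have : ε ≤ ϑ / 2 := min_le_right _ _
    linarith
  obtain ⟨w, hwT, hwd⟩ := approx hne hcl hR hprox hx u hε0 hε1
  have hev1 : ∀ᶠ τ in 𝓝[>] (0:ℝ), τ⁻¹ * infDist (x + τ • w) S < ε :=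
    hwT.eventually_lt_const hε0
  have hev2 : ∀ᶠ τ in 𝓝[>] (0:ℝ), (fun τ : ℝ => τ⁻¹ * infDist (x + τ • u) S) τ ≤
      liminf (fun τ : ℝ => τ⁻¹ * infDist (x + τ • u) S) (𝓝[>] (0:ℝ)) + ϑ := by
    filter_upwards [hev1, self_mem_nhdsWithin] with τ h1 h2
    have h3 := g_lip (S := S) x u w h2
    calc τ⁻¹ * infDist (x + τ • u) S ≤ τ⁻¹ * infDist (x + τ • w) S + ‖u - w‖ := h3
    _ ≤ ε + (liminf (fun τ : ℝ => τ⁻¹ * infDist (x + τ • u) S) (𝓝[>] (0:ℝ)) + ε) := by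
          exact add_le_add h1.le hwd
    _ ≤ liminf (fun τ : ℝ => τ⁻¹ * infDist (x + τ • u) S) (𝓝[>] (0:ℝ)) + ϑ := by linarith
  exact limsup_le_of_le (IsBoundedUnder.isCoboundedUnder_le hbdd2) hev2

end Final

section Final2
variable [CompleteSpace H] {S : Set H} {R : ℝ} {x : H}

set_option maxHeartbeats 1000000 in
/-- inclusion N ⊆ T°. -/
lemma incl1 (hne : S.Nonempty) (hcl : IsClosed S) (hR : 0 < R) (hprox : IsProxRegular R S)
    (hx : x ∈ S) {ς u : H} (hς : ς ∈ proxNormalCone S x)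
    (huT : Tendsto (fun τ : ℝ => τ⁻¹ * infDist (x + τ • u) S) (𝓝[>] (0:ℝ)) (𝓝 0)) :
    (inner ℝ ς u : ℝ) ≤ 0 := by
  have hhypo := hypo hR hprox hx hς
  have h0 : (inner ℝ ς u : ℝ) ≤ (0:ℝ) := by
    apply le_of_forall_pos_le_add
    intro ϑ hϑ
    rw [zero_add]
    set C : ℝ := ‖ς‖ + 1 with hC
    have hC0 : 0 < C := by have := norm_nonneg ς; rw [hC]; linarith
    set B : ℝ := ‖u‖ + 2 with hB
    have hB0 : 0 < B := by have := norm_nonneg u; rw [hB]; linarith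
    set ε' : ℝ := min 1 (ϑ / (4 * C)) with hε'
    have hε'0 : 0 < ε' := lt_min one_pos (by positivity)
    have hε'1 : ε' ≤ 1 := min_le_left _ _
    have hε'2 : ε' * (4 * C) ≤ ϑ := by
      have h := min_le_right 1 (ϑ / (4 * C))
      calc ε' * (4 * C) ≤ (ϑ / (4 * C)) * (4 * C) :=
            mul_le_mul_of_nonneg_right h (by positivity)
      _ = ϑ := by field_simp
    set τc : ℝ := min 1 (ϑ * R / (C * B ^ 2)) with hτc
    have hτc0 : 0 < τc := lt_min one_pos (by positivity)
    obtain ⟨τ, hgτ, hτmem⟩ := ((huT.eventually_lt_const hε'0).and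
      (Ioc_mem_nhdsGT hτc0)).exists
    have hτ0 : 0 < τ := hτmem.1
    have hττc : τ ≤ τc := hτmem.2
    have hτ1 : τ * (C * B ^ 2) ≤ ϑ * R := by
      have h := le_trans hττc (min_le_right 1 (ϑ * R / (C * B ^ 2)))
      calc τ * (C * B ^ 2) ≤ (ϑ * R / (C * B ^ 2)) * (C * B ^ 2) :=
            mul_le_mul_of_nonneg_right h (by positivity)
      _ = ϑ * R := by field_simp
    set d : ℝ := infDist (x + τ • u) S with hd
    have hd0 : 0 ≤ d := infDist_nonneg
    have hdτ : d < ε' * τ := by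
      have h2 : τ⁻¹ * d < ε' := hgτ
      have h3 := mul_lt_mul_of_pos_left h2 hτ0
      rw [show τ * (τ⁻¹ * d) = d by field_simp] at h3
      linarith [h3]
    obtain ⟨s₁, hs₁S, hs₁⟩ := (infDist_lt_iff hne).1 (show infDist (x + τ • u) S < d + ε' * τ by
      rw [← hd]; nlinarith)
    have he₁ : ‖x + τ • u - s₁‖ < d + ε' * τ := by rw [← dist_eq_norm]; exact hs₁
    have hs₁x : ‖s₁ - x‖ ≤ τ * B := by
      have h4 : ‖s₁ - x‖ ≤ ‖x + τ • u - s₁‖ + ‖τ • u‖ := by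
        calc ‖s₁ - x‖ = ‖(x + τ • u - s₁) - τ • u‖ := by
              rw [show x + τ • u - s₁ - τ • u = -(s₁ - x) by abel, norm_neg]
        _ ≤ ‖x + τ • u - s₁‖ + ‖τ • u‖ := norm_sub_le _ _
      have h5 : ‖τ • u‖ = τ * ‖u‖ := by
        rw [norm_smul, Real.norm_eq_abs, abs_of_pos hτ0]
      rw [hB]
      nlinarith [he₁, hdτ]
    have hA := hhypo s₁ hs₁S
    have hsq : ‖s₁ - x‖ ^ 2 ≤ (τ * B) ^ 2 := pow_le_pow_left₀ (norm_nonneg _) hs₁x 2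
    have hA2 : 2 * R * (inner ℝ ς (s₁ - x) : ℝ) ≤ ‖ς‖ * (τ * B) ^ 2 :=
      le_trans hA (mul_le_mul_of_nonneg_left hsq (norm_nonneg _))
    have hB2 : (inner ℝ ς (x + τ • u - s₁) : ℝ) ≤ ‖ς‖ * (2 * ε' * τ) := by
      calc (inner ℝ ς (x + τ • u - s₁) : ℝ) ≤ ‖ς‖ * ‖x + τ • u - s₁‖ := real_inner_le_norm _ _
      _ ≤ ‖ς‖ * (2 * ε' * τ) := by
            apply mul_le_mul_of_nonneg_left ?_ (norm_nonneg _)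
            nlinarith [he₁, hdτ]
    have hsum : τ * (inner ℝ ς u : ℝ) = (inner ℝ ς (s₁ - x) : ℝ) + (inner ℝ ς (x + τ • u - s₁) : ℝ) := by
      rw [← inner_add_right, show s₁ - x + (x + τ • u - s₁) = τ • u by abel,
        real_inner_smul_right]
    have hmain : (2 * R * τ) * (inner ℝ ς u : ℝ) ≤ ‖ς‖ * (τ * B) ^ 2 + 2 * R * (‖ς‖ * (2 * ε' * τ)) := by
      have h6 := mul_le_mul_of_nonneg_left hB2 (show (0:ℝ) ≤ 2 * R by linarith)
      have h7 : (2 * R * τ) * (inner ℝ ς u : ℝ)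
          = 2 * R * (inner ℝ ς (s₁ - x) : ℝ) + 2 * R * (inner ℝ ς (x + τ • u - s₁) : ℝ) := by
        rw [show (2 * R * τ) * (inner ℝ ς u : ℝ) = 2 * R * (τ * (inner ℝ ς u : ℝ)) by ring, hsum]
        ring
      linarith
    have hfin : (2 * R * τ) * (inner ℝ ς u : ℝ) ≤ (2 * R * τ) * ϑ := by
      have hterm1 : ‖ς‖ * (τ * B) ^ 2 ≤ R * τ * ϑ := by
        have h8 : ‖ς‖ * (τ * B) ^ 2 ≤ C * (τ * B) ^ 2 :=
          mul_le_mul_of_nonneg_right (by rw [hC]; linarith) (sq_nonneg _)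
        have h9 := mul_le_mul_of_nonneg_left hτ1 hτ0.le
        -- τ * (τ * (C * B^2)) ≤ τ * (ϑ * R)
        nlinarith [h8, h9]
      have hterm2 : 2 * R * (‖ς‖ * (2 * ε' * τ)) ≤ R * τ * ϑ := by
        have h10 : ‖ς‖ * ε' ≤ C * ε' := mul_le_mul_of_nonneg_right (by rw [hC]; linarith) hε'0.le
        have h11 := mul_le_mul_of_nonneg_left hε'2 (mul_nonneg hR.le hτ0.le)
        -- (R*τ) * (ε' * (4*C)) ≤ (R*τ) * ϑ
        nlinarith [h10, h11, mul_nonneg (mul_nonneg hR.le hτ0.le) hε'0.le]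
      linarith
    exact le_of_mul_le_mul_left hfin (by positivity)
  exact h0

set_option maxHeartbeats 1000000 in
/-- inclusion T° ⊆ N. -/
lemma incl2 (hne : S.Nonempty) (hcl : IsClosed S) (hR : 0 < R) (hprox : IsProxRegular R S)
    (hx : x ∈ S) {ς : H}
    (hς : ∀ u : H, Tendsto (fun τ : ℝ => τ⁻¹ * infDist (x + τ • u) S) (𝓝[>] (0:ℝ)) (𝓝 0) →
      (inner ℝ ς u : ℝ) ≤ 0) :
    ς ∈ proxNormalCone S x := by
  rcases eq_or_ne ς 0 with rfl | hne0
  · exact ⟨1, one_pos, by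
      rw [smul_zero, add_zero]
      exact ⟨hx, fun s hs => by rw [dist_self]; exact dist_nonneg⟩⟩
  have hς0 : 0 < ‖ς‖ := norm_pos_iff.2 hne0
  -- key inner product estimate
  have hIP : ∀ u : H, (inner ℝ ς u : ℝ) ≤ ‖ς‖ *
      liminf (fun τ : ℝ => τ⁻¹ * infDist (x + τ • u) S) (𝓝[>] (0:ℝ)) := by
    intro u
    apply le_of_forall_pos_le_add
    intro ϑ hϑ
    set ε : ℝ := min 1 (ϑ / (‖ς‖ + 1)) with hε
    have hε0 : 0 < ε := lt_min one_pos (by positivity)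
    have hε1 : ε ≤ 1 := min_le_left _ _
    obtain ⟨w, hwT, hwd⟩ := approx hne hcl hR hprox hx u hε0 hε1
    have h1 : (inner ℝ ς w : ℝ) ≤ 0 := hς w hwT
    have h2 : (inner ℝ ς (u - w) : ℝ) ≤ ‖ς‖ * ‖u - w‖ := real_inner_le_norm _ _
    have h3 : (inner ℝ ς u : ℝ) = (inner ℝ ς w : ℝ) + (inner ℝ ς (u - w) : ℝ) := by
      rw [← inner_add_right, show w + (u - w) = u by abel]
    have h4 : ‖ς‖ * ‖u - w‖ ≤ ‖ς‖ *
        (liminf (fun τ : ℝ => τ⁻¹ * infDist (x + τ • u) S) (𝓝[>] (0:ℝ)) + ε) :=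
      mul_le_mul_of_nonneg_left hwd (norm_nonneg _)
    have h5 : ‖ς‖ * ε ≤ ϑ := by
      have h6 : ε ≤ ϑ / (‖ς‖ + 1) := min_le_right _ _
      have h7 : ‖ς‖ * ε ≤ ‖ς‖ * (ϑ / (‖ς‖ + 1)) := mul_le_mul_of_nonneg_left h6 (norm_nonneg _)
      have h8 : ‖ς‖ * (ϑ / (‖ς‖ + 1)) ≤ ϑ := by
        have h9 : ‖ς‖ / (‖ς‖ + 1) ≤ 1 := by
          rw [div_le_one (by positivity)]; linarith
        calc ‖ς‖ * (ϑ / (‖ς‖ + 1)) = ϑ * (‖ς‖ / (‖ς‖ + 1)) := by ring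
        _ ≤ ϑ * 1 := mul_le_mul_of_nonneg_left h9 hϑ.le
        _ = ϑ := mul_one ϑ
      linarith
    nlinarith [h1, h2, h3, h4]
  -- bound on the liminf for chords
  have hlamb : ∀ s ∈ S, liminf (fun τ : ℝ => τ⁻¹ * infDist (x + τ • (s - x)) S) (𝓝[>] (0:ℝ))
      ≤ 2 * ‖s - x‖ ^ 2 / R := by
    intro s hs
    have hlb : ∀ᶠ τ in 𝓝[>] (0:ℝ),
        (0:ℝ) ≤ (fun τ : ℝ => τ⁻¹ * infDist (x + τ • (s - x)) S) τ := by
      filter_upwards [self_mem_nhdsWithin] with τ hτ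
      exact g_nonneg x (s - x) hτ
    have hbdd2 : IsBoundedUnder (· ≥ ·) (𝓝[>] (0:ℝ))
        (fun τ : ℝ => τ⁻¹ * infDist (x + τ • (s - x)) S) := ⟨0, by rwa [eventually_map]⟩
    rcases le_or_gt ‖s - x‖ (R / 2) with hcase | hcase
    · have hfreq : ∃ᶠ τ in 𝓝[>] (0:ℝ),
          (fun τ : ℝ => τ⁻¹ * infDist (x + τ • (s - x)) S) τ ≤ 2 * ‖s - x‖ ^ 2 / R := by
        apply Eventually.frequently
        filter_upwards [Ioc_mem_nhdsGT (show (0:ℝ) < 1/2 by norm_num)] with τ hτ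
        have hcd := chord_dist hne hcl hR hprox hx hs hcase hτ.1 hτ.2
        calc τ⁻¹ * infDist (x + τ • (s - x)) S ≤ τ⁻¹ * (τ * ‖s - x‖ ^ 2 / R) :=
              mul_le_mul_of_nonneg_left hcd (inv_nonneg.2 hτ.1.le)
        _ = ‖s - x‖ ^ 2 / R := by
              rw [show τ⁻¹ * (τ * ‖s - x‖ ^ 2 / R) = (τ⁻¹ * τ) * (‖s - x‖ ^ 2 / R) by ring,
                inv_mul_cancel₀ (ne_of_gt hτ.1), one_mul]
        _ ≤ 2 * ‖s - x‖ ^ 2 / R :=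
              (div_le_div_iff_of_pos_right hR).2 (by nlinarith [sq_nonneg ‖s - x‖])
      exact liminf_le_of_frequently_le hfreq hbdd2
    · have hfreq : ∃ᶠ τ in 𝓝[>] (0:ℝ),
          (fun τ : ℝ => τ⁻¹ * infDist (x + τ • (s - x)) S) τ ≤ 2 * ‖s - x‖ ^ 2 / R := by
        apply Eventually.frequently
        filter_upwards [self_mem_nhdsWithin] with τ hτ
        calc τ⁻¹ * infDist (x + τ • (s - x)) S ≤ ‖s - x‖ := g_le_norm hx (s - x) hτ
        _ ≤ 2 * ‖s - x‖ ^ 2 / R := by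
              rw [le_div_iff₀ hR]
              nlinarith [norm_nonneg (s - x)]
      exact liminf_le_of_frequently_le hfreq hbdd2
  -- conclude
  rw [mem_proxNormalCone_iff x ς hx]
  refine ⟨R / (4 * ‖ς‖), div_pos hR (by linarith), fun s hs => ?_⟩
  have h9 := le_trans (hIP (s - x)) (mul_le_mul_of_nonneg_left (hlamb s hs) (norm_nonneg ς))
  -- h9 : ⟪ς, s-x⟫ ≤ ‖ς‖ * (2‖s-x‖²/R)
  rw [show 2 * (R / (4 * ‖ς‖)) * (inner ℝ ς (s - x) : ℝ)
      = (R / (2 * ‖ς‖)) * (inner ℝ ς (s - x) : ℝ) by field_simp; ring]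
  have h10 : (R / (2 * ‖ς‖)) * (inner ℝ ς (s - x) : ℝ)
      ≤ (R / (2 * ‖ς‖)) * (‖ς‖ * (2 * ‖s - x‖ ^ 2 / R)) :=
    mul_le_mul_of_nonneg_left h9 (by positivity)
  calc (R / (2 * ‖ς‖)) * (inner ℝ ς (s - x) : ℝ)
      ≤ (R / (2 * ‖ς‖)) * (‖ς‖ * (2 * ‖s - x‖ ^ 2 / R)) := h10
  _ = ‖s - x‖ ^ 2 := by field_simp

end Final2

end ProxReg

theorem stmt4 [CompleteSpace H] (S : Set H) (hne : S.Nonempty) (hcl : IsClosed S)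
    (R : ℝ) (hR : 0 < R) (hprox : IsProxRegular R S) (x : H) (hx : x ∈ S) :
    (∀ u : H, ∃ l : ℝ, Tendsto (fun τ : ℝ => τ⁻¹ * infDist (x + τ • u) S)
        (𝓝[>] (0:ℝ)) (𝓝 l)) ∧
    proxNormalCone S x =
      polarCone {u : H | Tendsto (fun τ : ℝ => τ⁻¹ * infDist (x + τ • u) S)
        (𝓝[>] (0:ℝ)) (𝓝 0)} := by
  constructor
  · intro u
    exact ⟨_, ProxReg.part1 hne hcl hR hprox hx u⟩
  · ext ς
    simp only [polarCone, Set.mem_setOf_eq]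
    constructor
    · intro hς u huT
      exact ProxReg.incl1 hne hcl hR hprox hx hς huT
    · intro hς
      exact ProxReg.incl2 hne hcl hR hprox hx (fun u hu => hς u hu)
end

section
/- Let (𝔗, 𝒯) be a measurable space with 𝒯 complete with respect to a σ-finite positive measure, let Y be a complete separable metric space, let Γ₁ : 𝔗 ⇉ Y be a 𝒯-measurable multimapping with nonempty closed values, and let Γ₂ : 𝔗 ⇉ Y have nonempty values with graph in 𝒯 ⊗ ℬ(Y). Then for any 𝒯-measurable selection z(·) of Γ₁(·) + Γ₂(·) (where Y is a separable Banach space for the sum), there exist 𝒯-measurable selections z₁ of Γ₁ and z₂ of Γ₂ such that z(t) = z₁(t) + z₂(t) for all t ∈ 𝔗. -/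
open MeasureTheory Set

namespace Stmt5Aux

variable {α : Type*}

/-- prefix of `f` of length `n` as a list -/
def pref (f : ℕ → ℕ) (n : ℕ) : List ℕ := (List.range n).map f

@[simp] lemma pref_zero (f : ℕ → ℕ) : pref f 0 = [] := rfl

lemma pref_succ (f : ℕ → ℕ) (n : ℕ) : pref f (n+1) = pref f n ++ [f n] := by
  simp [pref, List.range_succ]

@[simp] lemma length_pref (f : ℕ → ℕ) (n : ℕ) : (pref f n).length = n := by
  simp [pref]

lemma take_pref (f : ℕ → ℕ) {m n : ℕ} (h : m ≤ n) : (pref f n).take m = pref f m := by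
  simp [pref, ← List.map_take, List.take_range, Nat.min_eq_left h]

lemma pref_prefix (f : ℕ → ℕ) {m n : ℕ} (h : m ≤ n) : pref f m <+: pref f n := by
  rw [← take_pref f h]; exact List.take_prefix _ _

lemma getD_pref (f : ℕ → ℕ) {i n : ℕ} (h : i < n) : (pref f n).getD i 0 = f i := by
  rw [List.getD_eq_getElem _ _ (by simpa [pref] using h)]
  simp [pref]

lemma pref_succ_cons (f : ℕ → ℕ) (n : ℕ) :
    pref f (n+1) = f 0 :: pref (fun i => f (i+1)) n := by
  simp [pref, List.range_succ_eq_map, List.map_map, Function.comp_def]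

/-- The Souslin operation. -/
def souslin (S : List ℕ → Set α) : Set α := {x | ∃ f : ℕ → ℕ, ∀ n, x ∈ S (pref f n)}

/-- A scheme is regular if it is antitone with respect to prefixes. -/
def Reg (S : List ℕ → Set α) : Prop := ∀ ⦃s t : List ℕ⦄, s <+: t → S t ⊆ S s

/-- Regularization of a scheme. -/
def reg (S : List ℕ → Set α) (s : List ℕ) : Set α :=
  ⋂ (m : {m : ℕ // m ≤ s.length}), S (s.take m)

lemma reg_isReg (S : List ℕ → Set α) : Reg (reg S) := by
  rintro s t ⟨u, rfl⟩ x hx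
  simp only [reg, mem_iInter] at hx ⊢
  rintro ⟨m, hm⟩
  have := hx ⟨m, by simpa using le_trans hm (Nat.le_add_right _ _)⟩
  simpa [List.take_append_of_le_length hm] using this

lemma reg_subset (S : List ℕ → Set α) (s : List ℕ) : reg S s ⊆ S s := by
  intro x hx
  simpa using mem_iInter.1 hx ⟨s.length, le_rfl⟩

lemma souslin_reg (S : List ℕ → Set α) : souslin (reg S) = souslin S := by
  ext x
  constructor
  · rintro ⟨f, hf⟩; exact ⟨f, fun n => reg_subset S _ (hf n)⟩
  · rintro ⟨f, hf⟩
    refine ⟨f, fun n => mem_iInter.2 ?_⟩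
    rintro ⟨m, hm⟩
    rw [take_pref f (by simpa using hm)]
    exact hf m

lemma measurableSet_reg [MeasurableSpace α] {S : List ℕ → Set α}
    (hS : ∀ s, MeasurableSet (S s)) (s : List ℕ) : MeasurableSet (reg S s) :=
  MeasurableSet.iInter fun _ => hS _

/-- The bounded-branches approximations to a Souslin set. -/
def DSet (S : List ℕ → Set α) (s : List ℕ) : Set α :=
  {x | ∃ f : ℕ → ℕ, (∀ i < s.length, f i ≤ s.getD i 0) ∧ ∀ n, x ∈ S (pref f n)}

lemma DSet_nil (S : List ℕ → Set α) : DSet S [] = souslin S := by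
  ext x; simp [DSet, souslin]

lemma iUnion_DSet (S : List ℕ → Set α) (s : List ℕ) :
    ⋃ j, DSet S (s ++ [j]) = DSet S s := by
  ext x
  simp only [mem_iUnion, DSet, mem_setOf_eq]
  constructor
  · rintro ⟨j, f, hb, hf⟩
    refine ⟨f, fun i hi => ?_, hf⟩
    have := hb i (by simp; omega)
    rwa [List.getD_append _ _ _ _ hi] at this
  · rintro ⟨f, hb, hf⟩
    refine ⟨f s.length, f, fun i hi => ?_, hf⟩
    simp only [List.length_append, List.length_singleton] at hi
    rcases Nat.lt_or_ge i s.length with h | h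
    · rw [List.getD_append _ _ _ _ h]; exact hb i h
    · have : i = s.length := by omega
      subst this
      rw [List.getD_append_right _ _ _ _ h]
      simp

lemma DSet_mono_bound (S : List ℕ → Set α) (s : List ℕ) :
    Monotone (fun j => DSet S (s ++ [j])) := by
  intro j j' hj x
  rintro ⟨f, hb, hf⟩
  refine ⟨f, fun i hi => ?_, hf⟩
  simp only [List.length_append, List.length_singleton] at hi
  have := hb i (by simp [List.length_append]; omega)
  rcases Nat.lt_or_ge i s.length with h | h
  · rwa [List.getD_append _ _ _ _ h] at this ⊢
  · have : i = s.length := by omega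
    subst this
    rw [List.getD_append_right _ _ _ _ h] at *
    simp only [Nat.sub_self, List.getD_cons_zero] at *
    omega

end Stmt5Aux
open MeasureTheory Set
open scoped ENNReal
namespace Stmt5Aux
variable {α : Type*}

lemma getD_take {s : List ℕ} {i k : ℕ} (h : i < k) (hk : k ≤ s.length) :
    (s.take k).getD i 0 = s.getD i 0 := by
  have h1 : i < (s.take k).length := by simp; omega
  rw [List.getD_eq_getElem _ _ h1, List.getD_eq_getElem _ _ (by omega)]
  exact List.getElem_take

/-- König's lemma style argument: if `x` is in arbitrarily deep levels of the
bounded approximations, then `x` is in the Souslin set. -/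
lemma mem_souslin_of_bounded {S : List ℕ → Set α} (hreg : Reg S) (g : ℕ → ℕ) (x : α)
    (h : ∀ k, ∃ s : List ℕ, s.length = k ∧ (∀ i < k, s.getD i 0 ≤ g i) ∧ x ∈ S s) :
    x ∈ souslin S := by
  classical
  set V : Set (List ℕ) := {s | (∀ i < s.length, s.getD i 0 ≤ g i) ∧ x ∈ S s} with hV
  have Vtake : ∀ s ∈ V, ∀ k ≤ s.length, s.take k ∈ V := by
    rintro s ⟨hb, hx⟩ k hk
    refine ⟨fun i hi => ?_, hreg (List.take_prefix _ _) hx⟩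
    rw [List.length_take] at hi
    rw [getD_take (by omega) hk]
    exact hb i (by omega)
  set Q : List ℕ → Prop := fun s => ∀ k, s.length ≤ k → ∃ t ∈ V, s <+: t ∧ t.length = k with hQ
  have hQnil : Q [] := by
    intro k _
    obtain ⟨s, h1, h2, h3⟩ := h k
    exact ⟨s, ⟨fun i hi => h2 i (by omega), h3⟩, s.nil_prefix, h1⟩
  have hstep : ∀ s, Q s → ∃ j, Q (s ++ [j]) := by
    intro s hs
    by_contra hcon
    push_neg at hcon
    have hcon' : ∀ j, ∃ k, s.length + 1 ≤ k ∧ ∀ t ∈ V, (s ++ [j]) <+: t → t.length ≠ k := by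
      intro j
      obtain ⟨k, hk1, hk2⟩ := by
        have := hcon j
        rw [hQ] at this
        push_neg at this
        simpa [List.length_append] using this
      exact ⟨k, hk1, fun t ht hpre hlen => hk2 t ht hpre hlen⟩
    choose kf hkf1 hkf2 using hcon'
    obtain ⟨t, htV, hpre, hlen⟩ := hs ((Finset.range (g s.length + 1)).sup kf + (s.length + 1))
      (by omega)
    -- the (s.length)-th entry of t
    have hslt : s.length < t.length := by omega
    set j₀ : ℕ := t.getD s.length 0 with hj₀
    have hj₀le : j₀ ≤ g s.length := htV.1 _ hslt
    have hpre2 : (s ++ [j₀]) <+: t := by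
      obtain ⟨u, rfl⟩ := hpre
      have hu : u ≠ [] := by
        intro h0; rw [h0] at hslt; simp at hslt
      obtain ⟨a, u', rfl⟩ := List.exists_cons_of_ne_nil hu
      have : j₀ = a := by
        rw [hj₀, List.getD_append_right _ _ _ _ le_rfl]
        simp
      rw [this]
      exact ⟨u', by simp⟩
    have hj₀mem : j₀ ∈ Finset.range (g s.length + 1) := Finset.mem_range.2 (by omega)
    have hkle : kf j₀ ≤ t.length := by
      have := Finset.le_sup (f := kf) hj₀mem
      omega
    have hk1 := hkf1 j₀
    refine hkf2 j₀ (t.take (kf j₀)) (Vtake t htV _ hkle) ?_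
      (by rw [List.length_take]; omega)
    refine List.prefix_of_prefix_length_le hpre2 (List.take_prefix _ _) ?_
    rw [List.length_take, List.length_append]
    simp only [List.length_singleton]
    omega
  -- build the branch
  let next : {s : List ℕ // Q s} → {s : List ℕ // Q s} := fun s =>
    ⟨s.1 ++ [(hstep s.1 s.2).choose], (hstep s.1 s.2).choose_spec⟩
  let σ : ℕ → {s : List ℕ // Q s} := fun n => next^[n] ⟨[], hQnil⟩
  have hσs : ∀ n, σ (n + 1) = next (σ n) := fun n => Function.iterate_succ_apply' _ _ _
  have hσlen : ∀ n, (σ n).1.length = n := by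
    intro n; induction n with
    | zero => rfl
    | succ n ih => rw [hσs]; simp [next, ih]
  let f : ℕ → ℕ := fun n => (σ (n + 1)).1.getD n 0
  have hσpref : ∀ n, (σ n).1 = pref f n := by
    intro n; induction n with
    | zero => rfl
    | succ n ih =>
      have h1 : (σ (n+1)).1 = (σ n).1 ++ [(hstep (σ n).1 (σ n).2).choose] := by
        rw [hσs]
      have h2 : f n = (hstep (σ n).1 (σ n).2).choose := by
        show (σ (n+1)).1.getD n 0 = _
        rw [h1, List.getD_append_right _ _ _ _ (by rw [hσlen]), hσlen]
        simp
      calc (σ (n+1)).1 = (σ n).1 ++ [(hstep (σ n).1 (σ n).2).choose] := h1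
        _ = (σ n).1 ++ [f n] := congrArg (fun a => (σ n).1 ++ [a]) h2.symm
        _ = pref f n ++ [f n] := by rw [ih]
        _ = pref f (n+1) := (pref_succ f n).symm
  refine ⟨f, fun n => ?_⟩
  obtain ⟨t, htV, hpre, hlen⟩ := (σ n).2 n (le_of_eq (hσlen n))
  have ht : (σ n).1 = t := hpre.eq_of_length (by rw [hσlen, hlen])
  rw [← hσpref n, ht]
  exact htV.2

/-- Inner approximation of a Souslin set by measurable subsets, for a finite measure. -/
lemma exists_inner [MeasurableSpace α] (μ : Measure α) [IsFiniteMeasure μ]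
    {S : List ℕ → Set α} (hreg : Reg S) (hS : ∀ s, MeasurableSet (S s))
    {ε : ℝ≥0∞} (hε : 0 < ε) (hε' : ε ≠ ⊤) :
    ∃ K, MeasurableSet K ∧ K ⊆ souslin S ∧ μ (souslin S) ≤ μ K + ε := by
  classical
  have hch : ∀ (s : List ℕ) (k : ℕ),
      ∃ j, μ (DSet S s) ≤ μ (DSet S (s ++ [j])) + ε / 2 ^ (k + 1) := by
    intro s k
    have h2top : (2 : ℝ≥0∞) ^ (k + 1) ≠ ⊤ := ENNReal.pow_ne_top ENNReal.ofNat_ne_top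
    have hεk : (0 : ℝ≥0∞) < ε / 2 ^ (k + 1) := ENNReal.div_pos hε.ne' h2top
    have hεktop : ε / 2 ^ (k + 1) ≠ ⊤ :=
      (ENNReal.div_lt_top hε' (pow_ne_zero _ (by norm_num))).ne
    rcases le_or_gt (μ (DSet S s)) (ε / 2 ^ (k + 1)) with hle | hlt
    · exact ⟨0, le_trans hle le_add_self⟩
    · have hfin : μ (DSet S s) ≠ ⊤ := measure_ne_top μ _
      have hsup : μ (DSet S s) = ⨆ j, μ (DSet S (s ++ [j])) := by
        rw [← Directed.measure_iUnion ((DSet_mono_bound S s).directed_le), iUnion_DSet]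
      have h1 : μ (DSet S s) - ε / 2 ^ (k + 1) < ⨆ j, μ (DSet S (s ++ [j])) := by
        rw [← hsup]
        exact ENNReal.sub_lt_self hfin (hεk.trans hlt).ne' hεk.ne'
      obtain ⟨j, hj⟩ := lt_iSup_iff.1 h1
      rw [ENNReal.sub_lt_iff_lt_right hεktop hlt.le] at hj
      exact ⟨j, hj.le⟩
  choose ch hch using hch
  let G : ℕ → List ℕ := fun k => Nat.rec [] (fun k s => s ++ [ch s k]) k
  have hG0 : G 0 = [] := rfl
  have hGs : ∀ k, G (k + 1) = G k ++ [ch (G k) k] := fun _ => rfl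
  have hGlen : ∀ k, (G k).length = k := by
    intro k; induction k with
    | zero => rfl
    | succ k ih => rw [hGs]; simp [ih]
  set g : ℕ → ℕ := fun i => (G (i + 1)).getD i 0 with hg
  have hGpref : ∀ k, G k = pref g k := by
    intro k; induction k with
    | zero => rfl
    | succ k ih =>
      have h2 : g k = ch (G k) k := by
        rw [hg]; simp only []
        rw [hGs, List.getD_append_right _ _ _ _ (by rw [hGlen]), hGlen]
        simp
      calc G (k+1) = G k ++ [ch (G k) k] := hGs k
        _ = G k ++ [g k] := (congrArg (fun a => G k ++ [a]) h2).symm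
        _ = pref g k ++ [g k] := by rw [ih]
        _ = pref g (k+1) := (pref_succ g k).symm
  -- invariant
  have hinv : ∀ k, μ (souslin S) + ε / 2 ^ k ≤ μ (DSet S (G k)) + ε := by
    intro k; induction k with
    | zero => rw [hG0, DSet_nil]; simp
    | succ k ih =>
      have hstep := hch (G k) k
      have hdiv : ε / 2 ^ (k + 1) = ε / 2 ^ k / 2 := by
        rw [div_eq_mul_inv, div_eq_mul_inv, div_eq_mul_inv, pow_succ,
          ENNReal.mul_inv (Or.inl (pow_ne_zero _ two_ne_zero)) (Or.inr two_ne_zero),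
          mul_assoc]
      have hhalf : ε / 2 ^ (k + 1) + ε / 2 ^ (k + 1) = ε / 2 ^ k := by
        rw [hdiv]
        exact ENNReal.add_halves _
      have hfin : ε / 2 ^ (k + 1) ≠ ⊤ :=
        (ENNReal.div_lt_top hε' (pow_ne_zero _ (by norm_num))).ne
      rw [← ENNReal.add_le_add_iff_right hfin]
      calc μ (souslin S) + ε / 2 ^ (k + 1) + ε / 2 ^ (k + 1)
          = μ (souslin S) + ε / 2 ^ k := by rw [add_assoc, hhalf]
        _ ≤ μ (DSet S (G k)) + ε := ih
        _ ≤ (μ (DSet S (G (k + 1))) + ε / 2 ^ (k + 1)) + ε := by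
            rw [hGs]; exact add_le_add hstep le_rfl
        _ = μ (DSet S (G (k + 1))) + ε + ε / 2 ^ (k + 1) := by ring
  have hinv' : ∀ k, μ (souslin S) ≤ μ (DSet S (G k)) + ε :=
    fun k => le_trans le_self_add (hinv k)
  -- the decreasing measurable envelopes
  set B : ℕ → Set α := fun k =>
    ⋃ (s : List ℕ) (_ : s.length = k ∧ ∀ i < k, s.getD i 0 ≤ g i), S s with hB
  have hBmeas : ∀ k, MeasurableSet (B k) :=
    fun k => MeasurableSet.iUnion fun s => MeasurableSet.iUnion fun _ => hS s
  have hDB : ∀ k, DSet S (G k) ⊆ B k := by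
    rintro k x ⟨f, hb, hf⟩
    refine mem_iUnion.2 ⟨pref f k, mem_iUnion.2 ⟨⟨by simp, fun i hi => ?_⟩, hf k⟩⟩
    rw [getD_pref f hi]
    have := hb i (by rw [hGlen]; exact hi)
    rwa [hGpref, getD_pref g hi] at this
  have hBanti : ∀ k, B (k + 1) ⊆ B k := by
    intro k x hx
    obtain ⟨s, hs⟩ := mem_iUnion.1 hx
    obtain ⟨⟨hlen, hbd⟩, hxs⟩ := mem_iUnion.1 hs
    refine mem_iUnion.2 ⟨s.take k, mem_iUnion.2 ⟨⟨by simp [hlen], fun i hi => ?_⟩,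
      hreg (List.take_prefix _ _) hxs⟩⟩
    rw [getD_take hi (by omega)]
    exact hbd i (by omega)
  have hBanti' : Antitone B := antitone_nat_of_succ_le hBanti
  set K : Set α := ⋂ k, B k with hK
  have hKmeas : MeasurableSet K := MeasurableSet.iInter fun k => hBmeas k
  have hKsub : K ⊆ souslin S := by
    intro x hx
    refine mem_souslin_of_bounded hreg g x fun k => ?_
    have := mem_iInter.1 hx k
    obtain ⟨s, hs⟩ := mem_iUnion.1 this
    obtain ⟨⟨h1, h2⟩, h3⟩ := mem_iUnion.1 hs
    exact ⟨s, h1, h2, h3⟩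
  refine ⟨K, hKmeas, hKsub, ?_⟩
  have hKmu : μ K = ⨅ k, μ (B k) := by
    refine Directed.measure_iInter (fun k => (hBmeas k).nullMeasurableSet)
      (hBanti'.directed_ge) ⟨0, measure_ne_top μ _⟩
  calc μ (souslin S) ≤ ⨅ k, (μ (B k) + ε) :=
        le_iInf fun k => le_trans (hinv' k) (add_le_add (measure_mono (hDB k)) le_rfl)
    _ = (⨅ k, μ (B k)) + ε := by rw [← ENNReal.iInf_add]
    _ = μ K + ε := by rw [hKmu]

end Stmt5Aux
open scoped ENNReal
namespace Stmt5Aux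
variable {α : Type*}

/-- Marczewski's theorem: a σ-algebra complete with respect to a σ-finite measure is
closed under the Souslin operation. -/
theorem measurableSet_souslin [MeasurableSpace α] (μ : Measure α) [SigmaFinite μ]
    (hc : μ.IsComplete) {S : List ℕ → Set α} (hS : ∀ s, MeasurableSet (S s)) :
    MeasurableSet (souslin S) := by
  rw [← souslin_reg]
  have hreg : Reg (reg S) := reg_isReg S
  have hS' : ∀ s, MeasurableSet (reg S s) := measurableSet_reg hS
  set A := souslin (reg S) with hA
  have hinner : ∀ (n m : ℕ), ∃ K, MeasurableSet K ∧ K ⊆ A ∧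
      (μ.restrict (spanningSets μ n)) A ≤
        (μ.restrict (spanningSets μ n)) K + ((m : ℝ≥0∞) + 1)⁻¹ := by
    intro n m
    haveI : IsFiniteMeasure (μ.restrict (spanningSets μ n)) := ⟨by
      rw [Measure.restrict_apply_univ]; exact measure_spanningSets_lt_top μ n⟩
    refine exists_inner _ hreg hS' (ENNReal.inv_pos.2 (by simp)) (ENNReal.inv_ne_top.2 (by simp))
  choose K hK1 hK2 hK3 using hinner
  set L : Set α := ⋃ (n : ℕ) (m : ℕ), K n m with hL
  have hLmeas : MeasurableSet L :=
    MeasurableSet.iUnion fun n => MeasurableSet.iUnion fun m => hK1 n m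
  have hLsub : L ⊆ A := iUnion_subset fun n => iUnion_subset fun m => hK2 n m
  have h1 : ∀ (n m : ℕ), (μ.restrict (spanningSets μ n)) (A \ L) ≤ ((m : ℝ≥0∞) + 1)⁻¹ := by
    intro n m
    set ν := μ.restrict (spanningSets μ n) with hν
    haveI : IsFiniteMeasure ν := ⟨by
      rw [Measure.restrict_apply_univ]; exact measure_spanningSets_lt_top μ n⟩
    have e1 : ν (A ∩ K n m) + ν (A \ K n m) = ν A := measure_inter_add_diff A (hK1 n m)
    have e2 : A ∩ K n m = K n m := inter_eq_self_of_subset_right (hK2 n m)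
    have e3 : ν (K n m) + ν (A \ K n m) ≤ ν (K n m) + ((m : ℝ≥0∞) + 1)⁻¹ :=
      calc ν (K n m) + ν (A \ K n m) = ν (A ∩ K n m) + ν (A \ K n m) := by rw [e2]
        _ = ν A := e1
        _ ≤ ν (K n m) + ((m : ℝ≥0∞) + 1)⁻¹ := hK3 n m
    have e4 : ν (A \ K n m) ≤ ((m : ℝ≥0∞) + 1)⁻¹ :=
      (ENNReal.add_le_add_iff_left (measure_ne_top ν _)).1 e3
    exact le_trans (measure_mono (diff_subset_diff_right
      (subset_iUnion₂ (s := fun n m => K n m) n m))) e4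
  have h2 : ∀ n, (μ.restrict (spanningSets μ n)) (A \ L) = 0 := by
    intro n
    by_contra hx
    obtain ⟨m, hm⟩ := ENNReal.exists_inv_nat_lt hx
    have : (μ.restrict (spanningSets μ n)) (A \ L) ≤ (m : ℝ≥0∞)⁻¹ := by
      refine le_trans (h1 n m) (ENNReal.inv_le_inv.2 ?_)
      exact_mod_cast Nat.le_succ m
    exact absurd (lt_of_le_of_lt this hm) (lt_irrefl _)
  have hnull : μ (A \ L) = 0 := by
    have hcover : A \ L = ⋃ n, (A \ L) ∩ spanningSets μ n := by
      rw [← inter_iUnion, iUnion_spanningSets, inter_univ]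
    rw [hcover]
    refine measure_iUnion_null fun n => ?_
    rw [← Measure.restrict_apply' (measurableSet_spanningSets μ n)]
    exact h2 n
  have : A = L ∪ (A \ L) := (union_diff_cancel hLsub).symm
  rw [this]
  exact hLmeas.union (hc.out _ hnull)

end Stmt5Aux
open scoped ENNReal
set_option linter.unusedSectionVars false
namespace Stmt5Aux

section Rect
variable {𝔗 Y : Type*} [MeasurableSpace 𝔗] [MetricSpace Y] [MeasurableSpace Y] [BorelSpace Y]

/-- Schemes consisting of measurable rectangles with closed second factor. -/
def GoodRect (R : List ℕ → Set (𝔗 × Y)) : Prop :=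
  ∀ s, ∃ T C, MeasurableSet T ∧ IsClosed C ∧ R s = T ×ˢ C

/-- Sets obtained by the Souslin operation from good rectangles. -/
def IsSR (G : Set (𝔗 × Y)) : Prop := ∃ R, GoodRect R ∧ G = souslin R

lemma iInter_prod_rect {ι : Sort*} (T : ι → Set 𝔗) (C : ι → Set Y) :
    ⋂ i, (T i ×ˢ C i) = (⋂ i, T i) ×ˢ (⋂ i, C i) := by
  ext ⟨t, y⟩
  simp only [mem_iInter, mem_prod, forall_and]

lemma goodRect_iInter {ι : Sort*} [Countable ι] (R : ι → Set (𝔗 × Y))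
    (h : ∀ i, ∃ T C, MeasurableSet T ∧ IsClosed C ∧ R i = T ×ˢ C) :
    ∃ T C, MeasurableSet T ∧ IsClosed C ∧ ⋂ i, R i = T ×ˢ C := by
  choose T C h1 h2 h3 using h
  refine ⟨⋂ i, T i, ⋂ i, C i, MeasurableSet.iInter h1, isClosed_iInter h2, ?_⟩
  rw [iInter_congr h3, iInter_prod_rect]

lemma GoodRect.reg {R : List ℕ → Set (𝔗 × Y)} (h : GoodRect R) : GoodRect (Stmt5Aux.reg R) :=
  fun _ => goodRect_iInter _ fun _ => h _

lemma souslin_const (c : Set (𝔗 × Y)) : souslin (fun _ : List ℕ => c) = c := by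
  ext x
  exact ⟨fun ⟨f, hf⟩ => hf 0, fun h => ⟨fun _ => 0, fun _ => h⟩⟩

lemma isSR_const_rect {T : Set 𝔗} {C : Set Y} (hT : MeasurableSet T) (hC : IsClosed C) :
    IsSR (T ×ˢ C) :=
  ⟨fun _ => T ×ˢ C, fun _ => ⟨T, C, hT, hC, rfl⟩, (souslin_const _).symm⟩

/-- prepend a value to a branch -/
def cons0 (k : ℕ) (f : ℕ → ℕ) : ℕ → ℕ := fun i => match i with | 0 => k | (i+1) => f i

lemma pref_cons0 (k : ℕ) (f : ℕ → ℕ) (n : ℕ) :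
    pref (cons0 k f) (n + 1) = k :: pref f n := by
  rw [pref_succ_cons]; rfl

lemma isSR_iUnion {A : ℕ → Set (𝔗 × Y)} (h : ∀ k, IsSR (A k)) : IsSR (⋃ k, A k) := by
  choose R hgood hA using h
  refine ⟨fun s => match s with | [] => univ | (k :: u) => R k u, ?_, ?_⟩
  · rintro (_ | ⟨k, u⟩)
    · exact ⟨univ, univ, MeasurableSet.univ, isClosed_univ, univ_prod_univ.symm⟩
    · exact hgood k u
  · ext x
    simp only [mem_iUnion, souslin, mem_setOf_eq]
    constructor
    · rintro ⟨k, hk⟩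
      rw [hA k] at hk
      obtain ⟨f, hf⟩ := hk
      refine ⟨cons0 k f, fun n => ?_⟩
      match n with
      | 0 => exact mem_univ x
      | (n+1) => rw [pref_cons0]; exact hf n
    · rintro ⟨f, hf⟩
      refine ⟨f 0, ?_⟩
      rw [hA (f 0)]
      refine ⟨fun i => f (i+1), fun n => ?_⟩
      have := hf (n+1)
      rwa [pref_succ_cons] at this

lemma isSR_union {X Z : Set (𝔗 × Y)} (h1 : IsSR X) (h2 : IsSR Z) : IsSR (X ∪ Z) := by
  have : X ∪ Z = ⋃ k : ℕ, (if k = 0 then X else Z) := by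
    ext x
    simp only [mem_union, mem_iUnion]
    constructor
    · rintro (hx | hx)
      exacts [⟨0, by simpa⟩, ⟨1, by simpa⟩]
    · rintro ⟨k, hk⟩
      by_cases h : k = 0
      · left; simpa [h] using hk
      · right; simpa [h] using hk
  rw [this]
  exact isSR_iUnion fun k => by by_cases h : k = 0 <;> simp [h, h1, h2]

lemma isSR_iInter {A : ℕ → Set (𝔗 × Y)} (h : ∀ k, IsSR (A k)) : IsSR (⋂ k, A k) := by
  classical
  choose R hgood hA using h
  set p : ℕ ≃ ℕ × ℕ := (Denumerable.eqv (ℕ × ℕ)).symm with hp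
  set dec : ℕ → ℕ → List ℕ → List ℕ :=
    fun k n s => (List.range n).map (fun i => s.getD (p.symm (k, i)) 0) with hdec
  have hdecpref : ∀ (k n N : ℕ) (f : ℕ → ℕ), (∀ i < n, p.symm (k, i) < N) →
      dec k n (pref f N) = pref (fun i => f (p.symm (k, i))) n := by
    intro k n N f hcond
    refine List.map_congr_left fun i hi => ?_
    rw [List.mem_range] at hi
    exact getD_pref f (hcond i hi)
  set S : List ℕ → Set (𝔗 × Y) := fun s =>
    ⋂ (q : {q : ℕ × ℕ // ∀ i < q.2, p.symm (q.1, i) < s.length}),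
      R q.1.1 (dec q.1.1 q.1.2 s) with hS
  refine ⟨S, fun s => goodRect_iInter _ fun q => hgood _ _, ?_⟩
  ext x
  simp only [mem_iInter]
  constructor
  · intro hx
    have hx' : ∀ k, ∃ f : ℕ → ℕ, ∀ n, x ∈ R k (pref f n) := by
      intro k; have := hx k; rwa [hA k] at this
    choose F hF using hx'
    refine ⟨fun j => F (p j).1 (p j).2, fun N => ?_⟩
    rw [hS]
    refine mem_iInter.2 ?_
    rintro ⟨⟨k, n⟩, hq⟩
    simp only [length_pref] at hq
    have hdeq : dec k n (pref (fun j => F (p j).1 (p j).2) N) = pref (F k) n := by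
      rw [hdecpref k n N _ hq]
      refine List.map_congr_left fun i hi => ?_
      simp [Equiv.apply_symm_apply]
    simp only []
    rw [hdeq]
    exact hF k n
  · intro hx k
    rw [hA k]
    obtain ⟨f, hf⟩ := hx
    refine ⟨fun i => f (p.symm (k, i)), fun m => ?_⟩
    set N : ℕ := (Finset.range m).sup (fun i => p.symm (k, i)) + 1 with hN
    have hcond : ∀ i < m, p.symm (k, i) < N :=
      fun i hi => Nat.lt_succ_of_le (Finset.le_sup (f := fun i => p.symm (k, i)) (Finset.mem_range.2 hi))
    have hxN := hf N
    rw [hS] at hxN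
    have := mem_iInter.1 hxN ⟨(k, m), by simpa using hcond⟩
    rwa [hdecpref k m N f hcond] at this

lemma isSR_empty : IsSR (∅ : Set (𝔗 × Y)) := by
  have : (∅ : Set (𝔗 × Y)) = (∅ : Set 𝔗) ×ˢ (∅ : Set Y) := by simp
  rw [this]
  exact isSR_const_rect MeasurableSet.empty isClosed_empty

lemma isSR_prod_open {T : Set 𝔗} {U : Set Y} (hT : MeasurableSet T) (hU : IsOpen U) :
    IsSR (T ×ˢ U) := by
  obtain ⟨F, hF1, _, hF3, _⟩ := hU.exists_iUnion_isClosed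
  have : T ×ˢ U = ⋃ n, T ×ˢ F n := by rw [← prod_iUnion, hF3]
  rw [this]
  exact isSR_iUnion fun n => isSR_const_rect hT (hF1 n)

lemma isSR_prod_borel {B : Set Y} (hB : MeasurableSet B) :
    ∀ T : Set 𝔗, MeasurableSet T → IsSR (T ×ˢ B) ∧ IsSR (T ×ˢ Bᶜ) := by
  have hB' : MeasurableSet[MeasurableSpace.generateFrom {s : Set Y | IsOpen s}] B := by
    have h2 : MeasurableSet[borel Y] B := by
      rw [← BorelSpace.measurable_eq (α := Y)]; exact hB
    exact h2
  refine MeasurableSpace.generateFrom_induction {s : Set Y | IsOpen s}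
    (fun B _ => ∀ T : Set 𝔗, MeasurableSet T → IsSR (T ×ˢ B) ∧ IsSR (T ×ˢ Bᶜ))
    ?_ ?_ ?_ ?_ B hB'
  · intro U hU _ T hT
    exact ⟨isSR_prod_open hT hU, isSR_const_rect hT (IsOpen.isClosed_compl hU)⟩
  · intro T hT
    constructor
    · rw [prod_empty]; exact isSR_empty
    · rw [compl_empty]
      exact isSR_const_rect hT isClosed_univ
  · intro t ht iht T hT
    rw [compl_compl]
    exact ⟨(iht T hT).2, (iht T hT).1⟩
  · intro s hs ihs T hT
    constructor
    · rw [prod_iUnion]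
      exact isSR_iUnion fun n => (ihs n T hT).1
    · have : T ×ˢ (⋃ i, s i)ᶜ = ⋂ i, T ×ˢ (s i)ᶜ := by
        rw [compl_iUnion, prod_iInter]
      rw [this]
      exact isSR_iInter fun n => (ihs n T hT).2

/-- Every measurable set in the product σ-algebra is a Souslin set over
measurable rectangles with closed fibers. -/
theorem isSR_of_measurableSet {G : Set (𝔗 × Y)} (hG : MeasurableSet G) : IsSR G := by
  have hG' : MeasurableSet[MeasurableSpace.generateFrom
      (image2 (· ×ˢ ·) {s : Set 𝔗 | MeasurableSet s} {t : Set Y | MeasurableSet t})] G := by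
    rw [generateFrom_prod]
    exact hG
  have main : IsSR G ∧ IsSR Gᶜ := by
    refine MeasurableSpace.generateFrom_induction _
      (fun G _ => IsSR G ∧ IsSR Gᶜ) ?_ ?_ ?_ ?_ G hG'
    · rintro t ⟨A, hA, B, hB, rfl⟩ _
      refine ⟨(isSR_prod_borel hB A hA).1, ?_⟩
      have hcompl : (A ×ˢ B)ᶜ = Aᶜ ×ˢ (univ : Set Y) ∪ A ×ˢ Bᶜ := by
        ext ⟨t, y⟩
        simp only [mem_compl_iff, mem_prod, mem_union, mem_univ, and_true]
        tauto
      rw [hcompl]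
      exact isSR_union (isSR_const_rect hA.compl isClosed_univ) (isSR_prod_borel hB A hA).2
    · refine ⟨isSR_empty, ?_⟩
      rw [compl_empty, ← univ_prod_univ]
      exact isSR_const_rect MeasurableSet.univ isClosed_univ
    · rintro t ht ⟨h1, h2⟩
      rw [compl_compl]
      exact ⟨h2, h1⟩
    · intro s hs ihs
      refine ⟨isSR_iUnion fun n => (ihs n).1, ?_⟩
      rw [compl_iUnion]
      exact isSR_iInter fun n => (ihs n).2
  exact main.1

end Rect
end Stmt5Aux
open MeasureTheory Set Filter
open scoped ENNReal Topology
namespace Stmt5Aux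

variable {𝔗 Y : Type*}

/-- The von Neumann–Aumann measurable selection theorem. -/
theorem exists_measurable_selection [MeasurableSpace 𝔗] (μ : Measure 𝔗)
    [SigmaFinite μ] (hc : μ.IsComplete) [MetricSpace Y] [CompleteSpace Y]
    [SecondCountableTopology Y] [MeasurableSpace Y] [BorelSpace Y]
    {G : Set (𝔗 × Y)} (hG : MeasurableSet G) (hne : ∀ t, ∃ y, (t, y) ∈ G) :
    ∃ σ : 𝔗 → Y, Measurable σ ∧ ∀ t, (t, σ t) ∈ G := by
  classical
  rcases isEmpty_or_nonempty 𝔗 with h𝔗 | h𝔗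
  · refine ⟨fun t => (hne t).choose, ?_, fun t => (hne t).choose_spec⟩
    intro s _
    rw [Set.eq_empty_of_isEmpty ((fun t => (hne t).choose) ⁻¹' s)]
    exact MeasurableSet.empty
  haveI : Nonempty Y := ⟨(hne (Classical.arbitrary 𝔗)).choose⟩
  obtain ⟨u, hu⟩ := TopologicalSpace.exists_dense_seq Y
  obtain ⟨R₀, hR₀good, hGR₀⟩ := isSR_of_measurableSet hG
  set p : ℕ ≃ ℕ × ℕ := (Denumerable.eqv (ℕ × ℕ)).symm with hp
  -- the diameter-refined scheme
  set R₁ : List ℕ → Set (𝔗 × Y) := fun s =>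
    R₀ (s.map (fun a => (p a).1)) ∩
      ((univ : Set 𝔗) ×ˢ ⋂ (j : {j : ℕ // j < s.length}),
        Metric.closedBall (u ((p (s.getD j 0)).2)) ((1/2 : ℝ) ^ (j : ℕ))) with hR₁
  have hR₁good : GoodRect R₁ := by
    intro s
    obtain ⟨T, C, hT, hC, hTC⟩ := hR₀good (s.map (fun a => (p a).1))
    refine ⟨T ∩ univ, C ∩ ⋂ (j : {j : ℕ // j < s.length}),
      Metric.closedBall (u ((p (s.getD j 0)).2)) ((1/2 : ℝ) ^ (j : ℕ)),
      hT.inter MeasurableSet.univ,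
      hC.inter (isClosed_iInter fun j => Metric.isClosed_closedBall), ?_⟩
    rw [hR₁, ← Set.prod_inter_prod, ← hTC]
  -- souslin R₁ = souslin R₀
  have hsous : souslin R₁ = souslin R₀ := by
    ext x
    constructor
    · rintro ⟨f, hf⟩
      refine ⟨fun i => (p (f i)).1, fun n => ?_⟩
      have := (hf n).1
      have heq : (pref f n).map (fun a => (p a).1) = pref (fun i => (p (f i)).1) n := by
        simp [pref, List.map_map, Function.comp_def]
      rwa [heq] at this
    · rintro ⟨f, hf⟩
      have hx2 : ∀ j : ℕ, ∃ i, dist x.2 (u i) < (1/2 : ℝ) ^ j := by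
        intro j
        exact Metric.denseRange_iff.1 hu x.2 _ (by positivity)
      choose I hI using hx2
      refine ⟨fun j => p.symm (f j, I j), fun n => ?_⟩
      constructor
      · have heq : (pref (fun j => p.symm (f j, I j)) n).map (fun a => (p a).1) = pref f n := by
          simp [pref, List.map_map, Function.comp_def, Equiv.apply_symm_apply]
        rw [heq]
        exact hf n
      · refine ⟨mem_univ _, mem_iInter.2 ?_⟩
        rintro ⟨j, hj⟩
        simp only [length_pref] at hj
        rw [getD_pref _ hj]
        simp only [Equiv.apply_symm_apply]
        exact Metric.mem_closedBall.2 (le_of_lt (hI j))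
  set R : List ℕ → Set (𝔗 × Y) := reg R₁ with hRdef
  have hRgood : GoodRect R := hR₁good.reg
  have hRreg : Reg R := reg_isReg R₁
  have hGsous : G = souslin R := by rw [hRdef, souslin_reg, hsous, ← hGR₀]
  choose T C hTmeas hCclosed hRTC using hRgood
  -- the first-coordinate projections
  set T'' : List ℕ → Set 𝔗 := fun s => Prod.fst '' R s with hT''
  have hT''meas : ∀ s, MeasurableSet (T'' s) := by
    intro s
    rcases eq_empty_or_nonempty (C s) with hCe | hCne
    · have : T'' s = ∅ := by
        show Prod.fst '' R s = ∅
        rw [hRTC s, hCe]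
        simp
      rw [this]; exact MeasurableSet.empty
    · have : T'' s = T s := by
        show Prod.fst '' R s = T s
        rw [hRTC s, Set.fst_image_prod _ hCne]
      rw [this]; exact hTmeas s
  have hT''reg : ∀ ⦃s s' : List ℕ⦄, s <+: s' → T'' s' ⊆ T'' s :=
    fun s s' hss => image_mono (hRreg hss)
  -- the alive sets
  set L : List ℕ → Set 𝔗 := fun s => souslin (fun v => T'' (s ++ v)) with hL
  have hLmeas : ∀ s, MeasurableSet (L s) :=
    fun s => measurableSet_souslin μ hc (fun v => hT''meas _)
  have hLT : ∀ s, L s ⊆ T'' s := by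
    intro s t ht
    obtain ⟨f, hf⟩ := ht
    simpa using hf 0
  have hLunion : ∀ s, L s = ⋃ j, L (s ++ [j]) := by
    intro s
    ext t
    simp only [mem_iUnion]
    constructor
    · rintro ⟨f, hf⟩
      refine ⟨f 0, fun i => f (i+1), fun n => ?_⟩
      have := hf (n+1)
      rw [pref_succ_cons] at this
      simpa [List.append_assoc] using this
    · rintro ⟨j, f, hf⟩
      refine ⟨cons0 j f, fun n => ?_⟩
      match n with
      | 0 =>
        have := hf 0
        simp only [pref_zero, List.append_nil] at this ⊢
        exact hT''reg (List.prefix_append s [j]) this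
      | (n+1) =>
        rw [pref_cons0]
        have := hf n
        simpa [List.append_assoc] using this
  have hLnil : ∀ t, t ∈ L [] := by
    intro t
    obtain ⟨y, hy⟩ := hne t
    rw [hGsous] at hy
    obtain ⟨f, hf⟩ := hy
    exact ⟨f, fun n => by simpa using ⟨(t, y), hf n, rfl⟩⟩
  -- the minimal-branch construction
  set nextj : 𝔗 → List ℕ → ℕ := fun t s => sInf {j | t ∈ L (s ++ [j])} with hnextj
  set φ : 𝔗 → ℕ → List ℕ :=
    fun t n => Nat.rec [] (fun _ s => s ++ [nextj t s]) n with hφ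
  have hφ0 : ∀ t, φ t 0 = [] := fun _ => rfl
  have hφs : ∀ t n, φ t (n + 1) = φ t n ++ [nextj t (φ t n)] := fun _ _ => rfl
  have hφmem : ∀ t n, t ∈ L (φ t n) := by
    intro t n
    induction n with
    | zero => exact hLnil t
    | succ n ih =>
      rw [hLunion] at ih
      obtain ⟨j, hj⟩ := mem_iUnion.1 ih
      have hne' : {j | t ∈ L (φ t n ++ [j])}.Nonempty := ⟨j, hj⟩
      have := Nat.sInf_mem hne'
      rw [hφs]
      exact this
  have hφlen : ∀ t n, (φ t n).length = n := by
    intro t n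
    induction n with
    | zero => rfl
    | succ n ih => rw [hφs]; simp [ih]
  have hφpref : ∀ t {m n : ℕ}, m ≤ n → φ t m <+: φ t n := by
    intro t m n hmn
    induction n with
    | zero => rw [Nat.le_zero.1 hmn]
    | succ n ih =>
      rcases Nat.lt_or_ge m (n+1) with h | h
      · refine (ih (by omega)).trans ?_
        rw [hφs]
        exact ⟨[nextj t (φ t n)], rfl⟩
      · have : m = n + 1 := by omega
        rw [this]
  -- measurability of the approximations
  have hnextjmeas : ∀ (s : List ℕ) (j : ℕ), MeasurableSet {t | nextj t s = j} := by
    intro s j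
    rcases eq_or_ne j 0 with rfl | hj
    · have : {t | nextj t s = 0} = L (s ++ [0]) ∪ ⋂ i : ℕ, (L (s ++ [i]))ᶜ := by
        ext t
        simp only [hnextj, mem_setOf_eq, mem_union, mem_iInter, mem_compl_iff]
        rw [Nat.sInf_eq_zero]
        constructor
        · rintro (h0 | hempty)
          · exact Or.inl h0
          · refine Or.inr fun i hi => ?_
            rw [eq_empty_iff_forall_notMem] at hempty
            exact hempty i hi
        · rintro (h0 | hempty)
          · exact Or.inl h0
          · exact Or.inr (eq_empty_iff_forall_notMem.2 hempty)
      rw [this]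
      exact ((hLmeas _).union (MeasurableSet.iInter fun i => (hLmeas _).compl))
    · have : {t | nextj t s = j} = L (s ++ [j]) ∩ ⋂ (i : {i : ℕ // i < j}), (L (s ++ [i.1]))ᶜ := by
        ext t
        simp only [hnextj, mem_setOf_eq, mem_inter_iff, mem_iInter, mem_compl_iff]
        constructor
        · intro h
          have hne' : {i | t ∈ L (s ++ [i])}.Nonempty := by
            by_contra hemp
            rw [not_nonempty_iff_eq_empty] at hemp
            rw [hemp, Nat.sInf_empty] at h
            exact hj h.symm
          constructor
          · have := Nat.sInf_mem hne'
            rwa [show sInf {i | t ∈ L (s ++ [i])} = j from h] at this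
          · rintro ⟨i, hi⟩
            exact Nat.notMem_of_lt_sInf (by rw [show sInf {i | t ∈ L (s ++ [i])} = j from h]; exact hi)
        · rintro ⟨hmem, hlt⟩
          refine le_antisymm (Nat.sInf_le hmem) ?_
          by_contra hcon
          push_neg at hcon
          have hne' : {i | t ∈ L (s ++ [i])}.Nonempty := ⟨j, hmem⟩
          have := Nat.sInf_mem hne'
          exact hlt ⟨_, hcon⟩ this
      rw [this]
      exact (hLmeas _).inter (MeasurableSet.iInter fun i => (hLmeas _).compl)
  have hφmeas : ∀ (n : ℕ) (s : List ℕ), MeasurableSet {t | φ t n = s} := by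
    intro n
    induction n with
    | zero =>
      intro s
      rcases eq_or_ne s [] with rfl | hs
      · have : {t : 𝔗 | φ t 0 = []} = univ := by ext t; simp [hφ0]
        rw [this]; exact MeasurableSet.univ
      · have : {t : 𝔗 | φ t 0 = s} = ∅ := by
          ext t; simp only [mem_setOf_eq, mem_empty_iff_false, iff_false]
          rw [hφ0]; exact fun h => hs h.symm
        rw [this]; exact MeasurableSet.empty
    | succ n ih =>
      intro s
      rcases List.eq_nil_or_concat s with rfl | ⟨s', j, rfl⟩
      · have : {t : 𝔗 | φ t (n+1) = []} = ∅ := by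
          ext t; simp only [mem_setOf_eq, mem_empty_iff_false, iff_false]
          intro h
          have := hφlen t (n+1)
          rw [h] at this
          simp at this
        rw [this]; exact MeasurableSet.empty
      · rw [show s'.concat j = s' ++ [j] from List.concat_eq_append]
        have : {t : 𝔗 | φ t (n+1) = s' ++ [j]} = {t | φ t n = s'} ∩ {t | nextj t s' = j} := by
          ext t
          simp only [mem_setOf_eq, mem_inter_iff]
          constructor
          · intro h
            rw [hφs] at h
            obtain ⟨h1, h2⟩ := List.append_inj' h rfl
            have h3 : nextj t (φ t n) = j := by
              have := List.head_eq_of_cons_eq h2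
              exact this
            rw [h1] at h3
            exact ⟨h1, h3⟩
          · rintro ⟨h1, h2⟩
            rw [hφs, h1, h2]
        rw [this]
        exact (ih s').inter (hnextjmeas s' j)
  -- the point choices
  set c : List ℕ → Y := fun s => if h : (C s).Nonempty then h.some else Classical.arbitrary Y
    with hcdef
  have hgmeas : ∀ n : ℕ, Measurable (fun t => c (φ t n)) := by
    intro n s hs
    have : (fun t => c (φ t n)) ⁻¹' s = ⋃ (l : List ℕ) (_ : c l ∈ s), {t | φ t n = l} := by
      ext t
      simp only [mem_preimage, mem_iUnion, mem_setOf_eq]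
      exact ⟨fun h => ⟨φ t n, h, rfl⟩, fun ⟨l, hl, he⟩ => by rw [he]; exact hl⟩
    rw [this]
    exact MeasurableSet.iUnion fun l => MeasurableSet.iUnion fun _ => hφmeas n l
  -- pointwise membership facts
  have hCne : ∀ t n, ∃ y, (t, y) ∈ R (φ t n) := by
    intro t n
    have := hLT _ (hφmem t n)
    obtain ⟨x, hx, hxfst⟩ := this
    exact ⟨x.2, by rwa [show (t, x.2) = x from Prod.ext hxfst.symm rfl]⟩
  have hmemR : ∀ t n, (t, c (φ t n)) ∈ R (φ t n) := by
    intro t n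
    obtain ⟨y, hy⟩ := hCne t n
    rw [hRTC] at hy ⊢
    obtain ⟨ht, hyC⟩ := hy
    have hCn : (C (φ t n)).Nonempty := ⟨y, hyC⟩
    exact ⟨ht, by rw [hcdef]; simp only [hCn, dif_pos]; exact hCn.some_mem⟩
  have hnested : ∀ t {m n : ℕ}, m ≤ n → (t, c (φ t n)) ∈ R (φ t m) :=
    fun t m n h => hRreg (hφpref t h) (hmemR t n)
  have hball : ∀ (s : List ℕ) (x : 𝔗 × Y), x ∈ R s → ∀ j < s.length,
      x.2 ∈ Metric.closedBall (u ((p (s.getD j 0)).2)) ((1/2 : ℝ) ^ j) := by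
    intro s x hx j hj
    have hx1 : x ∈ R₁ s := reg_subset R₁ s hx
    rw [hR₁] at hx1
    have := hx1.2.2
    exact mem_iInter.1 this ⟨j, hj⟩
  have hdist : ∀ t (N n m : ℕ), N ≤ n → N ≤ m →
      dist (c (φ t (n+1))) (c (φ t (m+1))) ≤ 2 * (1/2 : ℝ) ^ N := by
    intro t N n m hn hm
    have h1 := hball (φ t (N+1)) _ (hnested t (Nat.succ_le_succ hn)) N
      (by have := hφlen t (N+1); omega)
    have h2 := hball (φ t (N+1)) _ (hnested t (Nat.succ_le_succ hm)) N
      (by have := hφlen t (N+1); omega)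
    rw [Metric.mem_closedBall] at h1 h2
    calc dist (c (φ t (n+1))) (c (φ t (m+1)))
        ≤ dist (c (φ t (n+1))) (u ((p ((φ t (N+1)).getD N 0)).2))
          + dist (c (φ t (m+1))) (u ((p ((φ t (N+1)).getD N 0)).2)) := dist_triangle_right _ _ _
      _ ≤ (1/2 : ℝ) ^ N + (1/2 : ℝ) ^ N := add_le_add h1 h2
      _ = 2 * (1/2 : ℝ) ^ N := by ring
  have hcauchy : ∀ t, CauchySeq (fun n => c (φ t (n+1))) := by
    intro t
    refine cauchySeq_of_le_tendsto_0 (fun N => 2 * (1/2 : ℝ) ^ N)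
      (fun n m N hn hm => hdist t N n m hn hm) ?_
    have := tendsto_pow_atTop_nhds_zero_of_lt_one (by norm_num : (0:ℝ) ≤ 1/2) (by norm_num)
    simpa using this.const_mul 2
  have hlim : ∀ t, ∃ y, Tendsto (fun n => c (φ t (n+1))) atTop (𝓝 y) :=
    fun t => cauchySeq_tendsto_of_complete (hcauchy t)
  choose σ hσ using hlim
  refine ⟨σ, ?_, ?_⟩
  · exact measurable_of_tendsto_metrizable' atTop (fun n => hgmeas (n+1))
      (tendsto_pi_nhds.2 hσ)
  · intro t
    rw [hGsous]
    have hmem : ∀ n, (t, σ t) ∈ R (φ t n) := by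
      intro n
      rw [hRTC]
      obtain ⟨y, hy⟩ := hCne t n
      rw [hRTC] at hy
      refine ⟨hy.1, ?_⟩
      refine (hCclosed (φ t n)).mem_of_tendsto (hσ t) (eventually_atTop.2 ⟨n, fun m hm => ?_⟩)
      have := hnested t (show n ≤ m + 1 by omega)
      rw [hRTC] at this
      exact this.2
    set f : ℕ → ℕ := fun n => nextj t (φ t n) with hf
    have hφp : ∀ n, φ t n = pref f n := by
      intro n
      induction n with
      | zero => rfl
      | succ n ih => rw [hφs, pref_succ, ih, hf]; simp only []; rw [← ih]
    exact ⟨f, fun n => by rw [← hφp n]; exact hmem n⟩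

end Stmt5Aux
open MeasureTheory Set Filter
open scoped ENNReal Topology Pointwise
namespace Stmt5Aux

/-- The graph of a measurable closed-valued multimapping is product-measurable. -/
lemma measurableSet_graph {𝔗 Y : Type*} [MeasurableSpace 𝔗] [MetricSpace Y]
    [SecondCountableTopology Y] [MeasurableSpace Y] [BorelSpace Y] [Nonempty Y]
    {Γ : 𝔗 → Set Y} (hcl : ∀ t, IsClosed (Γ t))
    (hmeas : ∀ U : Set Y, IsOpen U → MeasurableSet {t | (Γ t ∩ U).Nonempty}) :
    MeasurableSet {p : 𝔗 × Y | p.2 ∈ Γ p.1} := by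
  obtain ⟨u, hu⟩ := TopologicalSpace.exists_dense_seq Y
  have hiff : {p : 𝔗 × Y | p.2 ∈ Γ p.1} = ⋂ (n : ℕ), ⋃ (i : ℕ),
      ({t | (Γ t ∩ Metric.ball (u i) ((1/2 : ℝ) ^ n)).Nonempty} ×ˢ
        Metric.ball (u i) ((1/2 : ℝ) ^ n)) := by
    ext ⟨t, y⟩
    simp only [mem_setOf_eq, mem_iInter, mem_iUnion, mem_prod]
    constructor
    · intro hy n
      obtain ⟨i, hi⟩ := Metric.denseRange_iff.1 hu y _ (by positivity : (0:ℝ) < (1/2 : ℝ) ^ n)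
      exact ⟨i, ⟨y, hy, Metric.mem_ball.2 hi⟩, Metric.mem_ball.2 hi⟩
    · intro h
      rw [← (hcl t).closure_eq, Metric.mem_closure_iff]
      intro ε hε
      obtain ⟨n, hn⟩ := exists_pow_lt_of_lt_one (by linarith : (0:ℝ) < ε / 2) (by norm_num : (1/2 : ℝ) < 1)
      obtain ⟨i, ⟨w, hwΓ, hwb⟩, hyb⟩ := h n
      refine ⟨w, hwΓ, ?_⟩
      have h1 : dist y (u i) < (1/2 : ℝ) ^ n := Metric.mem_ball.1 hyb
      have h2 : dist w (u i) < (1/2 : ℝ) ^ n := Metric.mem_ball.1 hwb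
      calc dist y w ≤ dist y (u i) + dist w (u i) := dist_triangle_right _ _ _
        _ < (1/2 : ℝ) ^ n + (1/2 : ℝ) ^ n := add_lt_add h1 h2
        _ = 2 * (1/2 : ℝ) ^ n := by ring
        _ < 2 * (ε / 2) := by linarith
        _ = ε := by ring
  rw [hiff]
  exact MeasurableSet.iInter fun n => MeasurableSet.iUnion fun i =>
    (hmeas _ Metric.isOpen_ball).prod Metric.isOpen_ball.measurableSet

end Stmt5Aux

open MeasureTheory Pointwise

open Stmt5Aux in
theorem stmt5 {𝔗 : Type*} [MeasurableSpace 𝔗] (μ : Measure 𝔗) [SigmaFinite μ]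
    (hcomp : μ.IsComplete)
    {Y : Type*} [NormedAddCommGroup Y] [NormedSpace ℝ Y] [MeasurableSpace Y]
    [BorelSpace Y] [SecondCountableTopology Y] [CompleteSpace Y]
    (Γ₁ Γ₂ : 𝔗 → Set Y)
    (h1ne : ∀ t, (Γ₁ t).Nonempty) (h1cl : ∀ t, IsClosed (Γ₁ t))
    (h1meas : ∀ U : Set Y, IsOpen U → MeasurableSet {t | (Γ₁ t ∩ U).Nonempty})
    (h2ne : ∀ t, (Γ₂ t).Nonempty)
    (h2graph : MeasurableSet {p : 𝔗 × Y | p.2 ∈ Γ₂ p.1})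
    (z : 𝔗 → Y) (hz : Measurable z) (hzsel : ∀ t, z t ∈ Γ₁ t + Γ₂ t) :
    ∃ z₁ z₂ : 𝔗 → Y, Measurable z₁ ∧ Measurable z₂ ∧
      (∀ t, z₁ t ∈ Γ₁ t) ∧ (∀ t, z₂ t ∈ Γ₂ t) ∧ ∀ t, z t = z₁ t + z₂ t := by
  classical
  rcases isEmpty_or_nonempty 𝔗 with h𝔗 | h𝔗
  · refine ⟨fun t => (h1ne t).some, fun t => (h2ne t).some, ?_, ?_,
      fun t => (h1ne t).some_mem, fun t => (h2ne t).some_mem, fun t => isEmptyElim t⟩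
    · intro s _
      rw [Set.eq_empty_of_isEmpty ((fun t => (h1ne t).some) ⁻¹' s)]
      exact MeasurableSet.empty
    · intro s _
      rw [Set.eq_empty_of_isEmpty ((fun t => (h2ne t).some) ⁻¹' s)]
      exact MeasurableSet.empty
  haveI : Nonempty Y := ⟨(h1ne (Classical.arbitrary 𝔗)).some⟩
  have hG1 : MeasurableSet {p : 𝔗 × Y | p.2 ∈ Γ₁ p.1} := measurableSet_graph h1cl h1meas
  have hmap : Measurable (fun p : 𝔗 × Y => (p.1, z p.1 - p.2)) :=
    measurable_fst.prodMk ((hz.comp measurable_fst).sub measurable_snd)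
  set G : Set (𝔗 × Y) := {p | p.2 ∈ Γ₁ p.1} ∩
    (fun p : 𝔗 × Y => (p.1, z p.1 - p.2)) ⁻¹' {p : 𝔗 × Y | p.2 ∈ Γ₂ p.1} with hGdef
  have hGmeas : MeasurableSet G := hG1.inter (hmap h2graph)
  have hGne : ∀ t, ∃ y, (t, y) ∈ G := by
    intro t
    obtain ⟨a, ha, b, hb, hab⟩ := Set.mem_add.1 (hzsel t)
    refine ⟨a, ha, ?_⟩
    show z t - a ∈ Γ₂ t
    have : z t - a = b := by rw [← hab]; abel
    rw [this]
    exact hb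
  obtain ⟨σ, hσmeas, hσmem⟩ := exists_measurable_selection μ hcomp hGmeas hGne
  exact ⟨σ, fun t => z t - σ t, hσmeas, hz.sub hσmeas,
    fun t => (hσmem t).1, fun t => (hσmem t).2, fun t => by simp⟩
end

section
/- Let (𝔗, 𝒯) be a measurable space with 𝒯 complete with respect to a σ-finite positive measure, let H be a separable Hilbert space, let S : 𝔗 ⇉ H be a 𝒯-measurable multimapping whose values S(t) are all nonempty and R-prox-regular for some fixed R > 0, and let x : 𝔗 → H be a 𝒯-measurable selection of S. Then the multimapping t ↦ N_{S(t)}(x(t)) (the proximal normal cone to S(t) at x(t)) is 𝒯-measurable. -/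
open MeasureTheory Metric

variable {H : Type*} [NormedAddCommGroup H] [InnerProductSpace ℝ H]

open scoped RealInnerProductSpace

noncomputable section AuxDefs

/-- truncation of a real number to `[0,1]` -/
noncomputable def clip (E : ℝ) : ℝ := min 1 (max 0 E)

lemma clip_nonneg (E : ℝ) : 0 ≤ clip E :=
  le_min zero_le_one (le_max_left _ _)

lemma clip_le_one (E : ℝ) : clip E ≤ 1 := min_le_left _ _

lemma clip_eq_zero_of_nonpos {E : ℝ} (h : E ≤ 0) : clip E = 0 := by
  unfold clip
  rw [max_eq_left h, min_eq_right zero_le_one]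

lemma nonpos_of_clip_eq_zero {E : ℝ} (h : clip E = 0) : E ≤ 0 := by
  by_contra hE
  push_neg at hE
  have h1 : 0 < max 0 E := lt_max_of_lt_right hE
  have h2 : 0 < min 1 (max 0 E) := lt_min one_pos h1
  rw [clip] at h
  linarith

/-- a fixed enumeration of `ℕ × ℚ` -/
noncomputable def pe : ℕ ≃ ℕ × ℚ := (Denumerable.eqv (ℕ × ℚ)).symm

/-- slack bound used in the discretized constraints -/
noncomputable def slackB (R β a q : ℝ) : ℝ := a ^ 2 / R + q * (β + (2 * a + q) / R)

lemma arith_aux {R β ε C b a q ips ipd ipsd : ℝ} (hR : 0 < R) (hβ0 : 0 ≤ β)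
    (hb0 : 0 ≤ b) (ha0 : 0 ≤ a) (hq0 : 0 < q) (hq1 : q ≤ 1)
    (hC : C = 2 * β + (4 * b + 4) / R) (hqC : q * C ≤ ε)
    (hsplit : ips = ipd + ipsd) (hcon : ipd ≤ slackB R β a q)
    (hcs : ipsd ≤ β * q) (hab : a ≤ b + q) :
    ips ≤ b ^ 2 / R + ε := by
  have h2 : a ^ 2 + q * (2 * a + q) ≤ b ^ 2 + q * (4 * b + 4) := by nlinarith
  have e2 : (a ^ 2 + q * (2 * a + q)) / R ≤ (b ^ 2 + q * (4 * b + 4)) / R :=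
    (div_le_div_iff_of_pos_right hR).2 h2
  have e1 : slackB R β a q + β * q = (a ^ 2 + q * (2 * a + q)) / R + 2 * β * q := by
    unfold slackB
    field_simp
    ring
  have e3 : (b ^ 2 + q * (4 * b + 4)) / R + 2 * β * q = b ^ 2 / R + q * C := by
    rw [hC]
    field_simp
    ring
  linarith

/-- The property that `ς` is a "normalized proximal normal direction" at `y` for `A`,
for `R`-prox-regular sets. -/
def Phi (R : ℝ) (A : Set H) (y ς : H) : Prop := ∀ s ∈ A, ⟪ς, s - y⟫ ≤ ‖s - y‖ ^ 2 / R

open scoped Classical in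
/-- the `n`-th discretized constraint penalty, expressed on the weak dual -/
noncomputable def gterm (R β : ℝ) (d : ℕ → H) (A : Set H) (y : H) (φ : WeakDual ℝ H) (n : ℕ) :
    ℝ :=
  (1 / 2 : ℝ) ^ n *
    ((if 0 < (pe n).2 ∧ (A ∩ ball (d (pe n).1) ((pe n).2 : ℝ)).Nonempty
        then clip (φ (d (pe n).1 - y) - slackB R β ‖d (pe n).1 - y‖ ((pe n).2 : ℝ)) else 0)
      + clip (φ (d n) - ‖d n‖))

/-- total penalty function on the weak dual -/
noncomputable def Gfun (R β : ℝ) (d : ℕ → H) (A : Set H) (y : H) (φ : WeakDual ℝ H) : ℝ :=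
  ∑' n : ℕ, gterm R β d A y φ n

variable [CompleteSpace H]

/-- the canonical map from `H` to its weak dual -/
noncomputable def Tw (ς : H) : WeakDual ℝ H :=
  StrongDual.toWeakDual (InnerProductSpace.toDual ℝ H ς)

lemma Tw_apply (ς z : H) : Tw ς z = ⟪ς, z⟫ := InnerProductSpace.toDual_apply_apply

/-- the penalty function on `H` -/
noncomputable def Ffun (R β : ℝ) (d : ℕ → H) (A : Set H) (y ς : H) : ℝ :=
  Gfun R β d A y (Tw ς)

end AuxDefs

section Basic

lemma gterm_nonneg (R β : ℝ) (d : ℕ → H) (A : Set H) (y : H) (φ : WeakDual ℝ H) (n : ℕ) :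
    0 ≤ gterm R β d A y φ n := by
  unfold gterm
  have h1 : (0:ℝ) ≤ (1/2:ℝ) ^ n := by positivity
  refine mul_nonneg h1 (add_nonneg ?_ (clip_nonneg _))
  split_ifs
  · exact clip_nonneg _
  · exact le_refl 0

lemma gterm_le (R β : ℝ) (d : ℕ → H) (A : Set H) (y : H) (φ : WeakDual ℝ H) (n : ℕ) :
    gterm R β d A y φ n ≤ 2 * (1/2:ℝ) ^ n := by
  classical
  unfold gterm
  have h1 : (0:ℝ) ≤ (1/2:ℝ) ^ n := by positivity
  have h2 : (if 0 < (pe n).2 ∧ (A ∩ ball (d (pe n).1) ((pe n).2 : ℝ)).Nonempty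
        then clip (φ (d (pe n).1 - y) - slackB R β ‖d (pe n).1 - y‖ ((pe n).2 : ℝ)) else 0)
        + clip (φ (d n) - ‖d n‖) ≤ 2 := by
    have := clip_le_one (φ (d n) - ‖d n‖)
    split_ifs with h
    · have := clip_le_one (φ (d (pe n).1 - y) - slackB R β ‖d (pe n).1 - y‖ ((pe n).2 : ℝ))
      linarith
    · linarith
  calc (1/2:ℝ)^n * _ ≤ (1/2:ℝ)^n * 2 := by
        refine mul_le_mul_of_nonneg_left h2 h1
    _ = 2 * (1/2:ℝ)^n := by ring

lemma gterm_summable (R β : ℝ) (d : ℕ → H) (A : Set H) (y : H) (φ : WeakDual ℝ H) :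
    Summable (gterm R β d A y φ) := by
  refine Summable.of_nonneg_of_le (gterm_nonneg R β d A y φ) (gterm_le R β d A y φ) ?_
  exact (summable_geometric_of_lt_one (by norm_num) (by norm_num)).mul_left 2

lemma Gfun_nonneg (R β : ℝ) (d : ℕ → H) (A : Set H) (y : H) (φ : WeakDual ℝ H) :
    0 ≤ Gfun R β d A y φ :=
  tsum_nonneg (gterm_nonneg R β d A y φ)

lemma gterm_eq_zero_of_Gfun_eq_zero {R β : ℝ} {d : ℕ → H} {A : Set H} {y : H}
    {φ : WeakDual ℝ H} (h : Gfun R β d A y φ = 0) (n : ℕ) : gterm R β d A y φ n = 0 := by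
  have h1 : gterm R β d A y φ n ≤ Gfun R β d A y φ :=
    (gterm_summable R β d A y φ).le_tsum n (fun j _ => gterm_nonneg R β d A y φ j)
  have h2 := gterm_nonneg R β d A y φ n
  rw [h] at h1
  linarith

lemma Gfun_continuous (R β : ℝ) (d : ℕ → H) (A : Set H) (y : H) :
    Continuous (Gfun R β d A y) := by
  refine continuous_tsum (fun n => ?_) (((summable_geometric_of_lt_one (r := (1/2:ℝ))
    (by norm_num) (by norm_num))).mul_left 2) (fun n φ => ?_)
  · unfold gterm
    refine Continuous.mul continuous_const (Continuous.add ?_ ?_)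
    · split_ifs with h
      · unfold clip
        refine Continuous.min continuous_const (Continuous.max continuous_const ?_)
        exact (WeakDual.eval_continuous _).sub continuous_const
      · exact continuous_const
    · unfold clip
      refine Continuous.min continuous_const (Continuous.max continuous_const ?_)
      exact (WeakDual.eval_continuous _).sub continuous_const
  · rw [Real.norm_eq_abs, abs_of_nonneg (gterm_nonneg R β d A y φ n)]
    exact gterm_le R β d A y φ n

end Basic

section Char

/-- From nearest-point property, an inner-product inequality. -/
lemma inner_le_of_dist_le {τ : ℝ} (hτ : 0 < τ) {ς y s : H}
    (h : dist (y + τ • ς) y ≤ dist (y + τ • ς) s) :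
    ⟪ς, s - y⟫ ≤ ‖s - y‖ ^ 2 / (2 * τ) := by
  have hd1 : dist (y + τ • ς) y = τ * ‖ς‖ := by
    rw [dist_eq_norm]
    simp [norm_smul, abs_of_pos hτ]
  have hd2 : dist (y + τ • ς) s = ‖(y - s) + τ • ς‖ := by
    rw [dist_eq_norm]
    congr 1
    abel
  have hsq : (τ * ‖ς‖) ^ 2 ≤ ‖(y - s) + τ • ς‖ ^ 2 := by
    have h0 : 0 ≤ τ * ‖ς‖ := by positivity
    have h1 : dist (y + τ • ς) y ^ 2 ≤ dist (y + τ • ς) s ^ 2 := by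
      have := dist_nonneg (x := y + τ • ς) (y := y)
      nlinarith
    rw [hd1, hd2] at h1
    exact h1
  rw [norm_add_sq_real] at hsq
  have hin : ⟪y - s, τ • ς⟫ = τ * ⟪ς, y - s⟫ := by
    rw [real_inner_smul_right, real_inner_comm]
  have hns : ‖τ • ς‖ ^ 2 = τ ^ 2 * ‖ς‖ ^ 2 := by
    rw [norm_smul]
    simp [abs_of_pos hτ]
    ring
  have hys : ⟪ς, y - s⟫ = - ⟪ς, s - y⟫ := by
    rw [← inner_neg_right]
    congr 1
    abel
  have hnn : ‖y - s‖ = ‖s - y‖ := norm_sub_rev _ _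
  rw [hin, hns, hys, hnn] at hsq
  rw [le_div_iff₀ (by positivity)]
  nlinarith

/-- Converse: the inner-product inequality gives the nearest point property. -/
lemma projSet_of_inner_le {τ : ℝ} (hτ : 0 < τ) {ς y : H} {A : Set H} (hy : y ∈ A)
    (h : ∀ s ∈ A, ⟪ς, s - y⟫ ≤ ‖s - y‖ ^ 2 / (2 * τ)) :
    y ∈ projSet A (y + τ • ς) := by
  refine ⟨hy, fun s hs => ?_⟩
  have hd1 : dist (y + τ • ς) y = τ * ‖ς‖ := by
    rw [dist_eq_norm]
    simp [norm_smul, abs_of_pos hτ]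
  have hd2 : dist (y + τ • ς) s = ‖(y - s) + τ • ς‖ := by
    rw [dist_eq_norm]
    congr 1
    abel
  rw [hd1, hd2]
  have hsq : (τ * ‖ς‖) ^ 2 ≤ ‖(y - s) + τ • ς‖ ^ 2 := by
    rw [norm_add_sq_real]
    have hin : ⟪y - s, τ • ς⟫ = τ * ⟪ς, y - s⟫ := by
      rw [real_inner_smul_right, real_inner_comm]
    have hns : ‖τ • ς‖ ^ 2 = τ ^ 2 * ‖ς‖ ^ 2 := by
      rw [norm_smul]
      simp [abs_of_pos hτ]
      ring
    have hys : ⟪ς, y - s⟫ = - ⟪ς, s - y⟫ := by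
      rw [← inner_neg_right]
      congr 1
      abel
    have hnn : ‖y - s‖ = ‖s - y‖ := norm_sub_rev _ _
    rw [hin, hns, hys, hnn]
    have hss := h s hs
    rw [le_div_iff₀ (by positivity)] at hss
    nlinarith
  have h0 : 0 ≤ τ * ‖ς‖ := by positivity
  nlinarith [norm_nonneg ((y - s) + τ • ς)]

/-- Characterization of nonempty intersection of the proximal normal cone with a set,
for prox-regular sets. -/
lemma cone_inter_char {R : ℝ} (hR : 0 < R) {A : Set H} (hprox : IsProxRegular R A)
    {y : H} (hy : y ∈ A) (U : Set H) :
    (proxNormalCone A y ∩ U).Nonempty ↔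
      ∃ ς : H, (‖ς‖ ≤ 1 ∧ Phi R A y ς) ∧ ∃ l : ℝ, 0 < l ∧ l • ς ∈ U := by
  constructor
  · rintro ⟨ς₀, hς₀N, hς₀U⟩
    by_cases h0 : ς₀ = 0
    · refine ⟨0, ⟨by simp, fun s hs => ?_⟩, 1, one_pos, by simpa [h0] using hς₀U⟩
      simp only [inner_zero_left]
      positivity
    · have hn0 : (0:ℝ) < ‖ς₀‖ := norm_pos_iff.2 h0
      set ς : H := ‖ς₀‖⁻¹ • ς₀ with hςdef
      have hςnorm : ‖ς‖ = 1 := by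
        rw [hςdef, norm_smul]
        simp [abs_of_pos (inv_pos.2 hn0)]
        field_simp
      have hςN : ς ∈ proxNormalCone A y := by
        obtain ⟨η, hη, hproj⟩ := hς₀N
        refine ⟨η * ‖ς₀‖, by positivity, ?_⟩
        have : (η * ‖ς₀‖) • ς = η • ς₀ := by
          rw [hςdef, smul_smul]
          rw [mul_assoc, mul_inv_cancel₀ (ne_of_gt hn0), mul_one]
        rwa [this]
      have hproj := hprox y hy ς hςN (le_of_eq hςnorm) (R / 2) (by positivity)
        (by linarith)
      refine ⟨ς, ⟨le_of_eq hςnorm, fun s hs => ?_⟩, ‖ς₀‖, hn0, ?_⟩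
      · have := inner_le_of_dist_le (τ := R / 2) (by positivity) (hproj.2 s hs)
        have h2 : 2 * (R / 2) = R := by ring
        rwa [h2] at this
      · rw [hςdef, smul_inv_smul₀ (ne_of_gt hn0)]
        exact hς₀U
  · rintro ⟨ς, ⟨hς1, hΦ⟩, l, hl, hlU⟩
    refine ⟨l • ς, ⟨R / (2 * l), by positivity, ?_⟩, hlU⟩
    have hsm : (R / (2 * l)) • (l • ς) = (R / 2) • ς := by
      rw [smul_smul]
      congr 1
      field_simp
    rw [hsm]
    refine projSet_of_inner_le (by positivity) hy (fun s hs => ?_)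
    have := hΦ s hs
    have h2 : 2 * (R / 2) = R := by ring
    rwa [← h2] at this

end Char

section Equiv

variable [CompleteSpace H]

/-- `Ffun = 0` for genuine normalized normals. -/
lemma Ffun_eq_zero_of_props {R β : ℝ} (hR : 0 < R) {d : ℕ → H} {A : Set H} {y ς : H}
    (hβ : ‖ς‖ ≤ β) (h1 : ‖ς‖ ≤ 1) (hΦ : Phi R A y ς) :
    Ffun R β d A y ς = 0 := by
  unfold Ffun Gfun
  have hz : ∀ n, gterm R β d A y (Tw ς) n = 0 := by
    intro n
    unfold gterm
    have hterm2 : clip (Tw ς (d n) - ‖d n‖) = 0 := by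
      refine clip_eq_zero_of_nonpos ?_
      rw [Tw_apply]
      have := real_inner_le_norm ς (d n)
      have h2 : ‖ς‖ * ‖d n‖ ≤ 1 * ‖d n‖ :=
        mul_le_mul_of_nonneg_right h1 (norm_nonneg _)
      linarith [one_mul ‖d n‖]
    rw [hterm2]
    split_ifs with hact
    · obtain ⟨hq, s, hsA, hsball⟩ := hact
      have hterm1 : clip (Tw ς (d (pe n).1 - y) -
          slackB R β ‖d (pe n).1 - y‖ ((pe n).2 : ℝ)) = 0 := by
        refine clip_eq_zero_of_nonpos ?_
        rw [Tw_apply]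
        set dm := d (pe n).1
        have hq' : (0:ℝ) < ((pe n).2 : ℝ) := by exact_mod_cast hq
        set q : ℝ := ((pe n).2 : ℝ)
        set a := ‖dm - y‖ with ha
        set b := ‖s - y‖ with hb
        have hsplit : ⟪ς, dm - y⟫ = ⟪ς, s - y⟫ + ⟪ς, dm - s⟫ := by
          rw [← inner_add_right]
          congr 1
          abel
        have hcs : ⟪ς, dm - s⟫ ≤ β * q := by
          have h3 : ‖dm - s‖ ≤ q := by
            have : dist s dm < q := mem_ball.1 hsball
            rw [dist_comm] at this
            rw [← dist_eq_norm]
            exact le_of_lt this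
          calc ⟪ς, dm - s⟫ ≤ ‖ς‖ * ‖dm - s‖ := real_inner_le_norm _ _
            _ ≤ β * q := by
                refine mul_le_mul hβ h3 (norm_nonneg _) ?_
                exact le_trans (norm_nonneg ς) hβ
        have hba : b ≤ a + q := by
          calc b = ‖(s - dm) + (dm - y)‖ := by rw [hb]; congr 1; abel
            _ ≤ ‖s - dm‖ + ‖dm - y‖ := norm_add_le _ _
            _ ≤ q + a := by
                have : dist s dm < q := mem_ball.1 hsball
                rw [dist_eq_norm] at this
                linarith
            _ = a + q := by ring
        have hΦs := hΦ s hsA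
        rw [← hb] at hΦs
        have hbsq : b ^ 2 ≤ (a + q) ^ 2 := by
          have hb0 : 0 ≤ b := norm_nonneg _
          nlinarith
        have hdiv : b ^ 2 / R ≤ (a + q) ^ 2 / R := (div_le_div_iff_of_pos_right hR).2 hbsq
        have hexp : (a + q) ^ 2 / R + β * q = slackB R β a q := by
          unfold slackB
          field_simp
          ring
        rw [hsplit]
        have : ⟪ς, s - y⟫ + ⟪ς, dm - s⟫ ≤ b ^ 2 / R + β * q := by linarith
        linarith [hdiv, hexp.le, hexp.ge]
      rw [hterm1]
      ring
    · ring
  calc ∑' n, gterm R β d A y (Tw ς) n = ∑' n : ℕ, (0:ℝ) := tsum_congr hz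
    _ = 0 := tsum_zero

/-- Conversely, `Ffun ς = 0` with `‖ς‖ ≤ β` forces `ς` to be a normalized normal. -/
lemma props_of_Ffun_eq_zero {R β : ℝ} (hR : 0 < R) {d : ℕ → H} (hd : DenseRange d)
    {A : Set H} {y ς : H} (hβ : ‖ς‖ ≤ β) (hF : Ffun R β d A y ς = 0) :
    ‖ς‖ ≤ 1 ∧ Phi R A y ς := by
  classical
  have hβ0 : (0:ℝ) ≤ β := le_trans (norm_nonneg _) hβ
  unfold Ffun at hF
  have hzero : ∀ n, gterm R β d A y (Tw ς) n = 0 :=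
    gterm_eq_zero_of_Gfun_eq_zero hF
  -- from each gterm = 0, both summands vanish
  have hboth : ∀ n,
      (if 0 < (pe n).2 ∧ (A ∩ ball (d (pe n).1) (((pe n).2 : ℝ))).Nonempty
        then clip (Tw ς (d (pe n).1 - y) - slackB R β ‖d (pe n).1 - y‖ ((pe n).2 : ℝ)) else 0)
        = 0 ∧ clip (Tw ς (d n) - ‖d n‖) = 0 := by
    intro n
    have h := hzero n
    unfold gterm at h
    have hpow : (0:ℝ) < (1/2:ℝ) ^ n := by positivity
    have hsum0 : (if 0 < (pe n).2 ∧ (A ∩ ball (d (pe n).1) (((pe n).2 : ℝ))).Nonempty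
        then clip (Tw ς (d (pe n).1 - y) - slackB R β ‖d (pe n).1 - y‖ ((pe n).2 : ℝ)) else 0)
        + clip (Tw ς (d n) - ‖d n‖) = 0 := by
      by_contra hne
      have := mul_ne_zero (ne_of_gt hpow) hne
      exact this h
    have ha : 0 ≤ (if 0 < (pe n).2 ∧ (A ∩ ball (d (pe n).1) (((pe n).2 : ℝ))).Nonempty
        then clip (Tw ς (d (pe n).1 - y) - slackB R β ‖d (pe n).1 - y‖ ((pe n).2 : ℝ)) else 0) := by
      split_ifs
      · exact clip_nonneg _
      · exact le_refl 0
    have hb := clip_nonneg (Tw ς (d n) - ‖d n‖)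
    constructor <;> linarith
  -- norm bound
  have hnorm1 : ‖ς‖ ≤ 1 := by
    have hzineq : ∀ z : H, ⟪ς, z⟫ ≤ ‖z‖ := by
      intro z
      refine le_of_forall_pos_le_add (fun ε hε => ?_)
      have hden : (0:ℝ) < 1 + β := by linarith
      obtain ⟨n, hn⟩ := Metric.denseRange_iff.1 hd z (ε / (1 + β)) (by positivity)
      have h2 := nonpos_of_clip_eq_zero (hboth n).2
      rw [Tw_apply] at h2
      have hsplit : ⟪ς, z⟫ = ⟪ς, d n⟫ + ⟪ς, z - d n⟫ := by
        rw [← inner_add_right]; congr 1; abel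
      have hcs : ⟪ς, z - d n⟫ ≤ β * (ε / (1 + β)) := by
        calc ⟪ς, z - d n⟫ ≤ ‖ς‖ * ‖z - d n‖ := real_inner_le_norm _ _
          _ ≤ β * (ε / (1 + β)) := by
              refine mul_le_mul hβ ?_ (norm_nonneg _) hβ0
              rw [← dist_eq_norm]
              exact le_of_lt hn
      have hdz : ‖d n‖ ≤ ‖z‖ + ε / (1 + β) := by
        calc ‖d n‖ ≤ ‖z‖ + ‖d n - z‖ := by
              have := norm_add_le (z) (d n - z)
              simpa using this
          _ ≤ ‖z‖ + ε / (1 + β) := by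
              have : dist z (d n) < ε / (1 + β) := hn
              rw [dist_comm, dist_eq_norm] at this
              linarith
      have hε' : β * (ε / (1 + β)) + ε / (1 + β) = ε := by
        field_simp
        ring
      linarith
    have hself := hzineq ς
    rw [real_inner_self_eq_norm_sq] at hself
    nlinarith [norm_nonneg ς]
  refine ⟨hnorm1, fun s hs => ?_⟩
  -- Phi
  refine le_of_forall_pos_le_add (fun ε hε => ?_)
  set b := ‖s - y‖ with hb
  have hb0 : (0:ℝ) ≤ b := norm_nonneg _
  set C : ℝ := 2 * β + (4 * b + 4) / R with hC
  have hCpos : 0 < C := by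
    have : (0:ℝ) < (4 * b + 4) / R := by positivity
    rw [hC]; linarith
  have hmin : (0:ℝ) < min 1 (ε / C) := lt_min one_pos (by positivity)
  obtain ⟨q, hq0, hqlt⟩ := exists_rat_btwn hmin
  have hq0' : (0:ℝ) < (q:ℝ) := hq0
  have hq1 : (q:ℝ) ≤ 1 := le_of_lt (lt_of_lt_of_le hqlt (min_le_left _ _))
  have hqC : (q:ℝ) * C ≤ ε := by
    have : (q:ℝ) < ε / C := lt_of_lt_of_le hqlt (min_le_right _ _)
    calc (q:ℝ) * C ≤ (ε / C) * C := by
          exact mul_le_mul_of_nonneg_right (le_of_lt this) (le_of_lt hCpos)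
      _ = ε := by field_simp
  obtain ⟨m, hm⟩ := Metric.denseRange_iff.1 hd s (q:ℝ) hq0'
  obtain ⟨n, hpe⟩ : ∃ n, pe n = (m, q) := ⟨pe.symm (m, q), Equiv.apply_symm_apply _ _⟩
  have hact : 0 < (pe n).2 ∧ (A ∩ ball (d (pe n).1) (((pe n).2 : ℝ))).Nonempty := by
    rw [hpe]
    refine ⟨by exact_mod_cast hq0', ⟨s, hs, ?_⟩⟩
    rw [mem_ball]
    exact hm
  have h1 := (hboth n).1
  rw [if_pos hact, hpe] at h1
  have hineq := nonpos_of_clip_eq_zero h1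
  rw [Tw_apply] at hineq
  set dm := d m with hdm
  set a := ‖dm - y‖ with ha
  have ha0 : (0:ℝ) ≤ a := norm_nonneg _
  have hconstraint : ⟪ς, dm - y⟫ ≤ slackB R β a (q:ℝ) := by linarith
  have hms : ‖s - dm‖ ≤ (q:ℝ) := by
    have : dist s dm < (q:ℝ) := by rw [dist_comm] at hm; rwa [dist_comm]
    rw [dist_eq_norm] at this
    exact le_of_lt this
  have hab : a ≤ b + q := by
    calc a = ‖(dm - s) + (s - y)‖ := by rw [ha]; congr 1; abel
      _ ≤ ‖dm - s‖ + ‖s - y‖ := norm_add_le _ _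
      _ ≤ (q:ℝ) + b := by
          have : ‖dm - s‖ = ‖s - dm‖ := norm_sub_rev _ _
          rw [this]; linarith
      _ = b + q := by ring
  have hsplit : ⟪ς, s - y⟫ = ⟪ς, dm - y⟫ + ⟪ς, s - dm⟫ := by
    rw [← inner_add_right]; congr 1; abel
  have hcs : ⟪ς, s - dm⟫ ≤ β * (q:ℝ) := by
    calc ⟪ς, s - dm⟫ ≤ ‖ς‖ * ‖s - dm‖ := real_inner_le_norm _ _
      _ ≤ β * (q:ℝ) := mul_le_mul hβ hms (norm_nonneg _) hβ0
  exact arith_aux hR hβ0 hb0 ha0 hq0' hq1 hC hqC hsplit hconstraint hcs hab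


end Equiv

section Core

variable [CompleteSpace H]

/-- Continuity of `Ffun` in `ς`. -/
lemma Ffun_continuous (R β : ℝ) (d : ℕ → H) (A : Set H) (y : H) :
    Continuous (Ffun R β d A y) := by
  unfold Ffun
  refine (Gfun_continuous R β d A y).comp ?_
  unfold Tw
  exact NormedSpace.Dual.toWeakDual_continuous.comp
    (InnerProductSpace.toDual ℝ H).continuous

/-- The key compactness equivalence. -/
lemma exists_iff_forall_lt {R β : ℝ} (hR : 0 < R) {d : ℕ → H} (hd : DenseRange d)
    {A : Set H} {y : H} {c : H} {ρ : ℝ} (hρ : 0 < ρ) (hβ : β = ‖c‖ + ρ)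
    {u : ℕ → H} (hu : ∀ n, u n ∈ closedBall c ρ)
    (hudense : ∀ z ∈ closedBall c ρ, ∀ ε > 0, ∃ n, dist (u n) z < ε) :
    (∃ ς : H, (‖ς‖ ≤ 1 ∧ Phi R A y ς) ∧ ς ∈ closedBall c ρ) ↔
      ∀ k : ℕ, ∃ n : ℕ, Ffun R β d A y (u n) < 1 / (k + 1) := by
  have hβς : ∀ ς ∈ closedBall c ρ, ‖ς‖ ≤ β := by
    intro ς hς
    rw [mem_closedBall, dist_eq_norm] at hς
    calc ‖ς‖ = ‖(ς - c) + c‖ := by congr 1; abel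
      _ ≤ ‖ς - c‖ + ‖c‖ := norm_add_le _ _
      _ ≤ ρ + ‖c‖ := by linarith
      _ = β := by rw [hβ]; ring
  constructor
  · rintro ⟨ς, ⟨h1, hΦ⟩, hςQ⟩
    intro k
    have hF0 : Ffun R β d A y ς = 0 := Ffun_eq_zero_of_props hR (hβς ς hςQ) h1 hΦ
    have hcont : ContinuousAt (Ffun R β d A y) ς := (Ffun_continuous R β d A y).continuousAt
    have hεpos : (0:ℝ) < 1 / (k + 1) := by positivity
    rw [Metric.continuousAt_iff] at hcont
    obtain ⟨δ, hδ, hδprop⟩ := hcont (1 / (k + 1)) hεpos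
    obtain ⟨n, hn⟩ := hudense ς hςQ δ hδ
    have := hδprop hn
    rw [Real.dist_eq, hF0, sub_zero] at this
    refine ⟨n, ?_⟩
    calc Ffun R β d A y (u n) ≤ |Ffun R β d A y (u n)| := le_abs_self _
      _ < 1 / (k + 1) := this
  · intro hk
    -- Banach–Alaoglu argument in the weak dual
    set c' : StrongDual ℝ H := InnerProductSpace.toDual ℝ H c with hc'
    set V : ℕ → Set (WeakDual ℝ H) := fun k =>
      (WeakDual.toStrongDual ⁻¹' closedBall c' ρ) ∩ {φ | Gfun R β d A y φ ≤ 1 / (k + 1)}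
      with hV
    have hVclosed : ∀ k, IsClosed (V k) := by
      intro k
      refine (WeakDual.isClosed_closedBall c' ρ).inter ?_
      exact isClosed_le (Gfun_continuous R β d A y) continuous_const
    have hVcompact : ∀ k, IsCompact (V k) := by
      intro k
      exact (WeakDual.isCompact_closedBall c' ρ).inter_right
        (isClosed_le (Gfun_continuous R β d A y) continuous_const)
    have hVmono : ∀ k, V (k + 1) ⊆ V k := by
      intro k φ hφ
      refine ⟨hφ.1, ?_⟩
      have h1 : (1:ℝ) / ((k+1 : ℕ) + 1) ≤ 1 / ((k:ℝ) + 1) := by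
        apply one_div_le_one_div_of_le (by positivity)
        push_cast
        linarith
      exact le_trans hφ.2 h1
    have hVne : ∀ k, (V k).Nonempty := by
      intro k
      obtain ⟨n, hn⟩ := hk k
      refine ⟨Tw (u n), ?_, le_of_lt hn⟩
      simp only [Set.mem_preimage, mem_closedBall]
      have : WeakDual.toStrongDual (Tw (u n)) = InnerProductSpace.toDual ℝ H (u n) := rfl
      rw [this, hc', dist_eq_norm, ← map_sub]
      rw [(InnerProductSpace.toDual ℝ H).norm_map]
      have := hu n
      rw [mem_closedBall, dist_eq_norm] at this
      exact this
    obtain ⟨φ₀, hφ₀⟩ := IsCompact.nonempty_iInter_of_sequence_nonempty_isCompact_isClosed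
      V hVmono hVne (hVcompact 0) hVclosed
    simp only [Set.mem_iInter] at hφ₀
    set ς₀ : H := (InnerProductSpace.toDual ℝ H).symm (WeakDual.toStrongDual φ₀) with hς₀
    have hTw : Tw ς₀ = φ₀ := by
      unfold Tw
      rw [hς₀]
      rw [LinearIsometryEquiv.apply_symm_apply]
      rfl
    have hς₀Q : ς₀ ∈ closedBall c ρ := by
      have h1 := (hφ₀ 0).1
      simp only [Set.mem_preimage, mem_closedBall] at h1
      rw [mem_closedBall, dist_eq_norm]
      have h2 : WeakDual.toStrongDual φ₀ = InnerProductSpace.toDual ℝ H ς₀ := by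
        rw [hς₀, LinearIsometryEquiv.apply_symm_apply]
      rw [h2, hc', dist_eq_norm, ← map_sub] at h1
      rwa [(InnerProductSpace.toDual ℝ H).norm_map] at h1
    have hG0 : Gfun R β d A y φ₀ = 0 := by
      have hle : ∀ k : ℕ, Gfun R β d A y φ₀ ≤ 1 / (k + 1) := fun k => (hφ₀ k).2
      have hge := Gfun_nonneg R β d A y φ₀
      have : Gfun R β d A y φ₀ ≤ 0 := by
        refine le_of_forall_pos_le_add (fun ε hε => ?_)
        obtain ⟨k, hk'⟩ := exists_nat_one_div_lt hε
        calc Gfun R β d A y φ₀ ≤ 1 / (k + 1) := hle k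
          _ ≤ ε := by push_cast at hk' ⊢; linarith
          _ ≤ 0 + ε := by linarith
      linarith
    have hF0 : Ffun R β d A y ς₀ = 0 := by
      unfold Ffun
      rw [hTw]
      exact hG0
    obtain ⟨h1, hΦ⟩ := props_of_Ffun_eq_zero hR hd (hβς ς₀ hς₀Q) hF0
    exact ⟨ς₀, ⟨h1, hΦ⟩, hς₀Q⟩

end Core

section Meas

variable [CompleteSpace H] [SecondCountableTopology H] [MeasurableSpace H] [BorelSpace H]

/-- Measurability in `t` of the penalty function. -/
lemma Ffun_measurable {𝔗 : Type*} [MeasurableSpace 𝔗] (R β : ℝ) (d : ℕ → H)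
    (S : 𝔗 → Set H) (hmeas : ∀ U : Set H, IsOpen U → MeasurableSet {t | (S t ∩ U).Nonempty})
    (x : 𝔗 → H) (hx : Measurable x) (ς : H) :
    Measurable (fun t => Ffun R β d (S t) (x t) ς) := by
  classical
  have hterm : ∀ n, Measurable (fun t => gterm R β d (S t) (x t) (Tw ς) n) := by
    intro n
    unfold gterm
    refine Measurable.const_mul ?_ _
    refine Measurable.add ?_ measurable_const
    have hset : MeasurableSet {t | 0 < (pe n).2 ∧
        (S t ∩ ball (d (pe n).1) (((pe n).2 : ℝ))).Nonempty} := by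
      by_cases hq : 0 < (pe n).2
      · have : {t | 0 < (pe n).2 ∧ (S t ∩ ball (d (pe n).1) (((pe n).2 : ℝ))).Nonempty}
            = {t | (S t ∩ ball (d (pe n).1) (((pe n).2 : ℝ))).Nonempty} := by
          ext t; simp [hq]
        rw [this]
        exact hmeas _ isOpen_ball
      · have : {t | 0 < (pe n).2 ∧ (S t ∩ ball (d (pe n).1) (((pe n).2 : ℝ))).Nonempty}
            = ∅ := by
          ext t; simp [hq]
        rw [this]
        exact MeasurableSet.empty
    have hfmeas : Measurable (fun t =>
        clip (Tw ς (d (pe n).1 - x t) - slackB R β ‖d (pe n).1 - x t‖ ((pe n).2 : ℝ))) := by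
      have hxm : Measurable (fun t => d (pe n).1 - x t) := measurable_const.sub hx
      have hinner : Measurable (fun t => (⟪ς, d (pe n).1 - x t⟫ : ℝ)) :=
        Measurable.const_inner hxm
      have hinner' : Measurable (fun t => Tw ς (d (pe n).1 - x t)) := by
        simpa only [Tw_apply] using hinner
      have hnorm : Measurable (fun t => ‖d (pe n).1 - x t‖) := hxm.norm
      have hslack : Measurable (fun t => slackB R β ‖d (pe n).1 - x t‖ ((pe n).2 : ℝ)) := by
        unfold slackB
        apply Measurable.add
        · exact (hnorm.pow_const 2).div_const R
        · exact (measurable_const.add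
            (((hnorm.const_mul 2).add_const _).div_const R)).const_mul _
      unfold clip
      exact measurable_const.min (measurable_const.max (hinner'.sub hslack))
    -- rewrite the if-then-else as an indicator
    have heq : (fun t => if 0 < (pe n).2 ∧
        (S t ∩ ball (d (pe n).1) (((pe n).2 : ℝ))).Nonempty
        then clip (Tw ς (d (pe n).1 - x t) - slackB R β ‖d (pe n).1 - x t‖ ((pe n).2 : ℝ))
        else 0)
        = Set.indicator {t | 0 < (pe n).2 ∧
            (S t ∩ ball (d (pe n).1) (((pe n).2 : ℝ))).Nonempty}
          (fun t => clip (Tw ς (d (pe n).1 - x t)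
            - slackB R β ‖d (pe n).1 - x t‖ ((pe n).2 : ℝ))) := by
      funext t
      rw [Set.indicator_apply]
      rfl
    rw [heq]
    exact hfmeas.indicator hset
  have hsummable : ∀ t, Summable (fun n => gterm R β d (S t) (x t) (Tw ς) n) :=
    fun t => gterm_summable _ _ _ _ _ _
  have hpartial : ∀ N : ℕ, Measurable (fun t =>
      ∑ n ∈ Finset.range N, gterm R β d (S t) (x t) (Tw ς) n) :=
    fun N => Finset.measurable_sum _ (fun n _ => hterm n)
  unfold Ffun Gfun
  refine measurable_of_tendsto_metrizable hpartial (tendsto_pi_nhds.2 fun t => ?_)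
  exact (hsummable t).hasSum.tendsto_sum_nat

/-- Measurability of the set of parameters where a normalized normal exists in a
given closed ball. -/
lemma exists_ball_measurable {𝔗 : Type*} [MeasurableSpace 𝔗] {R : ℝ} (hR : 0 < R)
    (d : ℕ → H) (hd : DenseRange d)
    (S : 𝔗 → Set H) (hmeas : ∀ U : Set H, IsOpen U → MeasurableSet {t | (S t ∩ U).Nonempty})
    (x : 𝔗 → H) (hx : Measurable x) (c : H) (ρ : ℝ) (hρ : 0 < ρ) :
    MeasurableSet {t | ∃ ς : H, (‖ς‖ ≤ 1 ∧ Phi R (S t) (x t) ς) ∧ ς ∈ closedBall c ρ} := by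
  set β := ‖c‖ + ρ with hβ
  have hne : (closedBall c ρ).Nonempty := ⟨c, mem_closedBall_self hρ.le⟩
  haveI : Nonempty (closedBall c ρ) := hne.to_subtype
  set u : ℕ → H := fun n => ((TopologicalSpace.denseSeq (↥(closedBall c ρ)) n : ↥(closedBall c ρ)) : H) with hu'
  have hu : ∀ n, u n ∈ closedBall c ρ := fun n => (TopologicalSpace.denseSeq (↥(closedBall c ρ)) n).2
  have hudense : ∀ z ∈ closedBall c ρ, ∀ ε > 0, ∃ n, dist (u n) z < ε := by
    intro z hz ε hε
    have hdr := TopologicalSpace.denseRange_denseSeq (↥(closedBall c ρ))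
    obtain ⟨n, hn⟩ := Metric.denseRange_iff.1 hdr ⟨z, hz⟩ ε hε
    rw [Subtype.dist_eq] at hn
    exact ⟨n, by rw [dist_comm]; exact hn⟩
  have heq : {t | ∃ ς : H, (‖ς‖ ≤ 1 ∧ Phi R (S t) (x t) ς) ∧ ς ∈ closedBall c ρ}
      = ⋂ k : ℕ, ⋃ n : ℕ, {t | Ffun R β d (S t) (x t) (u n) < 1 / (k + 1)} := by
    ext t
    simp only [Set.mem_setOf_eq, Set.mem_iInter, Set.mem_iUnion]
    exact exists_iff_forall_lt hR hd hρ hβ hu hudense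
  rw [heq]
  refine MeasurableSet.iInter fun k => MeasurableSet.iUnion fun n => ?_
  exact measurableSet_lt (Ffun_measurable R β d S hmeas x hx (u n)) measurable_const

end Meas

theorem stmt6 {𝔗 : Type*} [MeasurableSpace 𝔗] (μ : Measure 𝔗) [SigmaFinite μ]
    (hcomp : μ.IsComplete)
    [SecondCountableTopology H] [MeasurableSpace H] [BorelSpace H] [CompleteSpace H]
    (R : ℝ) (hR : 0 < R) (S : 𝔗 → Set H)
    (hne : ∀ t, (S t).Nonempty) (hcls : ∀ t, IsClosed (S t))
    (hprox : ∀ t, IsProxRegular R (S t))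
    (hmeas : ∀ U : Set H, IsOpen U → MeasurableSet {t | (S t ∩ U).Nonempty})
    (x : 𝔗 → H) (hx : Measurable x) (hxsel : ∀ t, x t ∈ S t) :
    ∀ U : Set H, IsOpen U →
      MeasurableSet {t | (proxNormalCone (S t) (x t) ∩ U).Nonempty} := by
  intro U hU
  classical
  set V : Set H := {ς : H | ∃ l : ℝ, 0 < l ∧ l • ς ∈ U} with hV
  have hVopen : IsOpen V := by
    have hVeq : V = ⋃ l : {l : ℝ // 0 < l}, (fun ς : H => (l : ℝ) • ς) ⁻¹' U := by
      ext ς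
      simp only [hV, Set.mem_setOf_eq, Set.mem_iUnion, Set.mem_preimage]
      constructor
      · rintro ⟨l, hl, hlU⟩; exact ⟨⟨l, hl⟩, hlU⟩
      · rintro ⟨⟨l, hl⟩, hlU⟩; exact ⟨l, hl, hlU⟩
    rw [hVeq]
    exact isOpen_iUnion fun l => hU.preimage (continuous_const_smul (l : ℝ))
  haveI : Nonempty H := ⟨0⟩
  set d : ℕ → H := TopologicalSpace.denseSeq H with hd'
  have hd : DenseRange d := TopologicalSpace.denseRange_denseSeq H
  have hchar : ∀ t, (proxNormalCone (S t) (x t) ∩ U).Nonempty ↔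
      ∃ p : ℕ × ℚ, ((0:ℝ) < (p.2:ℝ) ∧ closedBall (d p.1) (p.2:ℝ) ⊆ V) ∧
        ∃ ς : H, (‖ς‖ ≤ 1 ∧ Phi R (S t) (x t) ς) ∧ ς ∈ closedBall (d p.1) (p.2:ℝ) := by
    intro t
    rw [cone_inter_char hR (hprox t) (hxsel t) U]
    constructor
    · rintro ⟨ς, hp1, l, hl, hlU⟩
      have hςV : ς ∈ V := ⟨l, hl, hlU⟩
      obtain ⟨ε, hε, hball⟩ := Metric.isOpen_iff.1 hVopen ς hςV
      obtain ⟨ρ, hρ0, hρε⟩ := exists_rat_btwn (show (0:ℝ) < ε / 2 by linarith)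
      obtain ⟨i, hi⟩ := Metric.denseRange_iff.1 hd ς (ρ:ℝ) hρ0
      refine ⟨(i, ρ), ⟨hρ0, ?_⟩, ς, hp1, ?_⟩
      · intro z hz
        apply hball
        rw [mem_ball]
        rw [mem_closedBall] at hz
        have h1 : dist z ς ≤ dist z (d i) + dist (d i) ς := dist_triangle _ _ _
        have h2 : dist (d i) ς < (ρ:ℝ) := by rw [dist_comm]; exact hi
        linarith
      · rw [mem_closedBall]
        exact le_of_lt hi
    · rintro ⟨p, ⟨hρ0, hsub⟩, ς, hp1, hςball⟩
      obtain ⟨l, hl, hlU⟩ := hsub hςball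
      exact ⟨ς, hp1, l, hl, hlU⟩
  have hset : {t | (proxNormalCone (S t) (x t) ∩ U).Nonempty} =
      ⋃ p : ℕ × ℚ, {t | ((0:ℝ) < (p.2:ℝ) ∧ closedBall (d p.1) (p.2:ℝ) ⊆ V) ∧
        ∃ ς : H, (‖ς‖ ≤ 1 ∧ Phi R (S t) (x t) ς) ∧ ς ∈ closedBall (d p.1) (p.2:ℝ)} := by
    ext t
    simp only [Set.mem_setOf_eq, Set.mem_iUnion]
    exact hchar t
  rw [hset]
  refine MeasurableSet.iUnion fun p => ?_
  by_cases hp : (0:ℝ) < (p.2:ℝ) ∧ closedBall (d p.1) (p.2:ℝ) ⊆ V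
  · have heq2 : {t | ((0:ℝ) < (p.2:ℝ) ∧ closedBall (d p.1) (p.2:ℝ) ⊆ V) ∧
        ∃ ς : H, (‖ς‖ ≤ 1 ∧ Phi R (S t) (x t) ς) ∧ ς ∈ closedBall (d p.1) (p.2:ℝ)}
        = {t | ∃ ς : H, (‖ς‖ ≤ 1 ∧ Phi R (S t) (x t) ς) ∧ ς ∈ closedBall (d p.1) (p.2:ℝ)} := by
      ext t
      simp only [Set.mem_setOf_eq]
      exact ⟨fun h => h.2, fun h => ⟨hp, h⟩⟩
    rw [heq2]
    exact exists_ball_measurable hR d hd S hmeas x hx (d p.1) (p.2:ℝ) hp.1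
  · have heq2 : {t | ((0:ℝ) < (p.2:ℝ) ∧ closedBall (d p.1) (p.2:ℝ) ⊆ V) ∧
        ∃ ς : H, (‖ς‖ ≤ 1 ∧ Phi R (S t) (x t) ς) ∧ ς ∈ closedBall (d p.1) (p.2:ℝ)}
        = (∅ : Set 𝔗) := by
      ext t
      simp only [Set.mem_setOf_eq, Set.mem_empty_iff_false, iff_false]
      exact fun h => hp h.1
    rw [heq2]
    exact MeasurableSet.empty
end

section
/- Let T₀ ≤ T, let k₀, γ : [T₀,T] → ℝ₊ be Lebesgue integrable, and set c(t) := ∫_{T₀}^t k₀(τ) dτ. Then for every integer i ≥ 1 and every t ∈ [T₀,T], ∫_{T₀}^t k₀(s)·(∫_{T₀}^s ([c(s) − c(τ)]^{i−1}/(i−1)!)·γ(τ) dτ) ds = ∫_{T₀}^t ([c(t) − c(s)]^i / i!)·γ(s) ds. -/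
open MeasureTheory intervalIntegral Set

lemma tri_swap (a b : ℝ) (hab : a ≤ b) (H : ℝ → ℝ → ℝ)
    (hH : Integrable (fun p : ℝ × ℝ => H p.1 p.2)
      (((volume : Measure ℝ).restrict (Set.Ioc a b)).prod
        ((volume : Measure ℝ).restrict (Set.Ioc a b)))) :
    (∫ s in a..b, ∫ τ in a..s, H s τ) = ∫ τ in a..b, ∫ s in τ..b, H s τ := by
  set μ := (volume : Measure ℝ).restrict (Set.Ioc a b) with hμ
  set G : ℝ × ℝ → ℝ :=
    Set.indicator {p : ℝ × ℝ | p.2 ≤ p.1} (fun p => H p.1 p.2) with hG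
  have hGmeas : MeasurableSet {p : ℝ × ℝ | p.2 ≤ p.1} :=
    measurableSet_le measurable_snd measurable_fst
  have hGint : Integrable G (μ.prod μ) := hH.indicator hGmeas
  have key1 : ∀ᵐ s ∂μ, (∫ τ in a..s, H s τ) = ∫ τ, G (s, τ) ∂μ := by
    filter_upwards [hGint.prod_right_ae, ae_restrict_mem measurableSet_Ioc]
      with s hs hsmem
    have h1 : a ≤ s := hsmem.1.le
    have h2 : s ≤ b := hsmem.2
    have hsI : IntegrableOn (fun τ => G (s, τ)) (Set.Ioc a b) volume := hs
    have hsplit : Set.Ioc a b = Set.Ioc a s ∪ Set.Ioc s b :=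
      (Set.Ioc_union_Ioc_eq_Ioc h1 h2).symm
    have : (∫ τ, G (s, τ) ∂μ) = (∫ τ in Set.Ioc a s, G (s, τ)) + ∫ τ in Set.Ioc s b, G (s, τ) := by
      rw [hμ, hsplit]
      exact setIntegral_union (Set.Ioc_disjoint_Ioc_of_le le_rfl) measurableSet_Ioc
        (hsI.mono_set (Set.Ioc_subset_Ioc_right h2))
        (hsI.mono_set (Set.Ioc_subset_Ioc_left h1))
    rw [this]
    have e1 : (∫ τ in Set.Ioc a s, G (s, τ)) = ∫ τ in Set.Ioc a s, H s τ :=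
      setIntegral_congr_fun measurableSet_Ioc fun τ hτ => by
        simp [hG, Set.indicator_apply, hτ.2]
    have e2 : (∫ τ in Set.Ioc s b, G (s, τ)) = 0 := by
      rw [setIntegral_congr_fun measurableSet_Ioc
        (g := fun _ => (0:ℝ)) fun τ hτ => by simp [hG, Set.indicator_apply, not_le.mpr hτ.1]]
      exact MeasureTheory.integral_zero _ _
    rw [e1, e2, add_zero, intervalIntegral.integral_of_le h1]
  have key2 : ∀ᵐ τ ∂μ, (∫ s, G (s, τ) ∂μ) = ∫ s in τ..b, H s τ := by
    have hne : ∀ᵐ x : ℝ ∂(volume : Measure ℝ), x ∉ ({x : ℝ | ∃ y, x = y ∧ False}) := by simp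
    filter_upwards [hGint.prod_left_ae, ae_restrict_mem measurableSet_Ioc]
      with τ hτ hτmem
    have h1 : a ≤ τ := hτmem.1.le
    have h2 : τ ≤ b := hτmem.2
    have hτI : IntegrableOn (fun s => G (s, τ)) (Set.Ioc a b) volume := hτ
    have hsplit : Set.Ioc a b = Set.Ioc a τ ∪ Set.Ioc τ b :=
      (Set.Ioc_union_Ioc_eq_Ioc h1 h2).symm
    have : (∫ s, G (s, τ) ∂μ) = (∫ s in Set.Ioc a τ, G (s, τ)) + ∫ s in Set.Ioc τ b, G (s, τ) := by
      rw [hμ, hsplit]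
      exact setIntegral_union (Set.Ioc_disjoint_Ioc_of_le le_rfl) measurableSet_Ioc
        (hτI.mono_set (Set.Ioc_subset_Ioc_right h2))
        (hτI.mono_set (Set.Ioc_subset_Ioc_left h1))
    rw [this]
    have e1 : (∫ s in Set.Ioc a τ, G (s, τ)) = 0 := by
      have hae : ∀ᵐ s ∂(volume : Measure ℝ).restrict (Set.Ioc a τ), G (s, τ) = 0 := by
        have h0 : ∀ᵐ s : ℝ ∂(volume : Measure ℝ), s ≠ τ := by
          rw [ae_iff]
          convert Real.volume_singleton (a := τ) using 2
          ext s; simp [eq_comm]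
        filter_upwards [ae_restrict_mem measurableSet_Ioc, ae_restrict_of_ae h0]
          with s hsmem hsne
        simp [hG, Set.indicator_apply, not_le.mpr (lt_of_le_of_ne hsmem.2 hsne)]
      rw [integral_congr_ae hae, MeasureTheory.integral_zero]
    have e2 : (∫ s in Set.Ioc τ b, G (s, τ)) = ∫ s in Set.Ioc τ b, H s τ :=
      setIntegral_congr_fun measurableSet_Ioc fun s hs => by
        simp [hG, Set.indicator_apply, hs.1.le]
    rw [e1, e2, zero_add, intervalIntegral.integral_of_le h2]
  rw [intervalIntegral.integral_of_le hab, intervalIntegral.integral_of_le hab]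
  calc (∫ s in Set.Ioc a b, ∫ τ in a..s, H s τ)
      = ∫ s, (∫ τ, G (s, τ) ∂μ) ∂μ := integral_congr_ae key1
    _ = ∫ τ, (∫ s, G (s, τ) ∂μ) ∂μ := by
        exact MeasureTheory.integral_integral_swap (f := fun s τ => G (s, τ)) hGint
    _ = ∫ τ in Set.Ioc a b, ∫ s in τ..b, H s τ := integral_congr_ae key2

lemma key_lemma (T₀ T : ℝ) (hT : T₀ ≤ T) (k₀ : ℝ → ℝ)
    (hkint : IntegrableOn k₀ (Set.Icc T₀ T))
    (c : ℝ → ℝ) (hc : ∀ t, c t = ∫ τ in T₀..t, k₀ τ) :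
    ∀ n : ℕ, ∀ τ b, T₀ ≤ τ → τ ≤ b → b ≤ T →
      (∫ s in τ..b, k₀ s * (c s - c τ) ^ n) = (c b - c τ) ^ (n+1) / (n+1) := by
  have hkiv : ∀ x y, T₀ ≤ x → x ≤ y → y ≤ T → IntervalIntegrable k₀ volume x y := by
    intro x y hx hxy hyT
    rw [intervalIntegrable_iff_integrableOn_Ioc_of_le hxy]
    exact hkint.mono_set (Set.Ioc_subset_Icc_self.trans (Set.Icc_subset_Icc hx hyT))
  have hsub : ∀ x y, T₀ ≤ x → x ≤ y → y ≤ T → c y - c x = ∫ s in x..y, k₀ s := by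
    intro x y hx hxy hyT
    rw [hc, hc]
    exact intervalIntegral.integral_interval_sub_left
      (hkiv T₀ y le_rfl (hx.trans hxy) hyT) (hkiv T₀ x le_rfl hx (hxy.trans hyT))
  have ccont : ContinuousOn c (Set.Icc T₀ T) := by
    have h := intervalIntegral.continuousOn_primitive_interval
      (a := T₀) (b := T) (f := k₀) (μ := volume) (by rwa [Set.uIcc_of_le hT])
    rw [Set.uIcc_of_le hT] at h
    exact h.congr fun x _ => hc x
  have hmul : ∀ (n : ℕ) τ, IntegrableOn (fun s => k₀ s * (c s - c τ) ^ n) (Set.Icc T₀ T) volume :=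
    fun n τ => hkint.mul_continuousOn ((ccont.sub continuousOn_const).pow n) isCompact_Icc
  have hmuliv : ∀ (n : ℕ) τ x y, T₀ ≤ x → x ≤ y → y ≤ T →
      IntervalIntegrable (fun s => k₀ s * (c s - c τ) ^ n) volume x y := by
    intro n τ x y hx hxy hyT
    rw [intervalIntegrable_iff_integrableOn_Ioc_of_le hxy]
    exact (hmul n τ).mono_set (Set.Ioc_subset_Icc_self.trans (Set.Icc_subset_Icc hx hyT))
  intro n
  induction n with
  | zero =>
    intro τ b hτ hτb hbT
    simp only [pow_zero, mul_one, pow_one, Nat.cast_zero, zero_add, div_one]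
    exact (hsub τ b hτ hτb hbT).symm
  | succ n ih =>
    intro τ b hτ hτb hbT
    set I := ∫ s in τ..b, k₀ s * (c s - c τ) ^ (n+1) with hI
    have hn1 : ((n : ℝ) + 1) ≠ 0 := by positivity
    have step1 : I = ∫ s in τ..b, ∫ r in τ..s,
        ((n : ℝ) + 1) * (k₀ s * (k₀ r * (c r - c τ) ^ n)) := by
      rw [hI]
      refine intervalIntegral.integral_congr fun s hs => ?_
      rw [Set.uIcc_of_le hτb] at hs
      have h1 : τ ≤ s := hs.1
      have h2 : s ≤ b := hs.2
      have ihs := ih τ s hτ h1 (h2.trans hbT)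
      simp only [intervalIntegral.integral_const_mul]
      rw [ihs]
      field_simp
    have hprod : Integrable
        (fun p : ℝ × ℝ => ((n : ℝ) + 1) * (k₀ p.1 * (k₀ p.2 * (c p.2 - c τ) ^ n)))
        (((volume : Measure ℝ).restrict (Set.Ioc τ b)).prod
          ((volume : Measure ℝ).restrict (Set.Ioc τ b))) := by
      have h1 : IntegrableOn k₀ (Set.Ioc τ b) volume :=
        hkint.mono_set (Set.Ioc_subset_Icc_self.trans (Set.Icc_subset_Icc hτ hbT))
      have h2 : IntegrableOn (fun r => k₀ r * (c r - c τ) ^ n) (Set.Ioc τ b) volume :=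
        (hmul n τ).mono_set (Set.Ioc_subset_Icc_self.trans (Set.Icc_subset_Icc hτ hbT))
      exact (Integrable.mul_prod h1 h2).const_mul _
    have step2 : I = ∫ r in τ..b, ∫ s in r..b,
        ((n : ℝ) + 1) * (k₀ s * (k₀ r * (c r - c τ) ^ n)) := by
      rw [step1]
      exact tri_swap τ b hτb _ hprod
    have step3 : I = ((n : ℝ) + 1) * ∫ r in τ..b,
        ((c b - c τ) * (k₀ r * (c r - c τ) ^ n) - k₀ r * (c r - c τ) ^ (n+1)) := by
      rw [step2, ← intervalIntegral.integral_const_mul]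
      refine intervalIntegral.integral_congr fun r hr => ?_
      rw [Set.uIcc_of_le hτb] at hr
      have h1 : τ ≤ r := hr.1
      have h2 : r ≤ b := hr.2
      simp only [intervalIntegral.integral_const_mul]
      rw [show (∫ s in r..b, k₀ s * (k₀ r * (c r - c τ) ^ n)) =
        (∫ s in r..b, k₀ s) * (k₀ r * (c r - c τ) ^ n) from
          intervalIntegral.integral_mul_const _ _]
      rw [← hsub r b (hτ.trans h1) h2 hbT]
      ring
    have e : (∫ r in τ..b, ((c b - c τ) * (k₀ r * (c r - c τ) ^ n) - k₀ r * (c r - c τ) ^ (n+1)))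
        = (c b - c τ) * ((c b - c τ) ^ (n+1) / ((n : ℝ)+1)) - I := by
      rw [intervalIntegral.integral_sub
        ((hmuliv n τ τ b hτ hτb hbT).const_mul _) (hmuliv (n+1) τ τ b hτ hτb hbT),
        intervalIntegral.integral_const_mul, ih τ b hτ hτb hbT, hI]
    have step4 : I = ((n : ℝ) + 1) * ((c b - c τ) * ((c b - c τ) ^ (n+1) / ((n : ℝ)+1)) - I) :=
      step3.trans (by rw [e])
    have : ((n:ℝ) + 2) * I = (c b - c τ) ^ (n + 2) := by
      have h : ((n : ℝ) + 1) * ((c b - c τ) * ((c b - c τ) ^ (n+1) / ((n : ℝ)+1)))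
          = (c b - c τ) ^ (n+2) := by
        field_simp; ring
      nlinarith [step4, h]
    rw [hI] at this ⊢
    push_cast
    rw [eq_div_iff (by positivity : ((n:ℝ) + 1 + 1) ≠ 0)]
    push_cast at this
    linarith [this]

theorem stmt10 (T₀ T : ℝ) (hT : T₀ ≤ T) (k₀ γ : ℝ → ℝ)
    (hk0 : ∀ t, 0 ≤ k₀ t) (hγ0 : ∀ t, 0 ≤ γ t)
    (hkint : IntegrableOn k₀ (Set.Icc T₀ T)) (hγint : IntegrableOn γ (Set.Icc T₀ T))
    (c : ℝ → ℝ) (hc : ∀ t, c t = ∫ τ in T₀..t, k₀ τ)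
    (i : ℕ) (hi : 1 ≤ i) (t : ℝ) (ht : t ∈ Set.Icc T₀ T) :
    (∫ s in T₀..t, k₀ s *
        ∫ τ in T₀..s, (c s - c τ) ^ (i - 1) / ((i - 1).factorial : ℝ) * γ τ) =
      ∫ s in T₀..t, (c t - c s) ^ i / (i.factorial : ℝ) * γ s := by
  obtain ⟨m, rfl⟩ : ∃ m, i = m + 1 := ⟨i - 1, (Nat.succ_pred_eq_of_pos hi).symm⟩
  simp only [Nat.add_sub_cancel]
  obtain ⟨ht1, ht2⟩ := ht
  have ccont : ContinuousOn c (Set.Icc T₀ T) := by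
    have h := intervalIntegral.continuousOn_primitive_interval
      (a := T₀) (b := T) (f := k₀) (μ := volume) (by rwa [Set.uIcc_of_le hT])
    rw [Set.uIcc_of_le hT] at h
    exact h.congr fun x _ => hc x
  obtain ⟨M, hM⟩ := isCompact_Icc.exists_bound_of_continuousOn ccont
  -- Step 1: push k₀ s inside the inner integral
  have step1 : (∫ s in T₀..t, k₀ s *
        ∫ τ in T₀..s, (c s - c τ) ^ m / (m.factorial : ℝ) * γ τ) =
      ∫ s in T₀..t, ∫ τ in T₀..s,
        k₀ s * ((c s - c τ) ^ m / (m.factorial : ℝ) * γ τ) := by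
    refine intervalIntegral.integral_congr fun s _ => ?_
    rw [intervalIntegral.integral_const_mul]
  -- product integrability
  have hprod : Integrable
      (fun p : ℝ × ℝ => k₀ p.1 * ((c p.1 - c p.2) ^ m / (m.factorial : ℝ) * γ p.2))
      (((volume : Measure ℝ).restrict (Set.Ioc T₀ t)).prod
        ((volume : Measure ℝ).restrict (Set.Ioc T₀ t))) := by
    have hsub : Set.Ioc T₀ t ⊆ Set.Icc T₀ T :=
      Set.Ioc_subset_Icc_self.trans (Set.Icc_subset_Icc le_rfl ht2)
    have h1 : IntegrableOn k₀ (Set.Ioc T₀ t) volume := hkint.mono_set hsub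
    have h2 : IntegrableOn γ (Set.Ioc T₀ t) volume := hγint.mono_set hsub
    have hbase : Integrable (fun p : ℝ × ℝ => k₀ p.1 * γ p.2)
        (((volume : Measure ℝ).restrict (Set.Ioc T₀ t)).prod
          ((volume : Measure ℝ).restrict (Set.Ioc T₀ t))) := Integrable.mul_prod h1 h2
    have heq : ∀ p : ℝ × ℝ,
        k₀ p.1 * ((c p.1 - c p.2) ^ m / (m.factorial : ℝ) * γ p.2) =
        ((c p.1 - c p.2) ^ m / (m.factorial : ℝ)) * (k₀ p.1 * γ p.2) := fun p => by ring
    simp only [heq]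
    refine Integrable.bdd_mul hbase (c := (2 * M) ^ m / (m.factorial : ℝ)) ?_ ?_
    · have hcont : ContinuousOn (fun p : ℝ × ℝ => (c p.1 - c p.2) ^ m / (m.factorial : ℝ))
          (Set.Ioc T₀ t ×ˢ Set.Ioc T₀ t) := by
        apply ContinuousOn.div_const
        apply ContinuousOn.pow
        exact ((ccont.comp continuousOn_fst fun p hp => hsub hp.1).sub
          (ccont.comp continuousOn_snd fun p hp => hsub hp.2))
      rw [Measure.prod_restrict]
      exact hcont.aestronglyMeasurable (measurableSet_Ioc.prod measurableSet_Ioc)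
    · rw [Measure.prod_restrict]
      filter_upwards [MeasureTheory.ae_restrict_mem (measurableSet_Ioc.prod measurableSet_Ioc)]
        with p hp
      have hsubm : Set.Ioc T₀ t ⊆ Set.Icc T₀ T :=
        Set.Ioc_subset_Icc_self.trans (Set.Icc_subset_Icc le_rfl ht2)
      have b1 := hM p.1 (hsubm hp.1)
      have b2 := hM p.2 (hsubm hp.2)
      have hbnd : |c p.1 - c p.2| ≤ 2 * M := by
        rw [Real.norm_eq_abs] at b1 b2
        have := abs_sub (c p.1) (c p.2)
        calc |c p.1 - c p.2| ≤ |c p.1| + |c p.2| := abs_sub _ _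
          _ ≤ 2 * M := by linarith
      have hfac : (0:ℝ) < (m.factorial : ℝ) := by positivity
      rw [Real.norm_eq_abs, abs_div, abs_pow, abs_of_pos hfac]
      gcongr
  -- Step 2: Fubini swap
  have step2 : (∫ s in T₀..t, ∫ τ in T₀..s,
        k₀ s * ((c s - c τ) ^ m / (m.factorial : ℝ) * γ τ)) =
      ∫ τ in T₀..t, ∫ s in τ..t,
        k₀ s * ((c s - c τ) ^ m / (m.factorial : ℝ) * γ τ) :=
    tri_swap T₀ t ht1 _ hprod
  rw [step1, step2]
  -- Step 3: evaluate inner integral via key_lemma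
  refine intervalIntegral.integral_congr fun τ hτ => ?_
  rw [Set.uIcc_of_le ht1] at hτ
  have h1 : T₀ ≤ τ := hτ.1
  have h2 : τ ≤ t := hτ.2
  have e1 : (∫ s in τ..t, k₀ s * ((c s - c τ) ^ m / (m.factorial : ℝ) * γ τ)) =
      (∫ s in τ..t, k₀ s * (c s - c τ) ^ m) * (γ τ / (m.factorial : ℝ)) := by
    rw [← intervalIntegral.integral_mul_const]
    exact intervalIntegral.integral_congr fun s _ => by ring
  rw [e1, key_lemma T₀ T hT k₀ hkint c hc m τ t h1 h2 ht2]
  have hfac : ((m+1).factorial : ℝ) = ((m:ℝ)+1) * (m.factorial : ℝ) := by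
    rw [Nat.factorial_succ]; push_cast; ring
  rw [hfac]
  have h1' : ((m:ℝ)+1) ≠ 0 := by positivity
  have h2' : ((m.factorial : ℝ)) ≠ 0 := by positivity
  field_simp
end
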